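/- arXiv:1409.1685 — 2 statements merged into one kernel-verified Lean document; each statement's English description precedes it below -/
import Mathlib

section
/- Let 𝒜 be a partial Hopf algebra with a left invariant integral φ. Then S((id ⊗ φ)(Δ(b)(1 ⊗ a))) = (id ⊗ φ)((1 ⊗ b)Δ(a)) for all a,b ∈ A. Similarly, if φ is a right invariant integral on the partial Hopf algebra 𝒜, then S((φ ⊗ id)((a ⊗ 1)Δ(b))) = (φ ⊗ id)(Δ(a)(b ⊗ 1)) for all a,b ∈ A. -/
open scoped TensorProduct Classical ComplexOrder
open TensorProduct

noncomputable section

/-- The homogeneous component `A(k,l;m,n)` of a partial algebra, determined by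
the family of local units `E`: it consists of those `a` with `E k m * a = a = a * E l n`. -/
def gradeComp {I C : Type} [NonUnitalRing C] [Module ℂ C]
    [SMulCommClass ℂ C C] [IsScalarTower ℂ C C]
    (E : I → I → C) (k l m n : I) : Submodule ℂ C where
  carrier := {a | E k m * a = a ∧ a * E l n = a}
  add_mem' := fun ha hb => ⟨by rw [mul_add, ha.1, hb.1], by rw [add_mul, ha.2, hb.2]⟩
  zero_mem' := ⟨mul_zero _, zero_mul _⟩
  smul_mem' := fun c a ha => ⟨by rw [mul_smul_comm, ha.1], by rw [smul_mul_assoc, ha.2]⟩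

/-- An `I`-partial bialgebra, presented through its total algebra `C`:
a collection of subspaces `A(k,l;m,n)` (cut out by the local units `E k m = 1(k,m)`)
which decompose `C`, together with comultiplication maps `Δ r s`, and a counit `ε`,
subject to the axioms of a partial bialgebra. -/
structure PartialBialgebra (I C : Type) [NonUnitalRing C] [Module ℂ C]
    [SMulCommClass ℂ C C] [IsScalarTower ℂ C C] : Type 1 where
  /-- the local units `1(k,m)` -/
  E : I → I → C
  E_idem : ∀ k m, E k m * E k m = E k m
  E_orth : ∀ k l m n, (k, m) ≠ (l, n) → E k m * E l n = 0
  /-- the total algebra is the direct sum of its homogeneous components -/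
  grading : DirectSum.IsInternal fun x : I × I × I × I =>
    gradeComp E x.1 x.2.1 x.2.2.1 x.2.2.2
  /-- the comultiplication maps `Δ_{rs}` -/
  Δ : I → I → C →ₗ[ℂ] C ⊗[ℂ] C
  /-- the counit -/
  ε : C →ₗ[ℂ] ℂ
  Δ_mem : ∀ k l m n r s, ∀ a ∈ gradeComp E k l m n,
    Δ r s a ∈ LinearMap.range (TensorProduct.map (gradeComp E k l r s).subtype
      (gradeComp E r s m n).subtype)
  coassoc : ∀ r s t u (a : C),
    (TensorProduct.assoc ℂ C C C) ((LinearMap.rTensor C (Δ r s)) (Δ t u a))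
      = (LinearMap.lTensor C (Δ t u)) (Δ r s a)
  counit_l : ∀ k l m n, ∀ a ∈ gradeComp E k l m n,
    (TensorProduct.lid ℂ C) ((LinearMap.rTensor C ε) (Δ k l a)) = a
  counit_r : ∀ k l m n, ∀ a ∈ gradeComp E k l m n,
    (TensorProduct.rid ℂ C) ((LinearMap.lTensor C ε) (Δ m n a)) = a
  ε_supp : ∀ k l m n, (k, l) ≠ (m, n) → ∀ a ∈ gradeComp E k l m n, ε a = 0
  ε_mul : ∀ k l p m n q, ∀ a ∈ gradeComp E k l m n, ∀ b ∈ gradeComp E l p n q,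
    ε (a * b) = ε a * ε b
  ε_E : ∀ k, ε (E k k) = 1
  Δ_E_diag : ∀ k m l, Δ l l (E k m) = E k l ⊗ₜ[ℂ] E l m
  Δ_E_ne : ∀ k m l l', l ≠ l' → Δ l l' (E k m) = 0
  Δ_rcf_row : ∀ (a : C) (r : I), {s | Δ r s a ≠ 0}.Finite
  Δ_rcf_col : ∀ (a : C) (s : I), {r | Δ r s a ≠ 0}.Finite
  Δ_mul : ∀ r s (a b : C), Δ r s (a * b) = ∑ᶠ t, Δ r t a * Δ t s b

namespace PartialBialgebra

variable {I C : Type} [NonUnitalRing C] [Module ℂ C]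
  [SMulCommClass ℂ C C] [IsScalarTower ℂ C C] (B : PartialBialgebra I C)

/-- the homogeneous component `A(k,l;m,n)` of the partial bialgebra -/
def comp (k l m n : I) : Submodule ℂ C := gradeComp B.E k l m n

/-- `λ_p a`, the product of the multiplier `λ_p = Σ_l 1(p,l)` with `a` -/
def lamMul (p : I) (a : C) : C := ∑ᶠ l, B.E p l * a

/-- `a λ_p` -/
def mulLam (a : C) (p : I) : C := ∑ᶠ l, a * B.E p l

/-- `ρ_p a` -/
def rhoMul (p : I) (a : C) : C := ∑ᶠ k, B.E k p * a

/-- `a ρ_p` -/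
def mulRho (a : C) (p : I) : C := ∑ᶠ k, a * B.E k p

/-- `S` is an antipode for the partial bialgebra `B`: it maps each component
`A(k,l;m,n)` to `A(n,m;l,k)` and satisfies `a₍₁₎S(a₍₂₎) = Π^L(a)` and
`S(a₍₁₎)a₍₂₎ = Π^R(a)`, written out in components (cutting the multiplier
`Π^L(a) = Σ_p ε(λ_p a) λ_p` at the column `(r,r)`, resp. `Π^R(a) = Σ_p ε(a ρ_p) ρ_p`
at the row `(s,s)`). -/
def IsAntipode (S : C →ₗ[ℂ] C) : Prop :=
  (∀ k l m n, ∀ a ∈ B.comp k l m n, S a ∈ B.comp n m l k) ∧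
  (∀ (a : C) (r : I),
    ∑ᶠ s, (LinearMap.mul' ℂ C) ((LinearMap.lTensor C S) (B.Δ r s a))
      = ∑ᶠ p, B.ε (B.lamMul p a) • B.E p r) ∧
  (∀ (a : C) (s : I),
    ∑ᶠ r, (LinearMap.mul' ℂ C) ((LinearMap.rTensor C S) (B.Δ r s a))
      = ∑ᶠ p, B.ε (B.mulRho a p) • B.E s p)

/-- a partial Hopf algebra is a partial bialgebra admitting an antipode -/
def IsHopf : Prop := ∃ S : C →ₗ[ℂ] C, B.IsAntipode S

/-- a left invariant integral on a partial bialgebra -/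
def IsLeftIntegral (φ : C →ₗ[ℂ] ℂ) : Prop :=
  (∀ k l m n, ¬(k = l ∧ m = n) → ∀ a ∈ B.comp k l m n, φ a = 0) ∧
  (∀ k, φ (B.E k k) = 1) ∧
  (∀ k p m l, ∀ a ∈ B.comp k p m m,
    (TensorProduct.rid ℂ C) ((LinearMap.lTensor C φ) (B.Δ l l a))
      = if k = p then φ a • B.E k l else 0)

/-- a right invariant integral on a partial bialgebra -/
def IsRightIntegral (φ : C →ₗ[ℂ] ℂ) : Prop :=
  (∀ k l m n, ¬(k = l ∧ m = n) → ∀ a ∈ B.comp k l m n, φ a = 0) ∧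
  (∀ k, φ (B.E k k) = 1) ∧
  (∀ k m p l, ∀ a ∈ B.comp k k m p,
    (TensorProduct.lid ℂ C) ((LinearMap.rTensor C φ) (B.Δ l l a))
      = if m = p then φ a • B.E l m else 0)

/-- an invariant integral is a left and right invariant integral -/
def IsIntegral (φ : C →ₗ[ℂ] ℂ) : Prop := B.IsLeftIntegral φ ∧ B.IsRightIntegral φ

end PartialBialgebra

/-- the componentwise star operation on `C ⊗[ℂ] C`, `(a ⊗ b)* = a* ⊗ b*` -/
def starTmul {C : Type} [NonUnitalRing C] [Module ℂ C]
    [SMulCommClass ℂ C C] [IsScalarTower ℂ C C] [StarRing C] [StarModule ℂ C] :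
    C ⊗[ℂ] C →+ C ⊗[ℂ] C :=
  TensorProduct.liftAddHom
    { toFun := fun a => AddMonoidHom.mk' (fun b => star a ⊗ₜ[ℂ] star b)
        (fun b b' => by simp [star_add, TensorProduct.tmul_add])
      map_zero' := by ext b; simp
      map_add' := fun a a' => by ext b; simp [star_add, TensorProduct.add_tmul] }
    (fun c a b => by
      simp only [AddMonoidHom.mk'_apply, AddMonoidHom.coe_mk, ZeroHom.coe_mk, star_smul]
      rw [TensorProduct.smul_tmul])

namespace PartialBialgebra

variable {I C : Type} [NonUnitalRing C] [Module ℂ C]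
  [SMulCommClass ℂ C C] [IsScalarTower ℂ C C] (B : PartialBialgebra I C)

/-- the conditions making a partial bialgebra a partial *-bialgebra:
the total algebra carries an (antilinear, antimultiplicative) involution
(recorded by the `StarRing` and `StarModule` instances), the local units are
self-adjoint, and `Δ_{rs}(a)* = Δ_{sr}(a*)`. -/
def IsStarBialgebra [StarRing C] [StarModule ℂ C] : Prop :=
  (∀ k m, star (B.E k m) = B.E k m) ∧
  (∀ r s (a : C), B.Δ s r (star a) = starTmul (B.Δ r s a))

/-- the data of a partial compact quantum group: a partial Hopf `*`-algebra with a
positive invariant integral `φ`. -/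
def IsCQG [StarRing C] [StarModule ℂ C] (φ : C →ₗ[ℂ] ℂ) : Prop :=
  B.IsStarBialgebra ∧ B.IsHopf ∧ B.IsIntegral φ ∧ ∀ a : C, 0 ≤ φ (star a * a)

end PartialBialgebra

namespace StrongInvTools

open PartialBialgebra LinearMap

variable {I C : Type} [NonUnitalRing C] [Module ℂ C]
  [SMulCommClass ℂ C C] [IsScalarTower ℂ C C] (B : PartialBialgebra I C)

theorem mem_comp {x : C} {k l m n : I} :
    x ∈ B.comp k l m n ↔ B.E k m * x = x ∧ x * B.E l n = x := Iff.rfl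

theorem mul_mem_comp {x y : C} {k l m n k' l' m' n' : I}
    (hx : x ∈ B.comp k l m n) (hy : y ∈ B.comp k' l' m' n') :
    x * y ∈ B.comp k l' m n' := by
  refine ⟨?_, ?_⟩
  · rw [← mul_assoc, hx.1]
  · rw [mul_assoc, hy.2]

theorem mul_comp_eq_zero {x y : C} {k l m n k' l' m' n' : I}
    (hx : x ∈ B.comp k l m n) (hy : y ∈ B.comp k' l' m' n')
    (h : ((l : I), (n : I)) ≠ (k', m')) : x * y = 0 := by
  have hx2 := hx.2
  have hy1 := hy.1
  calc x * y = (x * B.E l n) * (B.E k' m' * y) := by rw [hx2, hy1]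
  _ = x * ((B.E l n * B.E k' m') * y) := by rw [mul_assoc, mul_assoc]
  _ = 0 := by rw [B.E_orth _ _ _ _ h, zero_mul, mul_zero]

theorem homog_induction {p : C → Prop} (h0 : p 0)
    (hadd : ∀ x y : C, p x → p y → p (x + y))
    (helem : ∀ (k l m n : I), ∀ x ∈ B.comp k l m n, p x) (c : C) : p c := by
  have hc : c ∈ (⊤ : Submodule ℂ C) := trivial
  rw [← B.grading.submodule_iSup_eq_top] at hc
  exact Submodule.iSup_induction (motive := p) _ hc
    (fun i x hx => helem i.1 i.2.1 i.2.2.1 i.2.2.2 x hx) h0 hadd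

/-- two linear maps out of `C ⊗ C` agree on an element of the range of
`map M.subtype N.subtype` as soon as they agree on products of elements of the
submodules. -/
theorem eq_on_range {M N : Submodule ℂ C} {P : Type*} [AddCommMonoid P] [Module ℂ P]
    {f g : C ⊗[ℂ] C →ₗ[ℂ] P}
    (h : ∀ x ∈ M, ∀ y ∈ N, f (x ⊗ₜ[ℂ] y) = g (x ⊗ₜ[ℂ] y)) {u : C ⊗[ℂ] C}
    (hu : u ∈ LinearMap.range (TensorProduct.map M.subtype N.subtype)) : f u = g u := by
  obtain ⟨z, rfl⟩ := hu
  induction z using TensorProduct.induction_on with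
  | zero => simp
  | tmul x y => simpa using h x x.2 y y.2
  | add z w hz hw => simp only [map_add, hz, hw]

end StrongInvTools
namespace StrongInvTools

variable {I C : Type} [NonUnitalRing C] [Module ℂ C]
  [SMulCommClass ℂ C C] [IsScalarTower ℂ C C] (B : PartialBialgebra I C)

theorem mul_eq_zero_mismatch {x y : C} {l n k m : I} (hx : x * B.E l n = x)
    (hy : B.E k m * y = y) (h : ((l : I), (n : I)) ≠ (k, m)) : x * y = 0 := by
  calc x * y = (x * B.E l n) * (B.E k m * y) := by rw [hx, hy]
  _ = x * ((B.E l n * B.E k m) * y) := by rw [mul_assoc, mul_assoc]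
  _ = 0 := by rw [B.E_orth _ _ _ _ h, zero_mul, mul_zero]

theorem lTensor_zero_of_vanish {M N : Submodule ℂ C} {ψ : C →ₗ[ℂ] ℂ}
    (hψ : ∀ y ∈ N, ψ y = 0) {u : C ⊗[ℂ] C}
    (hu : u ∈ LinearMap.range (TensorProduct.map M.subtype N.subtype)) :
    LinearMap.lTensor C ψ u = 0 := by
  have := eq_on_range (f := LinearMap.lTensor C ψ) (g := 0)
    (fun x hx y hy => by simp [hψ y hy]) hu
  simpa using this

theorem rTensor_zero_of_vanish {M N : Submodule ℂ C} {ψ : C →ₗ[ℂ] ℂ}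
    (hψ : ∀ x ∈ M, ψ x = 0) {u : C ⊗[ℂ] C}
    (hu : u ∈ LinearMap.range (TensorProduct.map M.subtype N.subtype)) :
    LinearMap.rTensor C ψ u = 0 := by
  have := eq_on_range (f := LinearMap.rTensor C ψ) (g := 0)
    (fun x hx y hy => by simp [hψ x hx]) hu
  simpa using this

/-- `(id ⊗ ψ)(Δ_{rs}(·))` as a linear map. -/
noncomputable def idφ (ψ : C →ₗ[ℂ] ℂ) (r s : I) : C →ₗ[ℂ] C :=
  (TensorProduct.rid ℂ C).toLinearMap ∘ₗ LinearMap.lTensor C ψ ∘ₗ B.Δ r s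

/-- `(ψ ⊗ id)(Δ_{rs}(·))` as a linear map. -/
noncomputable def φid (ψ : C →ₗ[ℂ] ℂ) (r s : I) : C →ₗ[ℂ] C :=
  (TensorProduct.lid ℂ C).toLinearMap ∘ₗ LinearMap.rTensor C ψ ∘ₗ B.Δ r s

theorem idφ_apply (ψ : C →ₗ[ℂ] ℂ) (r s : I) (b : C) :
    idφ B ψ r s b = (TensorProduct.rid ℂ C) ((LinearMap.lTensor C ψ) (B.Δ r s b)) := rfl

theorem φid_apply (ψ : C →ₗ[ℂ] ℂ) (r s : I) (b : C) :
    φid B ψ r s b = (TensorProduct.lid ℂ C) ((LinearMap.rTensor C ψ) (B.Δ r s b)) := rfl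

variable (φ : C →ₗ[ℂ] ℂ)

/-- vanishing of `(id ⊗ φ(·a))(Δ_{rs} b)` for `s ≠ k`, where `1(k,m)a = a`. -/
theorem idφ_mulRight_vanish {a : C} {k m : I} (hma : B.E k m * a = a) (b : C)
    (r s : I) (hs : s ≠ k) : idφ B (φ ∘ₗ LinearMap.mulRight ℂ a) r s b = 0 := by
  induction b using homog_induction B with
  | h0 => simp
  | hadd x y hx hy => rw [map_add, hx, hy, add_zero]
  | helem K L M N x hx =>
    have hkill : LinearMap.lTensor C (φ ∘ₗ LinearMap.mulRight ℂ a) (B.Δ r s x) = 0 := by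
      refine lTensor_zero_of_vanish ?_ (B.Δ_mem K L M N r s x hx)
      intro y hy
      have : y * a = 0 := mul_eq_zero_mismatch B hy.2 hma (by simp [Prod.ext_iff, hs])
      simp [this]
    rw [idφ_apply, hkill, map_zero]

/-- vanishing of `(id ⊗ φ(b·))(Δ_{rs} a)` for `r ≠ l'`, where `b 1(l',n') = b`. -/
theorem idφ_mulLeft_vanish {b : C} {l' n' : I} (hb : b * B.E l' n' = b) (a : C)
    (r s : I) (hr : r ≠ l') : idφ B (φ ∘ₗ LinearMap.mulLeft ℂ b) r s a = 0 := by
  induction a using homog_induction B with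
  | h0 => simp
  | hadd x y hx hy => rw [map_add, hx, hy, add_zero]
  | helem K L M N x hx =>
    have hkill : LinearMap.lTensor C (φ ∘ₗ LinearMap.mulLeft ℂ b) (B.Δ r s x) = 0 := by
      refine lTensor_zero_of_vanish ?_ (B.Δ_mem K L M N r s x hx)
      intro y hy
      have : b * y = 0 := mul_eq_zero_mismatch B hb hy.1 (by simp [Prod.ext_iff]; tauto)
      simp [this]
    rw [idφ_apply, hkill, map_zero]

/-- vanishing of `(φ(a·) ⊗ id)(Δ_{rs} b)` for `r ≠ n`, where `a 1(l,n) = a`. -/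
theorem φid_mulLeft_vanish {a : C} {l n : I} (han : a * B.E l n = a) (b : C)
    (r s : I) (hr : r ≠ n) : φid B (φ ∘ₗ LinearMap.mulLeft ℂ a) r s b = 0 := by
  induction b using homog_induction B with
  | h0 => simp
  | hadd x y hx hy => rw [map_add, hx, hy, add_zero]
  | helem K L M N x hx =>
    have hkill : LinearMap.rTensor C (φ ∘ₗ LinearMap.mulLeft ℂ a) (B.Δ r s x) = 0 := by
      refine rTensor_zero_of_vanish ?_ (B.Δ_mem K L M N r s x hx)
      intro y hy
      have : a * y = 0 := mul_eq_zero_mismatch B han hy.1 (by simp [Prod.ext_iff]; tauto)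
      simp [this]
    rw [φid_apply, hkill, map_zero]

/-- vanishing of `(φ(·b) ⊗ id)(Δ_{rs} a)` for `s ≠ m'`, where `1(k',m') b = b`. -/
theorem φid_mulRight_vanish {b : C} {k' m' : I} (hb : B.E k' m' * b = b) (a : C)
    (r s : I) (hs : s ≠ m') : φid B (φ ∘ₗ LinearMap.mulRight ℂ b) r s a = 0 := by
  induction a using homog_induction B with
  | h0 => simp
  | hadd x y hx hy => rw [map_add, hx, hy, add_zero]
  | helem K L M N x hx =>
    have hkill : LinearMap.rTensor C (φ ∘ₗ LinearMap.mulRight ℂ b) (B.Δ r s x) = 0 := by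
      refine rTensor_zero_of_vanish ?_ (B.Δ_mem K L M N r s x hx)
      intro y hy
      have : y * b = 0 := mul_eq_zero_mismatch B hy.2 hb (by simp [Prod.ext_iff]; tauto)
      simp [this]
    rw [φid_apply, hkill, map_zero]

end StrongInvTools
namespace StrongInvTools

variable {I C : Type} [NonUnitalRing C] [Module ℂ C]
  [SMulCommClass ℂ C C] [IsScalarTower ℂ C C] (B : PartialBialgebra I C)
  (φ : C →ₗ[ℂ] ℂ) (S : C →ₗ[ℂ] C)

/-- uniform version of left invariance, valid for any homogeneous element. -/
theorem left_inv_uniform (hφ : B.IsLeftIntegral φ) {r l m' n : I} {c : C}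
    (hc : c ∈ B.comp r l m' n) (u : I) :
    (TensorProduct.rid ℂ C) ((LinearMap.lTensor C φ) (B.Δ u u c)) = φ c • B.E r u := by
  by_cases hmn : m' = n
  · subst hmn
    rw [hφ.2.2 r l m' u c hc]
    by_cases hrl : r = l
    · rw [if_pos hrl]
    · rw [if_neg hrl, hφ.1 r l m' m' (fun h => hrl h.1) c hc, zero_smul]
  · have h1 : φ c = 0 := hφ.1 r l m' n (fun h => hmn h.2) c hc
    have h2 : LinearMap.lTensor C φ (B.Δ u u c) = 0 :=
      lTensor_zero_of_vanish (fun y hy => hφ.1 u u m' n (fun h => hmn h.2) y hy)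
        (B.Δ_mem r l m' n u u c hc)
    rw [h1, h2, map_zero, zero_smul]

/-- uniform version of right invariance, valid for any homogeneous element. -/
theorem right_inv_uniform (hφ : B.IsRightIntegral φ) {k l' m s : I} {c : C}
    (hc : c ∈ B.comp k l' m s) (u : I) :
    (TensorProduct.lid ℂ C) ((LinearMap.rTensor C φ) (B.Δ u u c)) = φ c • B.E u m := by
  by_cases hkl : k = l'
  · subst hkl
    rw [hφ.2.2 k m s u c hc]
    by_cases hms : m = s
    · rw [if_pos hms]
    · rw [if_neg hms, hφ.1 k k m s (fun h => hms h.2) c hc, zero_smul]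
  · have h1 : φ c = 0 := hφ.1 k l' m s (fun h => hkl h.1) c hc
    have h2 : LinearMap.rTensor C φ (B.Δ u u c) = 0 :=
      rTensor_zero_of_vanish (fun y hy => hφ.1 k l' u u (fun h => hkl h.1) y hy)
        (B.Δ_mem k l' m s u u c hc)
    rw [h1, h2, map_zero, zero_smul]

theorem mulRho_homog {l' t : I} {x : C} (hx : x * B.E l' t = x) (p : I) :
    B.mulRho x p = if p = t then x else 0 := by
  unfold PartialBialgebra.mulRho
  have key : ∀ K : I, x * B.E K p = if (K, p) = (l', t) then x else 0 := by
    intro K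
    by_cases hK : (K, p) = (l', t)
    · simp only [Prod.mk.injEq] at hK
      rw [if_pos (by simp [hK.1, hK.2] : ((K : I), (p : I)) = (l', t)), hK.1, hK.2]
      exact hx
    · rw [if_neg hK]
      calc x * B.E K p = (x * B.E l' t) * B.E K p := by rw [hx]
      _ = x * (B.E l' t * B.E K p) := mul_assoc _ _ _
      _ = 0 := by rw [B.E_orth _ _ _ _ (fun h => hK (by simp_all [Prod.ext_iff])), mul_zero]
  by_cases hp : p = t
  · subst hp
    rw [if_pos rfl]
    rw [finsum_eq_single _ l' (fun K hK => by rw [key K, if_neg (by simp [hK])]),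
      key l', if_pos rfl]
  · rw [if_neg hp]
    exact finsum_eq_zero_of_forall_eq_zero
      (fun K => by rw [key K, if_neg (by simp [Prod.ext_iff, hp])])

theorem lamMul_homog {t m' : I} {x : C} (hx : B.E t m' * x = x) (p : I) :
    B.lamMul p x = if p = t then x else 0 := by
  unfold PartialBialgebra.lamMul
  have key : ∀ L : I, B.E p L * x = if (p, L) = (t, m') then x else 0 := by
    intro L
    by_cases hL : (p, L) = (t, m')
    · simp only [Prod.mk.injEq] at hL
      rw [if_pos (by simp [hL.1, hL.2] : ((p : I), (L : I)) = (t, m')), hL.1, hL.2]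
      exact hx
    · rw [if_neg hL]
      calc B.E p L * x = B.E p L * (B.E t m' * x) := by rw [hx]
      _ = (B.E p L * B.E t m') * x := (mul_assoc _ _ _).symm
      _ = 0 := by rw [B.E_orth _ _ _ _ (fun h => hL (by simp_all [Prod.ext_iff])), zero_mul]
  by_cases hp : p = t
  · subst hp
    rw [if_pos rfl]
    rw [finsum_eq_single _ m' (fun L hL => by rw [key L, if_neg (by simp [Prod.ext_iff, hL])]),
      key m', if_pos rfl]
  · rw [if_neg hp]
    exact finsum_eq_zero_of_forall_eq_zero
      (fun L => by rw [key L, if_neg (by simp [Prod.ext_iff, hp])])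

/-- collapse of `Σᶠ r, m((S ⊗ id)(Δ_{rk} x))` for homogeneous `x`. -/
theorem antipode_rTensor_collapse (hS : B.IsAntipode S) {k' l' t : I} {x : C}
    (hx : x ∈ B.comp k' l' k' t) (k : I) :
    ∑ᶠ r, LinearMap.mul' ℂ C ((LinearMap.rTensor C S) (B.Δ r k x)) = B.ε x • B.E k t := by
  rw [hS.2.2 x k]
  rw [finsum_eq_single _ t (fun p hp => by
    rw [mulRho_homog B hx.2 p, if_neg hp, map_zero, zero_smul])]
  rw [mulRho_homog B hx.2 t, if_pos rfl]

/-- collapse of `Σᶠ s, m((id ⊗ S)(Δ_{ns} x))` for homogeneous `x`. -/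
theorem antipode_lTensor_collapse (hS : B.IsAntipode S) {t m' n' n'' : I} {x : C}
    (hx : x ∈ B.comp t n' m' n'') (n : I) :
    ∑ᶠ s, LinearMap.mul' ℂ C ((LinearMap.lTensor C S) (B.Δ n s x)) = B.ε x • B.E t n := by
  rw [hS.2.1 x n]
  rw [finsum_eq_single _ t (fun p hp => by
    rw [lamMul_homog B hx.1 p, if_neg hp, map_zero, zero_smul])]
  rw [lamMul_homog B hx.1 t, if_pos rfl]

end StrongInvTools
namespace StrongInvTools

open TensorProduct LinearMap

variable {I C : Type} [NonUnitalRing C] [Module ℂ C]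
  [SMulCommClass ℂ C C] [IsScalarTower ℂ C C] (B : PartialBialgebra I C)
  (φ : C →ₗ[ℂ] ℂ) (S : C →ₗ[ℂ] C)

/-- `w ↦ (id ⊗ φ)(w · v)` -/
noncomputable def Wmap (v : C ⊗[ℂ] C) : C ⊗[ℂ] C →ₗ[ℂ] C :=
  (TensorProduct.rid ℂ C).toLinearMap ∘ₗ LinearMap.lTensor C φ ∘ₗ LinearMap.mulRight ℂ v

theorem Wmap_apply (v w : C ⊗[ℂ] C) :
    Wmap φ v w = (TensorProduct.rid ℂ C) ((LinearMap.lTensor C φ) (w * v)) := rfl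

theorem Wmap_add (v₁ v₂ w : C ⊗[ℂ] C) :
    Wmap φ (v₁ + v₂) w = Wmap φ v₁ w + Wmap φ v₂ w := by
  simp [Wmap_apply, mul_add]

theorem Wmap_tmul (a₁ a₂ y c : C) :
    Wmap φ (a₁ ⊗ₜ[ℂ] a₂) (y ⊗ₜ[ℂ] c) = φ (c * a₂) • (y * a₁) := by
  simp [Wmap, Algebra.TensorProduct.tmul_mul_tmul]

/-- `x ⊗ w ↦ S(x) · (id ⊗ φ)(w · v)` -/
noncomputable def Nmap (v : C ⊗[ℂ] C) : C ⊗[ℂ] (C ⊗[ℂ] C) →ₗ[ℂ] C :=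
  TensorProduct.lift (((LinearMap.mul ℂ C).comp S).compl₂ (Wmap φ v))

theorem Nmap_tmul (v : C ⊗[ℂ] C) (x : C) (w : C ⊗[ℂ] C) :
    Nmap φ S v (x ⊗ₜ[ℂ] w) = S x * Wmap φ v w := by
  simp [Nmap]

/-- `(x, c) ↦ (id ⊗ φ)((x ⊗ c) · v)` -/
noncomputable def Θmap (v : C ⊗[ℂ] C) : C →ₗ[ℂ] C →ₗ[ℂ] C :=
  (TensorProduct.mk ℂ C C).compr₂ (Wmap φ v)

theorem Θmap_apply (v : C ⊗[ℂ] C) (x c : C) :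
    Θmap φ v x c = Wmap φ v (x ⊗ₜ[ℂ] c) := rfl

/-- `c₁ ⊗ c₂ ↦ Θ(m((S ⊗ id)(Δ_{rk}(c₁))), c₂)` -/
noncomputable def Fmap (v : C ⊗[ℂ] C) (r k : I) : C ⊗[ℂ] C →ₗ[ℂ] C :=
  TensorProduct.lift ((Θmap φ v).comp
    (LinearMap.mul' ℂ C ∘ₗ LinearMap.rTensor C S ∘ₗ B.Δ r k))

theorem Fmap_tmul (v : C ⊗[ℂ] C) (r k : I) (c₁ c₂ : C) :
    Fmap B φ S v r k (c₁ ⊗ₜ[ℂ] c₂)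
      = Θmap φ v (LinearMap.mul' ℂ C (LinearMap.rTensor C S (B.Δ r k c₁))) c₂ := by
  simp [Fmap]

theorem G1 (v Y : C ⊗[ℂ] C) (c : C) :
    Nmap φ S v ((TensorProduct.assoc ℂ C C C) (Y ⊗ₜ[ℂ] c))
      = Θmap φ v (LinearMap.mul' ℂ C (LinearMap.rTensor C S Y)) c := by
  induction Y using TensorProduct.induction_on with
  | zero => simp [Θmap_apply]
  | add Y₁ Y₂ h1 h2 =>
    simp only [add_tmul, map_add, LinearMap.add_apply, h1, h2]
  | tmul y₁ y₂ =>
    rw [assoc_tmul, Nmap_tmul, rTensor_tmul, LinearMap.mul'_apply, Θmap_apply]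
    induction v using TensorProduct.induction_on with
    | zero => simp [Wmap]
    | add v₁ v₂ h1 h2 => rw [Wmap_add, Wmap_add, mul_add, h1, h2]
    | tmul a₁ a₂ =>
      rw [Wmap_tmul, Wmap_tmul, mul_smul_comm, mul_assoc]

theorem Nmap_assoc_rTensor (v : C ⊗[ℂ] C) (r k : I) (w : C ⊗[ℂ] C) :
    Nmap φ S v ((TensorProduct.assoc ℂ C C C) ((LinearMap.rTensor C (B.Δ r k)) w))
      = Fmap B φ S v r k w := by
  induction w using TensorProduct.induction_on with
  | zero => simp
  | add w₁ w₂ h1 h2 => simp only [map_add, h1, h2]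
  | tmul c₁ c₂ => rw [rTensor_tmul, G1, Fmap_tmul]

theorem Fmap_r_support_finite (v : C ⊗[ℂ] C) (k : I) (u : C ⊗[ℂ] C) :
    {r | Fmap B φ S v r k u ≠ 0}.Finite := by
  induction u using TensorProduct.induction_on with
  | zero => exact Set.Finite.subset (Set.finite_empty) (fun r hr => by simp at hr)
  | add u₁ u₂ h1 h2 =>
    refine Set.Finite.subset (h1.union h2) (fun r hr => ?_)
    simp only [Set.mem_setOf_eq, map_add] at hr
    by_contra hc
    simp only [Set.mem_union, Set.mem_setOf_eq, not_or, not_not] at hc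
    exact hr (by rw [hc.1, hc.2, add_zero])
  | tmul c₁ c₂ =>
    refine Set.Finite.subset (B.Δ_rcf_col c₁ k) (fun r hr => ?_)
    simp only [Set.mem_setOf_eq] at hr ⊢
    intro h0
    exact hr (by rw [Fmap_tmul, h0, map_zero, map_zero, map_zero, LinearMap.zero_apply])

theorem Nmap_t_support_finite (a : C) (k' : I) (u : C ⊗[ℂ] C) :
    {t | Nmap φ S (B.Δ t k' a) (LinearMap.lTensor C (B.Δ k' t) u) ≠ 0}.Finite := by
  induction u using TensorProduct.induction_on with
  | zero => exact Set.Finite.subset (Set.finite_empty) (fun t ht => by simp at ht)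
  | add u₁ u₂ h1 h2 =>
    refine Set.Finite.subset (h1.union h2) (fun t ht => ?_)
    simp only [Set.mem_setOf_eq, map_add] at ht
    by_contra hc
    simp only [Set.mem_union, Set.mem_setOf_eq, not_or, not_not] at hc
    exact ht (by rw [hc.1, hc.2, add_zero])
  | tmul x y =>
    refine Set.Finite.subset (B.Δ_rcf_row y k') (fun t ht => ?_)
    simp only [Set.mem_setOf_eq] at ht ⊢
    intro h0
    exact ht (by rw [lTensor_tmul, h0, tmul_zero, map_zero])

end StrongInvTools
namespace StrongInvTools

open TensorProduct LinearMap

variable {I C : Type} [NonUnitalRing C] [Module ℂ C]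
  [SMulCommClass ℂ C C] [IsScalarTower ℂ C C] (B : PartialBialgebra I C)
  (φ : C →ₗ[ℂ] ℂ) (S : C →ₗ[ℂ] C)

/-- linear maps commute with finsums of finitely supported families -/
theorem linmap_finsum {α : Type*} {M N : Type*} [AddCommMonoid M] [AddCommMonoid N]
    [Module ℂ M] [Module ℂ N] (L : M →ₗ[ℂ] N) {f : α → M}
    (h : (Function.support f).Finite) : L (∑ᶠ i, f i) = ∑ᶠ i, L (f i) := by
  have := AddMonoidHom.map_finsum L.toAddMonoidHom h
  simpa using this

theorem mulLeft_finsum {α : Type*} (c : C) {f : α → C}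
    (h : (Function.support f).Finite) : c * (∑ᶠ i, f i) = ∑ᶠ i, c * f i := by
  have := AddMonoidHom.map_finsum (AddMonoidHom.mulLeft c) h
  simpa using this

theorem mulRight_finsum {α : Type*} (c : C) {f : α → C}
    (h : (Function.support f).Finite) : (∑ᶠ i, f i) * c = ∑ᶠ i, f i * c := by
  have := AddMonoidHom.map_finsum (AddMonoidHom.mulRight c) h
  simpa using this

theorem core_h2 (hφ : B.IsLeftIntegral φ) (hS : B.IsAntipode S)
    {k l m n k' l' m' n' : I} {a b : C} (ha : a ∈ B.comp k l m n)
    (hb : b ∈ B.comp k' l' m' n') (r : I) :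
    S (idφ B (φ ∘ₗ LinearMap.mulRight ℂ a) r k b)
      = LinearMap.mul' ℂ C (TensorProduct.map S
          (idφ B φ k' k' ∘ₗ LinearMap.mulRight ℂ a) (B.Δ r k b)) := by
  have key := eq_on_range
    (f := S ∘ₗ ((TensorProduct.rid ℂ C).toLinearMap ∘ₗ
      LinearMap.lTensor C (φ ∘ₗ LinearMap.mulRight ℂ a)))
    (g := LinearMap.mul' ℂ C ∘ₗ TensorProduct.map S
      (idφ B φ k' k' ∘ₗ LinearMap.mulRight ℂ a))
    (fun x hx y hy => ?_) (B.Δ_mem k' l' m' n' r k b hb)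
  · simpa [idφ_apply] using key
  · have hya : y * a ∈ B.comp r l m' n := mul_mem_comp B hy ha
    have hQ : idφ B φ k' k' (y * a) = φ (y * a) • B.E r k' := left_inv_uniform B φ hφ hya k'
    simp only [LinearMap.comp_apply, lTensor_tmul, LinearEquiv.coe_coe, rid_tmul, map_smul,
      TensorProduct.map_tmul, LinearMap.mul'_apply, LinearMap.mulRight_apply]
    rw [hQ, mul_smul_comm, (hS.1 k' l' r k x hx).2]

theorem core_h3 (a : C) (k' : I) (u : C ⊗[ℂ] C) :
    LinearMap.mul' ℂ C (TensorProduct.map S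
        (idφ B φ k' k' ∘ₗ LinearMap.mulRight ℂ a) u)
      = ∑ᶠ t, Nmap φ S (B.Δ t k' a) (LinearMap.lTensor C (B.Δ k' t) u) := by
  induction u using TensorProduct.induction_on with
  | zero => simp
  | add u₁ u₂ h1 h2 =>
    simp only [map_add]
    rw [h1, h2, ← finsum_add_distrib (Nmap_t_support_finite B φ S a k' u₁)
      (Nmap_t_support_finite B φ S a k' u₂)]
  | tmul x y =>
    rw [TensorProduct.map_tmul, LinearMap.mul'_apply]
    have hsupp1 : (Function.support fun t => B.Δ k' t y * B.Δ t k' a).Finite :=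
      Set.Finite.subset (B.Δ_rcf_row y k') (fun t ht h0 => ht (by simp [h0]))
    have hQ : (idφ B φ k' k' ∘ₗ LinearMap.mulRight ℂ a) y
        = ∑ᶠ t, Wmap φ (B.Δ t k' a) (B.Δ k' t y) := by
      show (TensorProduct.rid ℂ C) ((LinearMap.lTensor C φ) (B.Δ k' k' (y * a)))
        = ∑ᶠ t, Wmap φ (B.Δ t k' a) (B.Δ k' t y)
      rw [B.Δ_mul k' k' y a]
      have hmf := linmap_finsum ((TensorProduct.rid ℂ C).toLinearMap ∘ₗ
        LinearMap.lTensor C φ) hsupp1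
      simp only [LinearMap.comp_apply, LinearEquiv.coe_coe] at hmf
      rw [hmf]
      exact finsum_congr fun t => rfl
    have hsupp2 : (Function.support fun t => Wmap φ (B.Δ t k' a) (B.Δ k' t y)).Finite :=
      Set.Finite.subset (B.Δ_rcf_row y k') (fun t ht h0 => ht (by simp [h0]))
    rw [hQ, mulLeft_finsum (S x) hsupp2]
    exact finsum_congr fun t => by
      rw [lTensor_tmul, Nmap_tmul]

theorem core_h7 (hS : B.IsAntipode S) {k' l' m' n' : I} {b : C}
    (hb : b ∈ B.comp k' l' m' n') (v : C ⊗[ℂ] C) (k t : I) :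
    ∑ᶠ r, Fmap B φ S v r k (B.Δ k' t b)
      = Θmap φ v (B.E k t)
          ((TensorProduct.lid ℂ C) ((LinearMap.rTensor C B.ε) (B.Δ k' t b))) := by
  obtain ⟨z, hz⟩ := B.Δ_mem k' l' m' n' k' t b hb
  rw [← hz]
  clear hz
  induction z using TensorProduct.induction_on with
  | zero => simp
  | add z₁ z₂ h1 h2 =>
    simp only [map_add]
    rw [finsum_add_distrib (Fmap_r_support_finite B φ S v k _)
      (Fmap_r_support_finite B φ S v k _), h1, h2, ← map_add]
  | tmul x y =>
    rw [TensorProduct.map_tmul]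
    have hfin : (Function.support fun r =>
        LinearMap.mul' ℂ C ((LinearMap.rTensor C S) (B.Δ r k (x : C)))).Finite :=
      Set.Finite.subset (B.Δ_rcf_col (x : C) k)
        (fun r hr h0 => hr (by simp [h0]))
    have hcol := antipode_rTensor_collapse B S hS x.2 k
    calc ∑ᶠ r, Fmap B φ S v r k ((x : C) ⊗ₜ[ℂ] (y : C))
        = ∑ᶠ r, ((Θmap φ v).flip (y : C))
            (LinearMap.mul' ℂ C ((LinearMap.rTensor C S) (B.Δ r k (x : C)))) :=
          finsum_congr fun r => by rw [Fmap_tmul]; rfl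
      _ = ((Θmap φ v).flip (y : C))
            (∑ᶠ r, LinearMap.mul' ℂ C ((LinearMap.rTensor C S) (B.Δ r k (x : C)))) :=
          (linmap_finsum ((Θmap φ v).flip (y : C)) hfin).symm
      _ = ((Θmap φ v).flip (y : C)) (B.ε (x : C) • B.E k t) := by rw [hcol]
      _ = B.ε (x : C) • Θmap φ v (B.E k t) (y : C) := by rw [map_smul]; rfl
      _ = Θmap φ v (B.E k t)
            ((TensorProduct.lid ℂ C) ((LinearMap.rTensor C B.ε) ((x : C) ⊗ₜ[ℂ] (y : C)))) := by
          rw [rTensor_tmul, lid_tmul, map_smul]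

theorem core_h10 {k l m n k' l' : I} {a : C} (b : C) (ha : a ∈ B.comp k l m n) :
    Θmap φ (B.Δ l' k' a) (B.E k l') b = idφ B (φ ∘ₗ LinearMap.mulLeft ℂ b) l' k' a := by
  have key := eq_on_range
    (f := (TensorProduct.rid ℂ C).toLinearMap ∘ₗ LinearMap.lTensor C φ ∘ₗ
      LinearMap.mulLeft ℂ ((B.E k l') ⊗ₜ[ℂ] b))
    (g := (TensorProduct.rid ℂ C).toLinearMap ∘ₗ
      LinearMap.lTensor C (φ ∘ₗ LinearMap.mulLeft ℂ b))
    (fun a₁ h₁ a₂ h₂ => ?_) (B.Δ_mem k l m n l' k' a ha)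
  · simpa [Θmap_apply, Wmap_apply, idφ_apply] using key
  · simp only [LinearMap.comp_apply, LinearMap.mulLeft_apply, lTensor_tmul,
      LinearEquiv.coe_coe, Algebra.TensorProduct.tmul_mul_tmul, h₁.1]

end StrongInvTools
namespace StrongInvTools

open TensorProduct LinearMap

variable {I C : Type} [NonUnitalRing C] [Module ℂ C]
  [SMulCommClass ℂ C C] [IsScalarTower ℂ C C] (B : PartialBialgebra I C)
  (φ : C →ₗ[ℂ] ℂ) (S : C →ₗ[ℂ] C)

theorem idφ_mulLeft_vanish₂ (hφ : B.IsLeftIntegral φ) {b : C} {k' l' m' n' : I}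
    (hb : b ∈ B.comp k' l' m' n') (a : C) (r s : I) (hs : s ≠ k') :
    idφ B (φ ∘ₗ LinearMap.mulLeft ℂ b) r s a = 0 := by
  induction a using homog_induction B with
  | h0 => simp
  | hadd x y hx hy => rw [map_add, hx, hy, add_zero]
  | helem K L M N x hx =>
    have hkill : LinearMap.lTensor C (φ ∘ₗ LinearMap.mulLeft ℂ b) (B.Δ r s x) = 0 := by
      refine lTensor_zero_of_vanish ?_ (B.Δ_mem K L M N r s x hx)
      intro y hy
      have hby : b * y ∈ B.comp k' s m' N := mul_mem_comp B hb hy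
      simpa using hφ.1 k' s m' N (fun h => hs h.1.symm) (b * y) hby
    rw [idφ_apply, hkill, map_zero]

theorem φid_mulRight_vanish₂ (hφ : B.IsRightIntegral φ) {b : C} {k' l' m' n' : I}
    (hb : b ∈ B.comp k' l' m' n') (a : C) (r s : I) (hr : r ≠ n') :
    φid B (φ ∘ₗ LinearMap.mulRight ℂ b) r s a = 0 := by
  induction a using homog_induction B with
  | h0 => simp
  | hadd x y hx hy => rw [map_add, hx, hy, add_zero]
  | helem K L M N x hx =>
    have hkill : LinearMap.rTensor C (φ ∘ₗ LinearMap.mulRight ℂ b) (B.Δ r s x) = 0 := by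
      refine rTensor_zero_of_vanish ?_ (B.Δ_mem K L M N r s x hx)
      intro y hy
      have hyb : y * b ∈ B.comp K l' r n' := mul_mem_comp B hy hb
      simpa using hφ.1 K l' r n' (fun h => hr h.2) (y * b) hyb
    rw [φid_apply, hkill, map_zero]

theorem idφ_psi_add (ψ₁ ψ₂ : C →ₗ[ℂ] ℂ) (r s : I) (a : C) :
    idφ B (ψ₁ + ψ₂) r s a = idφ B ψ₁ r s a + idφ B ψ₂ r s a := by
  simp [idφ_apply, LinearMap.lTensor_add]

theorem φid_psi_add (ψ₁ ψ₂ : C →ₗ[ℂ] ℂ) (r s : I) (a : C) :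
    φid B (ψ₁ + ψ₂) r s a = φid B ψ₁ r s a + φid B ψ₂ r s a := by
  simp [φid_apply, LinearMap.rTensor_add]

theorem comp_mulLeft_add (b₁ b₂ : C) :
    φ ∘ₗ LinearMap.mulLeft ℂ (b₁ + b₂) = φ ∘ₗ LinearMap.mulLeft ℂ b₁ + φ ∘ₗ LinearMap.mulLeft ℂ b₂ := by
  ext c; simp [add_mul]

theorem comp_mulRight_add (b₁ b₂ : C) :
    φ ∘ₗ LinearMap.mulRight ℂ (b₁ + b₂) = φ ∘ₗ LinearMap.mulRight ℂ b₁ + φ ∘ₗ LinearMap.mulRight ℂ b₂ := by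
  ext c; simp [mul_add]

theorem idφ_row_finite (ψ : C →ₗ[ℂ] ℂ) (r : I) (a : C) :
    (Function.support fun s => idφ B ψ r s a).Finite :=
  Set.Finite.subset (B.Δ_rcf_row a r) (fun s hs h0 => hs (by simp [idφ_apply, h0]))

theorem φid_row_finite (ψ : C →ₗ[ℂ] ℂ) (r : I) (a : C) :
    (Function.support fun s => φid B ψ r s a).Finite :=
  Set.Finite.subset (B.Δ_rcf_row a r) (fun s hs h0 => hs (by simp [φid_apply, h0]))

theorem idφ_col_finite (ψ : C →ₗ[ℂ] ℂ) (s : I) (a : C) :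
    (Function.support fun r => idφ B ψ r s a).Finite :=
  Set.Finite.subset (B.Δ_rcf_col a s) (fun r hr h0 => hr (by simp [idφ_apply, h0]))

theorem φid_col_finite (ψ : C →ₗ[ℂ] ℂ) (s : I) (a : C) :
    (Function.support fun r => φid B ψ r s a).Finite :=
  Set.Finite.subset (B.Δ_rcf_col a s) (fun r hr h0 => hr (by simp [φid_apply, h0]))

/-- outer support finiteness for the right-hand side of the left statement -/
theorem FIN_R (b : C) : ∀ a : C,
    {r | (∑ᶠ s, idφ B (φ ∘ₗ LinearMap.mulLeft ℂ b) r s a) ≠ 0}.Finite := by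
  induction b using homog_induction B with
  | h0 =>
    intro a
    refine Set.Finite.subset Set.finite_empty (fun r hr => ?_)
    simp only [Set.mem_setOf_eq] at hr
    refine absurd (finsum_eq_zero_of_forall_eq_zero (fun s => ?_)) hr
    have : φ ∘ₗ LinearMap.mulLeft ℂ (0 : C) = 0 := by ext c; simp
    simp [this, idφ_apply]
  | hadd b₁ b₂ h1 h2 =>
    intro a
    refine Set.Finite.subset ((h1 a).union (h2 a)) (fun r hr => ?_)
    simp only [Set.mem_setOf_eq] at hr
    by_contra hc
    simp only [Set.mem_union, Set.mem_setOf_eq, not_or, not_not] at hc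
    refine hr ?_
    have : ∀ s, idφ B (φ ∘ₗ LinearMap.mulLeft ℂ (b₁ + b₂)) r s a
        = idφ B (φ ∘ₗ LinearMap.mulLeft ℂ b₁) r s a + idφ B (φ ∘ₗ LinearMap.mulLeft ℂ b₂) r s a :=
      fun s => by rw [comp_mulLeft_add, idφ_psi_add]
    rw [finsum_congr this, finsum_add_distrib (idφ_row_finite B _ r a)
      (idφ_row_finite B _ r a), hc.1, hc.2, add_zero]
  | helem k' l' m' n' x hx =>
    intro a
    refine Set.Finite.subset (Set.finite_singleton l') (fun r hr => ?_)
    simp only [Set.mem_setOf_eq] at hr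
    by_contra hc
    simp only [Set.mem_singleton_iff] at hc
    exact hr (finsum_eq_zero_of_forall_eq_zero
      (fun s => idφ_mulLeft_vanish B φ hx.2 a r s hc))

/-- outer support finiteness for the left-hand side of the left statement -/
theorem FIN_L (a : C) : ∀ b : C,
    {r | (∑ᶠ s, idφ B (φ ∘ₗ LinearMap.mulRight ℂ a) r s b) ≠ 0}.Finite := by
  induction a using homog_induction B with
  | h0 =>
    intro b
    refine Set.Finite.subset Set.finite_empty (fun r hr => ?_)
    simp only [Set.mem_setOf_eq] at hr
    refine absurd (finsum_eq_zero_of_forall_eq_zero (fun s => ?_)) hr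
    have : φ ∘ₗ LinearMap.mulRight ℂ (0 : C) = 0 := by ext c; simp
    simp [this, idφ_apply]
  | hadd a₁ a₂ h1 h2 =>
    intro b
    refine Set.Finite.subset ((h1 b).union (h2 b)) (fun r hr => ?_)
    simp only [Set.mem_setOf_eq] at hr
    by_contra hc
    simp only [Set.mem_union, Set.mem_setOf_eq, not_or, not_not] at hc
    refine hr ?_
    have : ∀ s, idφ B (φ ∘ₗ LinearMap.mulRight ℂ (a₁ + a₂)) r s b
        = idφ B (φ ∘ₗ LinearMap.mulRight ℂ a₁) r s b + idφ B (φ ∘ₗ LinearMap.mulRight ℂ a₂) r s b :=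
      fun s => by rw [comp_mulRight_add, idφ_psi_add]
    rw [finsum_congr this, finsum_add_distrib (idφ_row_finite B _ r b)
      (idφ_row_finite B _ r b), hc.1, hc.2, add_zero]
  | helem k l m n x hx =>
    intro b
    refine Set.Finite.subset (B.Δ_rcf_col b k) (fun r hr => ?_)
    simp only [Set.mem_setOf_eq] at hr ⊢
    intro h0
    refine hr ?_
    rw [finsum_eq_single _ k (fun s hs => idφ_mulRight_vanish B φ hx.1 b r s hs)]
    simp [idφ_apply, h0]

end StrongInvTools
namespace StrongInvTools

open TensorProduct LinearMap

variable {I C : Type} [NonUnitalRing C] [Module ℂ C]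
  [SMulCommClass ℂ C C] [IsScalarTower ℂ C C] (B : PartialBialgebra I C)
  (φ : C →ₗ[ℂ] ℂ) (S : C →ₗ[ℂ] C)

theorem core_left (hφ : B.IsLeftIntegral φ) (hS : B.IsAntipode S)
    {k l m n k' l' m' n' : I} {a b : C} (ha : a ∈ B.comp k l m n)
    (hb : b ∈ B.comp k' l' m' n') :
    S (∑ᶠ r, idφ B (φ ∘ₗ LinearMap.mulRight ℂ a) r k b)
      = idφ B (φ ∘ₗ LinearMap.mulLeft ℂ b) l' k' a := by
  have hfin0 : (Function.support fun r => idφ B (φ ∘ₗ LinearMap.mulRight ℂ a) r k b).Finite :=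
    idφ_col_finite B _ k b
  rw [linmap_finsum S hfin0]
  have hswap : (∑ᶠ r, ∑ᶠ t, Fmap B φ S (B.Δ t k' a) r k (B.Δ k' t b))
      = ∑ᶠ t, ∑ᶠ r, Fmap B φ S (B.Δ t k' a) r k (B.Δ k' t b) := by
    set T0 := (B.Δ_rcf_row b k').toFinset with hT0
    have hmemT0 : ∀ t : I, t ∈ T0 ↔ B.Δ k' t b ≠ 0 := fun t => Set.Finite.mem_toFinset _
    have hsub : ∀ r, (Function.support fun t => Fmap B φ S (B.Δ t k' a) r k (B.Δ k' t b)) ⊆ ↑T0 := by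
      intro r t ht
      rw [Finset.mem_coe, hmemT0]
      intro h0
      exact ht (by simp [h0])
    calc (∑ᶠ r, ∑ᶠ t, Fmap B φ S (B.Δ t k' a) r k (B.Δ k' t b))
        = ∑ᶠ r, ∑ t ∈ T0, Fmap B φ S (B.Δ t k' a) r k (B.Δ k' t b) :=
          finsum_congr fun r => finsum_eq_sum_of_support_subset _ (hsub r)
      _ = ∑ t ∈ T0, ∑ᶠ r, Fmap B φ S (B.Δ t k' a) r k (B.Δ k' t b) :=
          finsum_sum_comm T0 _ (fun t _ => Fmap_r_support_finite B φ S (B.Δ t k' a) k (B.Δ k' t b))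
      _ = ∑ᶠ t, ∑ᶠ r, Fmap B φ S (B.Δ t k' a) r k (B.Δ k' t b) := by
          refine (finsum_eq_sum_of_support_subset _ ?_).symm
          intro t ht
          rw [Finset.mem_coe, hmemT0]
          intro h0
          exact ht (finsum_eq_zero_of_forall_eq_zero (fun r => by simp [h0]))
  calc ∑ᶠ r, S (idφ B (φ ∘ₗ LinearMap.mulRight ℂ a) r k b)
      = ∑ᶠ r, LinearMap.mul' ℂ C (TensorProduct.map S
          (idφ B φ k' k' ∘ₗ LinearMap.mulRight ℂ a) (B.Δ r k b)) :=
        finsum_congr fun r => core_h2 B φ S hφ hS ha hb r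
    _ = ∑ᶠ r, ∑ᶠ t, Nmap φ S (B.Δ t k' a) (LinearMap.lTensor C (B.Δ k' t) (B.Δ r k b)) :=
        finsum_congr fun r => core_h3 B φ S a k' (B.Δ r k b)
    _ = ∑ᶠ r, ∑ᶠ t, Fmap B φ S (B.Δ t k' a) r k (B.Δ k' t b) := by
        refine finsum_congr fun r => finsum_congr fun t => ?_
        rw [← Nmap_assoc_rTensor B φ S (B.Δ t k' a) r k (B.Δ k' t b), B.coassoc r k k' t b]
    _ = ∑ᶠ t, ∑ᶠ r, Fmap B φ S (B.Δ t k' a) r k (B.Δ k' t b) := hswap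
    _ = ∑ᶠ t, Θmap φ (B.Δ t k' a) (B.E k t)
          ((TensorProduct.lid ℂ C) ((LinearMap.rTensor C B.ε) (B.Δ k' t b))) :=
        finsum_congr fun t => core_h7 B φ S hS hb (B.Δ t k' a) k t
    _ = Θmap φ (B.Δ l' k' a) (B.E k l') b := by
        rw [finsum_eq_single _ l' (fun t ht => ?_), B.counit_l k' l' m' n' b hb]
        have h0 : LinearMap.rTensor C B.ε (B.Δ k' t b) = 0 :=
          rTensor_zero_of_vanish
            (fun x hx => B.ε_supp k' l' k' t
              (fun h => ht ((congrArg Prod.snd h).symm)) x hx)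
            (B.Δ_mem k' l' m' n' k' t b hb)
        rw [h0, map_zero, map_zero]
    _ = idφ B (φ ∘ₗ LinearMap.mulLeft ℂ b) l' k' a := core_h10 B φ b ha

theorem left_homog_a (hφ : B.IsLeftIntegral φ) (hS : B.IsAntipode S)
    {k l m n : I} {a : C} (ha : a ∈ B.comp k l m n) (b : C) :
    S (∑ᶠ r, ∑ᶠ s, idφ B (φ ∘ₗ LinearMap.mulRight ℂ a) r s b)
      = ∑ᶠ r, ∑ᶠ s, idφ B (φ ∘ₗ LinearMap.mulLeft ℂ b) r s a := by
  induction b using homog_induction B with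
  | h0 =>
    have h1 : ∀ r s : I, idφ B (φ ∘ₗ LinearMap.mulRight ℂ a) r s (0 : C) = 0 := fun r s => map_zero _
    have h2 : φ ∘ₗ LinearMap.mulLeft ℂ (0 : C) = 0 := by ext c; simp
    simp only [h1, h2, finsum_zero, map_zero]
    refine (finsum_eq_zero_of_forall_eq_zero (fun r =>
      finsum_eq_zero_of_forall_eq_zero (fun s => by simp [idφ_apply]))).symm
  | hadd b₁ b₂ h1 h2 =>
    have hL : ∀ r : I, (∑ᶠ s, idφ B (φ ∘ₗ LinearMap.mulRight ℂ a) r s (b₁ + b₂))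
        = (∑ᶠ s, idφ B (φ ∘ₗ LinearMap.mulRight ℂ a) r s b₁)
          + ∑ᶠ s, idφ B (φ ∘ₗ LinearMap.mulRight ℂ a) r s b₂ := by
      intro r
      rw [← finsum_add_distrib (idφ_row_finite B _ r b₁) (idφ_row_finite B _ r b₂)]
      exact finsum_congr fun s => map_add _ _ _
    have hLfin : ∀ c : C, (Function.support fun r =>
        ∑ᶠ s, idφ B (φ ∘ₗ LinearMap.mulRight ℂ a) r s c).Finite := fun c => FIN_L B φ a c
    have hR : ∀ r : I, (∑ᶠ s, idφ B (φ ∘ₗ LinearMap.mulLeft ℂ (b₁ + b₂)) r s a)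
        = (∑ᶠ s, idφ B (φ ∘ₗ LinearMap.mulLeft ℂ b₁) r s a)
          + ∑ᶠ s, idφ B (φ ∘ₗ LinearMap.mulLeft ℂ b₂) r s a := by
      intro r
      rw [← finsum_add_distrib (idφ_row_finite B _ r a) (idφ_row_finite B _ r a)]
      exact finsum_congr fun s => by rw [comp_mulLeft_add, idφ_psi_add]
    rw [finsum_congr hL, finsum_add_distrib (hLfin b₁) (hLfin b₂), map_add, h1, h2,
      finsum_congr hR, finsum_add_distrib (FIN_R B φ b₁ a) (FIN_R B φ b₂ a)]
  | helem k' l' m' n' x hx =>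
    calc S (∑ᶠ r, ∑ᶠ s, idφ B (φ ∘ₗ LinearMap.mulRight ℂ a) r s x)
        = S (∑ᶠ r, idφ B (φ ∘ₗ LinearMap.mulRight ℂ a) r k x) :=
          congrArg S (finsum_congr fun r => finsum_eq_single _ k
            (fun s hs => idφ_mulRight_vanish B φ ha.1 x r s hs))
      _ = idφ B (φ ∘ₗ LinearMap.mulLeft ℂ x) l' k' a := core_left B φ S hφ hS ha hx
      _ = ∑ᶠ r, idφ B (φ ∘ₗ LinearMap.mulLeft ℂ x) r k' a :=
          (finsum_eq_single _ l' (fun r hr => idφ_mulLeft_vanish B φ hx.2 a r k' hr)).symm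
      _ = ∑ᶠ r, ∑ᶠ s, idφ B (φ ∘ₗ LinearMap.mulLeft ℂ x) r s a :=
          finsum_congr fun r => (finsum_eq_single _ k'
            (fun s hs => idφ_mulLeft_vanish₂ B φ hφ hx a r s hs)).symm

theorem left_main (hφ : B.IsLeftIntegral φ) (hS : B.IsAntipode S) (a b : C) :
    S (∑ᶠ r, ∑ᶠ s, idφ B (φ ∘ₗ LinearMap.mulRight ℂ a) r s b)
      = ∑ᶠ r, ∑ᶠ s, idφ B (φ ∘ₗ LinearMap.mulLeft ℂ b) r s a := by
  induction a using homog_induction B with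
  | h0 =>
    have h2 : φ ∘ₗ LinearMap.mulRight ℂ (0 : C) = 0 := by ext c; simp
    simp only [h2]
    rw [finsum_eq_zero_of_forall_eq_zero (fun r =>
      finsum_eq_zero_of_forall_eq_zero (fun s => by simp [idφ_apply])), map_zero]
    exact (finsum_eq_zero_of_forall_eq_zero (fun r =>
      finsum_eq_zero_of_forall_eq_zero (fun s => map_zero _))).symm
  | hadd a₁ a₂ h1 h2 =>
    have hL : ∀ r : I, (∑ᶠ s, idφ B (φ ∘ₗ LinearMap.mulRight ℂ (a₁ + a₂)) r s b)
        = (∑ᶠ s, idφ B (φ ∘ₗ LinearMap.mulRight ℂ a₁) r s b)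
          + ∑ᶠ s, idφ B (φ ∘ₗ LinearMap.mulRight ℂ a₂) r s b := by
      intro r
      rw [← finsum_add_distrib (idφ_row_finite B _ r b) (idφ_row_finite B _ r b)]
      exact finsum_congr fun s => by rw [comp_mulRight_add, idφ_psi_add]
    have hR : ∀ r : I, (∑ᶠ s, idφ B (φ ∘ₗ LinearMap.mulLeft ℂ b) r s (a₁ + a₂))
        = (∑ᶠ s, idφ B (φ ∘ₗ LinearMap.mulLeft ℂ b) r s a₁)
          + ∑ᶠ s, idφ B (φ ∘ₗ LinearMap.mulLeft ℂ b) r s a₂ := by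
      intro r
      rw [← finsum_add_distrib (idφ_row_finite B _ r a₁) (idφ_row_finite B _ r a₂)]
      exact finsum_congr fun s => map_add _ _ _
    have hRfin : ∀ c : C, (Function.support fun r =>
        ∑ᶠ s, idφ B (φ ∘ₗ LinearMap.mulLeft ℂ b) r s c).Finite := fun c => FIN_R B φ b c
    rw [finsum_congr hL, finsum_add_distrib (FIN_L B φ a₁ b) (FIN_L B φ a₂ b), map_add,
      h1, h2, finsum_congr hR, finsum_add_distrib (hRfin a₁) (hRfin a₂)]
  | helem k l m n x hx => exact left_homog_a B φ S hφ hS hx b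

end StrongInvTools
namespace StrongInvTools

open TensorProduct LinearMap

variable {I C : Type} [NonUnitalRing C] [Module ℂ C]
  [SMulCommClass ℂ C C] [IsScalarTower ℂ C C] (B : PartialBialgebra I C)
  (φ : C →ₗ[ℂ] ℂ) (S : C →ₗ[ℂ] C)

/-- `w ↦ (φ ⊗ id)(v · w)` -/
noncomputable def W'map (v : C ⊗[ℂ] C) : C ⊗[ℂ] C →ₗ[ℂ] C :=
  (TensorProduct.lid ℂ C).toLinearMap ∘ₗ LinearMap.rTensor C φ ∘ₗ LinearMap.mulLeft ℂ v

theorem W'map_apply (v w : C ⊗[ℂ] C) :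
    W'map φ v w = (TensorProduct.lid ℂ C) ((LinearMap.rTensor C φ) (v * w)) := rfl

theorem W'map_add (v₁ v₂ w : C ⊗[ℂ] C) :
    W'map φ (v₁ + v₂) w = W'map φ v₁ w + W'map φ v₂ w := by
  simp [W'map_apply, add_mul]

theorem W'map_tmul (a₁ a₂ y c : C) :
    W'map φ (a₁ ⊗ₜ[ℂ] a₂) (y ⊗ₜ[ℂ] c) = φ (a₁ * y) • (a₂ * c) := by
  simp [W'map_apply, Algebra.TensorProduct.tmul_mul_tmul]

/-- `w ⊗ y ↦ (φ ⊗ id)(v · w) · S(y)` -/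
noncomputable def N'map (v : C ⊗[ℂ] C) : (C ⊗[ℂ] C) ⊗[ℂ] C →ₗ[ℂ] C :=
  TensorProduct.lift (((LinearMap.mul ℂ C).comp (W'map φ v)).compl₂ S)

theorem N'map_tmul (v : C ⊗[ℂ] C) (w : C ⊗[ℂ] C) (y : C) :
    N'map φ S v (w ⊗ₜ[ℂ] y) = W'map φ v w * S y := by
  simp [N'map]

noncomputable def M'map (v : C ⊗[ℂ] C) : C ⊗[ℂ] (C ⊗[ℂ] C) →ₗ[ℂ] C :=
  N'map φ S v ∘ₗ (TensorProduct.assoc ℂ C C C).symm.toLinearMap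

/-- `(c, z) ↦ (φ ⊗ id)(v · (c ⊗ z))` -/
noncomputable def Θ'map (v : C ⊗[ℂ] C) : C →ₗ[ℂ] C →ₗ[ℂ] C :=
  (TensorProduct.mk ℂ C C).compr₂ (W'map φ v)

theorem Θ'map_apply (v : C ⊗[ℂ] C) (x c : C) :
    Θ'map φ v x c = W'map φ v (x ⊗ₜ[ℂ] c) := rfl

noncomputable def F'map (v : C ⊗[ℂ] C) (n s : I) : C ⊗[ℂ] C →ₗ[ℂ] C :=
  TensorProduct.lift ((Θ'map φ v).compl₂
    (LinearMap.mul' ℂ C ∘ₗ LinearMap.lTensor C S ∘ₗ B.Δ n s))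

theorem F'map_tmul (v : C ⊗[ℂ] C) (n s : I) (c₁ c₂ : C) :
    F'map B φ S v n s (c₁ ⊗ₜ[ℂ] c₂)
      = Θ'map φ v c₁ (LinearMap.mul' ℂ C (LinearMap.lTensor C S (B.Δ n s c₂))) := by
  simp [F'map]

theorem G1' (v : C ⊗[ℂ] C) (c : C) (Y : C ⊗[ℂ] C) :
    M'map φ S v (c ⊗ₜ[ℂ] Y)
      = Θ'map φ v c (LinearMap.mul' ℂ C (LinearMap.lTensor C S Y)) := by
  induction Y using TensorProduct.induction_on with
  | zero => simp [M'map, Θ'map_apply]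
  | add Y₁ Y₂ h1 h2 =>
    simp only [tmul_add, map_add, h1, h2]
  | tmul y₁ y₂ =>
    rw [M'map, LinearMap.comp_apply, LinearEquiv.coe_coe, assoc_symm_tmul, N'map_tmul,
      lTensor_tmul, LinearMap.mul'_apply, Θ'map_apply]
    induction v using TensorProduct.induction_on with
    | zero => simp [W'map]
    | add v₁ v₂ h1 h2 => rw [W'map_add, W'map_add, add_mul, h1, h2]
    | tmul a₁ a₂ =>
      rw [W'map_tmul, W'map_tmul, smul_mul_assoc, mul_assoc]

theorem M'map_lTensor (v : C ⊗[ℂ] C) (n s : I) (w : C ⊗[ℂ] C) :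
    M'map φ S v ((LinearMap.lTensor C (B.Δ n s)) w) = F'map B φ S v n s w := by
  induction w using TensorProduct.induction_on with
  | zero => simp
  | add w₁ w₂ h1 h2 => simp only [map_add, h1, h2]
  | tmul c₁ c₂ => rw [lTensor_tmul, G1', F'map_tmul]

theorem F'map_s_support_finite (v : C ⊗[ℂ] C) (n : I) (u : C ⊗[ℂ] C) :
    {s | F'map B φ S v n s u ≠ 0}.Finite := by
  induction u using TensorProduct.induction_on with
  | zero => exact Set.Finite.subset (Set.finite_empty) (fun s hs => by simp at hs)
  | add u₁ u₂ h1 h2 =>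
    refine Set.Finite.subset (h1.union h2) (fun s hs => ?_)
    simp only [Set.mem_setOf_eq, map_add] at hs
    by_contra hc
    simp only [Set.mem_union, Set.mem_setOf_eq, not_or, not_not] at hc
    exact hs (by rw [hc.1, hc.2, add_zero])
  | tmul c₁ c₂ =>
    refine Set.Finite.subset (B.Δ_rcf_row c₂ n) (fun s hs => ?_)
    simp only [Set.mem_setOf_eq] at hs ⊢
    intro h0
    exact hs (by rw [F'map_tmul, h0, map_zero, map_zero, map_zero])

theorem N'map_t_support_finite (a : C) (n' : I) (u : C ⊗[ℂ] C) :
    {t | N'map φ S (B.Δ n' t a) (LinearMap.rTensor C (B.Δ t n') u) ≠ 0}.Finite := by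
  induction u using TensorProduct.induction_on with
  | zero => exact Set.Finite.subset (Set.finite_empty) (fun t ht => by simp at ht)
  | add u₁ u₂ h1 h2 =>
    refine Set.Finite.subset (h1.union h2) (fun t ht => ?_)
    simp only [Set.mem_setOf_eq, map_add] at ht
    by_contra hc
    simp only [Set.mem_union, Set.mem_setOf_eq, not_or, not_not] at hc
    exact ht (by rw [hc.1, hc.2, add_zero])
  | tmul x y =>
    refine Set.Finite.subset (B.Δ_rcf_col x n') (fun t ht => ?_)
    simp only [Set.mem_setOf_eq] at ht ⊢
    intro h0
    exact ht (by rw [rTensor_tmul, h0, zero_tmul, map_zero])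

theorem core_h2' (hφ : B.IsRightIntegral φ) (hS : B.IsAntipode S)
    {k l m n k' l' m' n' : I} {a b : C} (ha : a ∈ B.comp k l m n)
    (hb : b ∈ B.comp k' l' m' n') (s : I) :
    S (φid B (φ ∘ₗ LinearMap.mulLeft ℂ a) n s b)
      = LinearMap.mul' ℂ C (TensorProduct.map
          (φid B φ n' n' ∘ₗ LinearMap.mulLeft ℂ a) S (B.Δ n s b)) := by
  have key := eq_on_range
    (f := S ∘ₗ ((TensorProduct.lid ℂ C).toLinearMap ∘ₗ
      LinearMap.rTensor C (φ ∘ₗ LinearMap.mulLeft ℂ a)))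
    (g := LinearMap.mul' ℂ C ∘ₗ TensorProduct.map
      (φid B φ n' n' ∘ₗ LinearMap.mulLeft ℂ a) S)
    (fun x hx y hy => ?_) (B.Δ_mem k' l' m' n' n s b hb)
  · simpa [φid_apply] using key
  · have hax : a * x ∈ B.comp k l' m s := mul_mem_comp B ha hx
    have hQ : φid B φ n' n' (a * x) = φ (a * x) • B.E n' m := right_inv_uniform B φ hφ hax n'
    simp only [LinearMap.comp_apply, rTensor_tmul, LinearEquiv.coe_coe, lid_tmul, map_smul,
      TensorProduct.map_tmul, LinearMap.mul'_apply, LinearMap.mulLeft_apply]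
    rw [hQ, smul_mul_assoc]
    by_cases hms : m = s
    · subst hms
      rw [(hS.1 n m m' n' y hy).1]
    · have h1 : φ (a * x) = 0 := hφ.1 k l' m s (fun h => hms h.2) (a * x) hax
      rw [h1, zero_smul, zero_smul]

end StrongInvTools
namespace StrongInvTools

open TensorProduct LinearMap

variable {I C : Type} [NonUnitalRing C] [Module ℂ C]
  [SMulCommClass ℂ C C] [IsScalarTower ℂ C C] (B : PartialBialgebra I C)
  (φ : C →ₗ[ℂ] ℂ) (S : C →ₗ[ℂ] C)

theorem core_h3' (a : C) (n' : I) (u : C ⊗[ℂ] C) :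
    LinearMap.mul' ℂ C (TensorProduct.map
        (φid B φ n' n' ∘ₗ LinearMap.mulLeft ℂ a) S u)
      = ∑ᶠ t, N'map φ S (B.Δ n' t a) (LinearMap.rTensor C (B.Δ t n') u) := by
  induction u using TensorProduct.induction_on with
  | zero => simp
  | add u₁ u₂ h1 h2 =>
    simp only [map_add]
    rw [h1, h2, ← finsum_add_distrib (N'map_t_support_finite B φ S a n' u₁)
      (N'map_t_support_finite B φ S a n' u₂)]
  | tmul x y =>
    rw [TensorProduct.map_tmul, LinearMap.mul'_apply]
    have hsupp1 : (Function.support fun t => B.Δ n' t a * B.Δ t n' x).Finite :=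
      Set.Finite.subset (B.Δ_rcf_col x n') (fun t ht h0 => ht (by simp [h0]))
    have hQ : (φid B φ n' n' ∘ₗ LinearMap.mulLeft ℂ a) x
        = ∑ᶠ t, W'map φ (B.Δ n' t a) (B.Δ t n' x) := by
      show (TensorProduct.lid ℂ C) ((LinearMap.rTensor C φ) (B.Δ n' n' (a * x)))
        = ∑ᶠ t, W'map φ (B.Δ n' t a) (B.Δ t n' x)
      rw [B.Δ_mul n' n' a x]
      have hmf := linmap_finsum ((TensorProduct.lid ℂ C).toLinearMap ∘ₗ
        LinearMap.rTensor C φ) hsupp1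
      simp only [LinearMap.comp_apply, LinearEquiv.coe_coe] at hmf
      rw [hmf]
      exact finsum_congr fun t => rfl
    have hsupp2 : (Function.support fun t => W'map φ (B.Δ n' t a) (B.Δ t n' x)).Finite :=
      Set.Finite.subset (B.Δ_rcf_col x n') (fun t ht h0 => ht (by simp [h0]))
    rw [hQ, mulRight_finsum (S y) hsupp2]
    exact finsum_congr fun t => by
      rw [rTensor_tmul, N'map_tmul]

theorem core_h7' (hS : B.IsAntipode S) {k' l' m' n' : I} {b : C}
    (hb : b ∈ B.comp k' l' m' n') (v : C ⊗[ℂ] C) (n t : I) :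
    ∑ᶠ s, F'map B φ S v n s (B.Δ t n' b)
      = ((Θ'map φ v).flip (B.E t n))
          ((TensorProduct.rid ℂ C) ((LinearMap.lTensor C B.ε) (B.Δ t n' b))) := by
  obtain ⟨z, hz⟩ := B.Δ_mem k' l' m' n' t n' b hb
  rw [← hz]
  clear hz
  induction z using TensorProduct.induction_on with
  | zero => simp
  | add z₁ z₂ h1 h2 =>
    simp only [map_add]
    rw [finsum_add_distrib ?_ ?_, h1, h2, ← map_add]
    · exact F'map_s_support_finite B φ S v n _
    · exact F'map_s_support_finite B φ S v n _
  | tmul x y =>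
    rw [TensorProduct.map_tmul]
    have hfin : (Function.support fun s =>
        LinearMap.mul' ℂ C ((LinearMap.lTensor C S) (B.Δ n s (y : C)))).Finite :=
      Set.Finite.subset (B.Δ_rcf_row (y : C) n)
        (fun s hs h0 => hs (by simp [h0]))
    have hcol := antipode_lTensor_collapse B S hS y.2 n
    calc ∑ᶠ s, F'map B φ S v n s ((x : C) ⊗ₜ[ℂ] (y : C))
        = ∑ᶠ s, (Θ'map φ v (x : C))
            (LinearMap.mul' ℂ C ((LinearMap.lTensor C S) (B.Δ n s (y : C)))) :=
          finsum_congr fun s => by rw [F'map_tmul]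
      _ = (Θ'map φ v (x : C))
            (∑ᶠ s, LinearMap.mul' ℂ C ((LinearMap.lTensor C S) (B.Δ n s (y : C)))) :=
          (linmap_finsum (Θ'map φ v (x : C)) hfin).symm
      _ = (Θ'map φ v (x : C)) (B.ε (y : C) • B.E t n) := by rw [hcol]
      _ = B.ε (y : C) • Θ'map φ v (x : C) (B.E t n) := by rw [map_smul]
      _ = ((Θ'map φ v).flip (B.E t n))
            ((TensorProduct.rid ℂ C) ((LinearMap.lTensor C B.ε) ((x : C) ⊗ₜ[ℂ] (y : C)))) := by
          rw [lTensor_tmul, rid_tmul, map_smul]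
          rfl

theorem core_h10' {k l m n m' n' : I} {a : C} (b : C) (ha : a ∈ B.comp k l m n) :
    Θ'map φ (B.Δ n' m' a) b (B.E m' n) = φid B (φ ∘ₗ LinearMap.mulRight ℂ b) n' m' a := by
  have key := eq_on_range
    (f := (TensorProduct.lid ℂ C).toLinearMap ∘ₗ LinearMap.rTensor C φ ∘ₗ
      LinearMap.mulRight ℂ (b ⊗ₜ[ℂ] (B.E m' n)))
    (g := (TensorProduct.lid ℂ C).toLinearMap ∘ₗ
      LinearMap.rTensor C (φ ∘ₗ LinearMap.mulRight ℂ b))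
    (fun a₁ h₁ a₂ h₂ => ?_) (B.Δ_mem k l m n n' m' a ha)
  · simpa [Θ'map_apply, W'map_apply, φid_apply] using key
  · simp only [LinearMap.comp_apply, LinearMap.mulRight_apply, rTensor_tmul,
      LinearEquiv.coe_coe, Algebra.TensorProduct.tmul_mul_tmul, h₂.2]

theorem core_right (hφ : B.IsRightIntegral φ) (hS : B.IsAntipode S)
    {k l m n k' l' m' n' : I} {a b : C} (ha : a ∈ B.comp k l m n)
    (hb : b ∈ B.comp k' l' m' n') :
    S (∑ᶠ s, φid B (φ ∘ₗ LinearMap.mulLeft ℂ a) n s b)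
      = φid B (φ ∘ₗ LinearMap.mulRight ℂ b) n' m' a := by
  have hfin0 : (Function.support fun s => φid B (φ ∘ₗ LinearMap.mulLeft ℂ a) n s b).Finite :=
    φid_row_finite B _ n b
  rw [linmap_finsum S hfin0]
  have hswap : (∑ᶠ s, ∑ᶠ t, F'map B φ S (B.Δ n' t a) n s (B.Δ t n' b))
      = ∑ᶠ t, ∑ᶠ s, F'map B φ S (B.Δ n' t a) n s (B.Δ t n' b) := by
    set T0 := (B.Δ_rcf_col b n').toFinset with hT0
    have hmemT0 : ∀ t : I, t ∈ T0 ↔ B.Δ t n' b ≠ 0 := fun t => Set.Finite.mem_toFinset _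
    have hsub : ∀ s, (Function.support fun t => F'map B φ S (B.Δ n' t a) n s (B.Δ t n' b)) ⊆ ↑T0 := by
      intro s t ht
      rw [Finset.mem_coe, hmemT0]
      intro h0
      exact ht (by simp [h0])
    calc (∑ᶠ s, ∑ᶠ t, F'map B φ S (B.Δ n' t a) n s (B.Δ t n' b))
        = ∑ᶠ s, ∑ t ∈ T0, F'map B φ S (B.Δ n' t a) n s (B.Δ t n' b) :=
          finsum_congr fun s => finsum_eq_sum_of_support_subset _ (hsub s)
      _ = ∑ t ∈ T0, ∑ᶠ s, F'map B φ S (B.Δ n' t a) n s (B.Δ t n' b) :=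
          finsum_sum_comm T0 _ (fun t _ => F'map_s_support_finite B φ S (B.Δ n' t a) n (B.Δ t n' b))
      _ = ∑ᶠ t, ∑ᶠ s, F'map B φ S (B.Δ n' t a) n s (B.Δ t n' b) := by
          refine (finsum_eq_sum_of_support_subset _ ?_).symm
          intro t ht
          rw [Finset.mem_coe, hmemT0]
          intro h0
          exact ht (finsum_eq_zero_of_forall_eq_zero (fun s => by simp [h0]))
  calc ∑ᶠ s, S (φid B (φ ∘ₗ LinearMap.mulLeft ℂ a) n s b)
      = ∑ᶠ s, LinearMap.mul' ℂ C (TensorProduct.map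
          (φid B φ n' n' ∘ₗ LinearMap.mulLeft ℂ a) S (B.Δ n s b)) :=
        finsum_congr fun s => core_h2' B φ S hφ hS ha hb s
    _ = ∑ᶠ s, ∑ᶠ t, N'map φ S (B.Δ n' t a) (LinearMap.rTensor C (B.Δ t n') (B.Δ n s b)) :=
        finsum_congr fun s => core_h3' B φ S a n' (B.Δ n s b)
    _ = ∑ᶠ s, ∑ᶠ t, F'map B φ S (B.Δ n' t a) n s (B.Δ t n' b) := by
        refine finsum_congr fun s => finsum_congr fun t => ?_
        rw [← M'map_lTensor B φ S (B.Δ n' t a) n s (B.Δ t n' b), ← B.coassoc t n' n s b]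
        rw [M'map, LinearMap.comp_apply, LinearEquiv.coe_coe,
          LinearEquiv.symm_apply_apply]
    _ = ∑ᶠ t, ∑ᶠ s, F'map B φ S (B.Δ n' t a) n s (B.Δ t n' b) := hswap
    _ = ∑ᶠ t, ((Θ'map φ (B.Δ n' t a)).flip (B.E t n))
          ((TensorProduct.rid ℂ C) ((LinearMap.lTensor C B.ε) (B.Δ t n' b))) :=
        finsum_congr fun t => core_h7' B φ S hS hb (B.Δ n' t a) n t
    _ = Θ'map φ (B.Δ n' m' a) b (B.E m' n) := by
        rw [finsum_eq_single _ m' (fun t ht => ?_), B.counit_r k' l' m' n' b hb]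
        · rfl
        have h0 : LinearMap.lTensor C B.ε (B.Δ t n' b) = 0 :=
          lTensor_zero_of_vanish
            (fun y hy => B.ε_supp t n' m' n'
              (fun h => ht (congrArg Prod.fst h)) y hy)
            (B.Δ_mem k' l' m' n' t n' b hb)
        rw [h0, map_zero, map_zero]
    _ = φid B (φ ∘ₗ LinearMap.mulRight ℂ b) n' m' a := core_h10' B φ b ha

end StrongInvTools
namespace StrongInvTools

open TensorProduct LinearMap

variable {I C : Type} [NonUnitalRing C] [Module ℂ C]
  [SMulCommClass ℂ C C] [IsScalarTower ℂ C C] (B : PartialBialgebra I C)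
  (φ : C →ₗ[ℂ] ℂ) (S : C →ₗ[ℂ] C)

theorem FIN_L' (a : C) : ∀ b : C,
    {r | (∑ᶠ s, φid B (φ ∘ₗ LinearMap.mulLeft ℂ a) r s b) ≠ 0}.Finite := by
  induction a using homog_induction B with
  | h0 =>
    intro b
    refine Set.Finite.subset Set.finite_empty (fun r hr => ?_)
    simp only [Set.mem_setOf_eq] at hr
    refine absurd (finsum_eq_zero_of_forall_eq_zero (fun s => ?_)) hr
    have : φ ∘ₗ LinearMap.mulLeft ℂ (0 : C) = 0 := by ext c; simp
    simp [this, φid_apply]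
  | hadd a₁ a₂ h1 h2 =>
    intro b
    refine Set.Finite.subset ((h1 b).union (h2 b)) (fun r hr => ?_)
    simp only [Set.mem_setOf_eq] at hr
    by_contra hc
    simp only [Set.mem_union, Set.mem_setOf_eq, not_or, not_not] at hc
    refine hr ?_
    have : ∀ s, φid B (φ ∘ₗ LinearMap.mulLeft ℂ (a₁ + a₂)) r s b
        = φid B (φ ∘ₗ LinearMap.mulLeft ℂ a₁) r s b + φid B (φ ∘ₗ LinearMap.mulLeft ℂ a₂) r s b :=
      fun s => by rw [comp_mulLeft_add, φid_psi_add]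
    rw [finsum_congr this, finsum_add_distrib (φid_row_finite B _ r b)
      (φid_row_finite B _ r b), hc.1, hc.2, add_zero]
  | helem k l m n x hx =>
    intro b
    refine Set.Finite.subset (Set.finite_singleton n) (fun r hr => ?_)
    simp only [Set.mem_setOf_eq] at hr
    by_contra hc
    simp only [Set.mem_singleton_iff] at hc
    exact hr (finsum_eq_zero_of_forall_eq_zero
      (fun s => φid_mulLeft_vanish B φ hx.2 b r s hc))

theorem FIN_R' (hφ : B.IsRightIntegral φ) (b : C) : ∀ a : C,
    {r | (∑ᶠ s, φid B (φ ∘ₗ LinearMap.mulRight ℂ b) r s a) ≠ 0}.Finite := by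
  induction b using homog_induction B with
  | h0 =>
    intro a
    refine Set.Finite.subset Set.finite_empty (fun r hr => ?_)
    simp only [Set.mem_setOf_eq] at hr
    refine absurd (finsum_eq_zero_of_forall_eq_zero (fun s => ?_)) hr
    have : φ ∘ₗ LinearMap.mulRight ℂ (0 : C) = 0 := by ext c; simp
    simp [this, φid_apply]
  | hadd b₁ b₂ h1 h2 =>
    intro a
    refine Set.Finite.subset ((h1 a).union (h2 a)) (fun r hr => ?_)
    simp only [Set.mem_setOf_eq] at hr
    by_contra hc
    simp only [Set.mem_union, Set.mem_setOf_eq, not_or, not_not] at hc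
    refine hr ?_
    have : ∀ s, φid B (φ ∘ₗ LinearMap.mulRight ℂ (b₁ + b₂)) r s a
        = φid B (φ ∘ₗ LinearMap.mulRight ℂ b₁) r s a + φid B (φ ∘ₗ LinearMap.mulRight ℂ b₂) r s a :=
      fun s => by rw [comp_mulRight_add, φid_psi_add]
    rw [finsum_congr this, finsum_add_distrib (φid_row_finite B _ r a)
      (φid_row_finite B _ r a), hc.1, hc.2, add_zero]
  | helem k' l' m' n' x hx =>
    intro a
    refine Set.Finite.subset (Set.finite_singleton n') (fun r hr => ?_)
    simp only [Set.mem_setOf_eq] at hr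
    by_contra hc
    simp only [Set.mem_singleton_iff] at hc
    exact hr (finsum_eq_zero_of_forall_eq_zero
      (fun s => φid_mulRight_vanish₂ B φ hφ hx a r s hc))

theorem right_homog_a (hφ : B.IsRightIntegral φ) (hS : B.IsAntipode S)
    {k l m n : I} {a : C} (ha : a ∈ B.comp k l m n) (b : C) :
    S (∑ᶠ r, ∑ᶠ s, φid B (φ ∘ₗ LinearMap.mulLeft ℂ a) r s b)
      = ∑ᶠ r, ∑ᶠ s, φid B (φ ∘ₗ LinearMap.mulRight ℂ b) r s a := by
  induction b using homog_induction B with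
  | h0 =>
    have h2 : φ ∘ₗ LinearMap.mulRight ℂ (0 : C) = 0 := by ext c; simp
    rw [finsum_eq_zero_of_forall_eq_zero (fun r =>
      finsum_eq_zero_of_forall_eq_zero (fun s => map_zero _)), map_zero]
    refine (finsum_eq_zero_of_forall_eq_zero (fun r =>
      finsum_eq_zero_of_forall_eq_zero (fun s => by simp [h2, φid_apply]))).symm
  | hadd b₁ b₂ h1 h2 =>
    have hL : ∀ r : I, (∑ᶠ s, φid B (φ ∘ₗ LinearMap.mulLeft ℂ a) r s (b₁ + b₂))
        = (∑ᶠ s, φid B (φ ∘ₗ LinearMap.mulLeft ℂ a) r s b₁)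
          + ∑ᶠ s, φid B (φ ∘ₗ LinearMap.mulLeft ℂ a) r s b₂ := by
      intro r
      rw [← finsum_add_distrib (φid_row_finite B _ r b₁) (φid_row_finite B _ r b₂)]
      exact finsum_congr fun s => map_add _ _ _
    have hR : ∀ r : I, (∑ᶠ s, φid B (φ ∘ₗ LinearMap.mulRight ℂ (b₁ + b₂)) r s a)
        = (∑ᶠ s, φid B (φ ∘ₗ LinearMap.mulRight ℂ b₁) r s a)
          + ∑ᶠ s, φid B (φ ∘ₗ LinearMap.mulRight ℂ b₂) r s a := by
      intro r
      rw [← finsum_add_distrib (φid_row_finite B _ r a) (φid_row_finite B _ r a)]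
      exact finsum_congr fun s => by rw [comp_mulRight_add, φid_psi_add]
    rw [finsum_congr hL, finsum_add_distrib (FIN_L' B φ a b₁) (FIN_L' B φ a b₂), map_add,
      h1, h2, finsum_congr hR, finsum_add_distrib (FIN_R' B φ hφ b₁ a) (FIN_R' B φ hφ b₂ a)]
  | helem k' l' m' n' x hx =>
    calc S (∑ᶠ r, ∑ᶠ s, φid B (φ ∘ₗ LinearMap.mulLeft ℂ a) r s x)
        = S (∑ᶠ s, φid B (φ ∘ₗ LinearMap.mulLeft ℂ a) n s x) :=
          congrArg S (finsum_eq_single _ n (fun r hr =>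
            finsum_eq_zero_of_forall_eq_zero (fun s =>
              φid_mulLeft_vanish B φ ha.2 x r s hr)))
      _ = φid B (φ ∘ₗ LinearMap.mulRight ℂ x) n' m' a := core_right B φ S hφ hS ha hx
      _ = ∑ᶠ r, φid B (φ ∘ₗ LinearMap.mulRight ℂ x) r m' a :=
          (finsum_eq_single _ n' (fun r hr =>
            φid_mulRight_vanish₂ B φ hφ hx a r m' hr)).symm
      _ = ∑ᶠ r, ∑ᶠ s, φid B (φ ∘ₗ LinearMap.mulRight ℂ x) r s a :=
          finsum_congr fun r => (finsum_eq_single _ m'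
            (fun s hs => φid_mulRight_vanish B φ hx.1 a r s hs)).symm

theorem right_main (hφ : B.IsRightIntegral φ) (hS : B.IsAntipode S) (a b : C) :
    S (∑ᶠ r, ∑ᶠ s, φid B (φ ∘ₗ LinearMap.mulLeft ℂ a) r s b)
      = ∑ᶠ r, ∑ᶠ s, φid B (φ ∘ₗ LinearMap.mulRight ℂ b) r s a := by
  induction a using homog_induction B with
  | h0 =>
    have h2 : φ ∘ₗ LinearMap.mulLeft ℂ (0 : C) = 0 := by ext c; simp
    rw [finsum_eq_zero_of_forall_eq_zero (fun r =>
      finsum_eq_zero_of_forall_eq_zero (fun s => by simp [h2, φid_apply])), map_zero]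
    exact (finsum_eq_zero_of_forall_eq_zero (fun r =>
      finsum_eq_zero_of_forall_eq_zero (fun s => map_zero _))).symm
  | hadd a₁ a₂ h1 h2 =>
    have hL : ∀ r : I, (∑ᶠ s, φid B (φ ∘ₗ LinearMap.mulLeft ℂ (a₁ + a₂)) r s b)
        = (∑ᶠ s, φid B (φ ∘ₗ LinearMap.mulLeft ℂ a₁) r s b)
          + ∑ᶠ s, φid B (φ ∘ₗ LinearMap.mulLeft ℂ a₂) r s b := by
      intro r
      rw [← finsum_add_distrib (φid_row_finite B _ r b) (φid_row_finite B _ r b)]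
      exact finsum_congr fun s => by rw [comp_mulLeft_add, φid_psi_add]
    have hR : ∀ r : I, (∑ᶠ s, φid B (φ ∘ₗ LinearMap.mulRight ℂ b) r s (a₁ + a₂))
        = (∑ᶠ s, φid B (φ ∘ₗ LinearMap.mulRight ℂ b) r s a₁)
          + ∑ᶠ s, φid B (φ ∘ₗ LinearMap.mulRight ℂ b) r s a₂ := by
      intro r
      rw [← finsum_add_distrib (φid_row_finite B _ r a₁) (φid_row_finite B _ r a₂)]
      exact finsum_congr fun s => map_add _ _ _
    rw [finsum_congr hL, finsum_add_distrib (FIN_L' B φ a₁ b) (FIN_L' B φ a₂ b), map_add,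
      h1, h2, finsum_congr hR, finsum_add_distrib (FIN_R' B φ hφ b a₁) (FIN_R' B φ hφ b a₂)]
  | helem k l m n x hx => exact right_homog_a B φ S hφ hS hx b

end StrongInvTools
/-- **strong invariance.** Let `𝒜` be a partial Hopf algebra with antipode `S`.
If `φ` is a left invariant integral, then
`S((id ⊗ φ)(Δ(b)(1 ⊗ a))) = (id ⊗ φ)((1 ⊗ b)Δ(a))` for all `a, b`; if `φ` is a right
invariant integral, then `S((φ ⊗ id)((a ⊗ 1)Δ(b))) = (φ ⊗ id)(Δ(a)(b ⊗ 1))`.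
Here `(id ⊗ φ)(Δ(b)(1 ⊗ a)) = Σ_{r,s} (id ⊗ (φ ∘ mulRight a))(Δ_{rs}(b))`, etc. -/
theorem strong_invariance
    {I C : Type} [NonUnitalRing C] [Module ℂ C] [SMulCommClass ℂ C C] [IsScalarTower ℂ C C]
    (B : PartialBialgebra I C) (S : C →ₗ[ℂ] C) (hS : B.IsAntipode S) (φ : C →ₗ[ℂ] ℂ) :
    (B.IsLeftIntegral φ → ∀ a b : C,
      S (∑ᶠ (r : I), ∑ᶠ (s : I), (TensorProduct.rid ℂ C)
            ((LinearMap.lTensor C (φ ∘ₗ LinearMap.mulRight ℂ a)) (B.Δ r s b)))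
        = ∑ᶠ (r : I), ∑ᶠ (s : I), (TensorProduct.rid ℂ C)
            ((LinearMap.lTensor C (φ ∘ₗ LinearMap.mulLeft ℂ b)) (B.Δ r s a))) ∧
    (B.IsRightIntegral φ → ∀ a b : C,
      S (∑ᶠ (r : I), ∑ᶠ (s : I), (TensorProduct.lid ℂ C)
            ((LinearMap.rTensor C (φ ∘ₗ LinearMap.mulLeft ℂ a)) (B.Δ r s b)))
        = ∑ᶠ (r : I), ∑ᶠ (s : I), (TensorProduct.lid ℂ C)
            ((LinearMap.rTensor C (φ ∘ₗ LinearMap.mulRight ℂ b)) (B.Δ r s a))) := by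
  constructor
  · intro hφ a b
    exact StrongInvTools.left_main B φ S hφ hS a b
  · intro hφ a b
    exact StrongInvTools.right_main B φ S hφ hS a b
end
end

section
/- Let 𝒜 be an I-partial *-bialgebra which admits an antipode S, i.e. a partial Hopf *-algebra. Then the counit satisfies ε(a*) = conjugate(ε(a)) for all a ∈ A, and the antipode satisfies S(S(a)*)* = a for all a ∈ A; in particular the total antipode S: A → A is bijective. -/
open scoped TensorProduct Classical ComplexOrder
open TensorProduct

noncomputable section

namespace PartialBialgebra

open LinearMap Function

variable {I C : Type} [NonUnitalRing C] [Module ℂ C]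
  [SMulCommClass ℂ C C] [IsScalarTower ℂ C C] (B : PartialBialgebra I C)

theorem ne_pair {α : Type*} {p q k m : α} (h : ¬(p = k ∧ q = m)) : (p, q) ≠ (k, m) := by
  simpa [Prod.ext_iff] using h

theorem prod_ne_swap {α : Type*} {p q k m : α} (h : (p, q) ≠ (k, m)) : (q, p) ≠ (m, k) :=
  fun he => h (by rw [Prod.ext_iff] at he ⊢; exact ⟨he.2, he.1⟩)

theorem mem_comp_iff {a : C} {k l m n : I} :
    a ∈ B.comp k l m n ↔ B.E k m * a = a ∧ a * B.E l n = a := Iff.rfl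

theorem E_mem (k m : I) : B.E k m ∈ B.comp k k m m :=
  ⟨B.E_idem k m, B.E_idem k m⟩

theorem E_mul_of_mem {a : C} {k l m n : I} (ha : a ∈ B.comp k l m n) (p q : I) :
    B.E p q * a = if p = k ∧ q = m then a else 0 := by
  have h1 : B.E k m * a = a := ha.1
  split_ifs with h
  · rcases h with ⟨rfl, rfl⟩; exact h1
  · rw [← h1, ← mul_assoc, B.E_orth p k q m (by simpa [Prod.ext_iff, and_comm] using h),
      zero_mul]

theorem mul_E_of_mem {a : C} {k l m n : I} (ha : a ∈ B.comp k l m n) (p q : I) :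
    a * B.E p q = if p = l ∧ q = n then a else 0 := by
  have h1 : a * B.E l n = a := ha.2
  split_ifs with h
  · rcases h with ⟨rfl, rfl⟩; exact h1
  · rw [← h1, mul_assoc, B.E_orth l p n q
      (fun he => h (by rw [Prod.ext_iff] at he; exact ⟨he.1.symm, he.2.symm⟩)), mul_zero]

theorem mul_mem_comp {a b : C} {k l m n p q : I}
    (ha : a ∈ B.comp k l m n) (hb : b ∈ B.comp l p n q) :
    a * b ∈ B.comp k p m q := by
  constructor
  · rw [← mul_assoc, ha.1]
  · rw [mul_assoc, hb.2]

theorem mul_eq_zero_of_mismatch {a b : C} {k l m n l' p n' q : I}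
    (ha : a ∈ B.comp k l m n) (hb : b ∈ B.comp l' p n' q)
    (h : (l, n) ≠ (l', n')) : a * b = 0 := by
  rw [← ha.2, ← hb.1, mul_assoc, ← mul_assoc (B.E l n),
    B.E_orth l l' n n' (by simpa [Prod.ext_iff] using h), zero_mul, mul_zero]

theorem induction_homog (P : C → Prop) (h0 : P 0)
    (hadd : ∀ x y, P x → P y → P (x + y))
    (h : ∀ k l m n, ∀ a ∈ B.comp k l m n, P a) (a : C) : P a := by
  have ha : a ∈ (⊤ : Submodule ℂ C) := trivial
  rw [← B.grading.submodule_iSup_eq_top] at ha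
  exact Submodule.iSup_induction (motive := P)
    (fun x : I × I × I × I => B.comp x.1 x.2.1 x.2.2.1 x.2.2.2) ha
    (fun i x hx => h i.1 i.2.1 i.2.2.1 i.2.2.2 x hx) h0 hadd

theorem tensor_ind {p q : Submodule ℂ C} (P : C ⊗[ℂ] C → Prop) (h0 : P 0)
    (hadd : ∀ z w, P z → P w → P (z + w))
    (ht : ∀ x ∈ p, ∀ y ∈ q, P (x ⊗ₜ[ℂ] y)) :
    ∀ z ∈ LinearMap.range (TensorProduct.map p.subtype q.subtype), P z := by
  rintro _ ⟨w, rfl⟩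
  induction w using TensorProduct.induction_on with
  | zero => simpa using h0
  | tmul x y => simpa using ht x x.2 y y.2
  | add z w hz hw => rw [map_add]; exact hadd _ _ hz hw

theorem Δ_mem' {a : C} {k l m n : I} (ha : a ∈ B.comp k l m n) (r s : I) :
    B.Δ r s a ∈ LinearMap.range (TensorProduct.map (B.comp k l r s).subtype
      (B.comp r s m n).subtype) :=
  B.Δ_mem k l m n r s a ha

/-- `εl z = (ε ⊗ 1) z` -/
def εl : C ⊗[ℂ] C →ₗ[ℂ] C :=
  (TensorProduct.lid ℂ C).toLinearMap ∘ₗ LinearMap.rTensor C B.ε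

/-- `εr z = (1 ⊗ ε) z` -/
def εr : C ⊗[ℂ] C →ₗ[ℂ] C :=
  (TensorProduct.rid ℂ C).toLinearMap ∘ₗ LinearMap.lTensor C B.ε

@[simp] theorem εl_tmul (x y : C) : B.εl (x ⊗ₜ[ℂ] y) = B.ε x • y := rfl
@[simp] theorem εr_tmul (x y : C) : B.εr (x ⊗ₜ[ℂ] y) = B.ε y • x := rfl

theorem εl_Δ {a : C} {k l m n : I} (ha : a ∈ B.comp k l m n) (r s : I) :
    B.εl (B.Δ r s a) = if (r, s) = (k, l) then a else 0 := by
  split_ifs with h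
  · obtain ⟨rfl, rfl⟩ : r = k ∧ s = l := by simpa [Prod.ext_iff] using h
    exact B.counit_l _ _ _ _ a ha
  · refine tensor_ind (fun z => B.εl z = 0) ?_ ?_ ?_ _ (B.Δ_mem' ha r s)
    · simp
    · intro z w hz hw; rw [map_add, hz, hw, add_zero]
    · intro x hx y hy
      rw [εl_tmul, B.ε_supp k l r s (fun he => h (by rw [Prod.ext_iff] at he ⊢; exact ⟨he.1.symm, he.2.symm⟩)) x hx,
        zero_smul]

theorem εr_Δ {a : C} {k l m n : I} (ha : a ∈ B.comp k l m n) (r s : I) :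
    B.εr (B.Δ r s a) = if (r, s) = (m, n) then a else 0 := by
  split_ifs with h
  · obtain ⟨rfl, rfl⟩ : r = m ∧ s = n := by simpa [Prod.ext_iff] using h
    exact B.counit_r _ _ _ _ a ha
  · refine tensor_ind (fun z => B.εr z = 0) ?_ ?_ ?_ _ (B.Δ_mem' ha r s)
    · simp
    · intro z w hz hw; rw [map_add, hz, hw, add_zero]
    · intro x hx y hy
      rw [εr_tmul, B.ε_supp r s m n h y hy, zero_smul]

section Star

variable [StarRing C] [StarModule ℂ C]

@[simp] theorem starTmul_tmul (x y : C) :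
    (starTmul (x ⊗ₜ[ℂ] y) : C ⊗[ℂ] C) = star x ⊗ₜ[ℂ] star y := rfl

theorem star_mem_comp (hstar : B.IsStarBialgebra) {a : C} {k l m n : I}
    (ha : a ∈ B.comp k l m n) : star a ∈ B.comp l k n m := by
  constructor
  · rw [← hstar.1 l n, ← star_mul, ha.2]
  · rw [← hstar.1 k m, ← star_mul, ha.1]

/-- Part 1: `ε (star a) = conj (ε a)`. -/
theorem eps_star (hstar : B.IsStarBialgebra) (a : C) :
    B.ε (star a) = starRingEnd ℂ (B.ε a) := by
  induction a using B.induction_homog with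
  | h0 => simp
  | hadd x y hx hy => rw [star_add, map_add, map_add, map_add, hx, hy]
  | h k l m n a ha =>
    by_cases h : (k, l) = (m, n)
    · obtain ⟨rfl, rfl⟩ : k = m ∧ l = n := by simpa [Prod.ext_iff] using h
      -- now `a ∈ B.comp k l k l`
      have hstara : a ∈ B.comp k l k l := ha
      have A1 : B.εr (starTmul (B.Δ k l a) : C ⊗[ℂ] C) = star a := by
        rw [← hstar.2 k l a]
        exact B.counit_r l k l k (star a) (B.star_mem_comp hstar ha)
      have A2 : B.εl (B.Δ k l a) = a := B.counit_l k l k l a ha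
      -- cross identity, for every z
      have C1 : ∀ z : C ⊗[ℂ] C,
          starRingEnd ℂ (B.ε (star (B.εl z))) = B.ε (star (B.εr (starTmul z))) := by
        intro z
        induction z using TensorProduct.induction_on with
        | zero => simp
        | tmul x y =>
          simp only [εl_tmul, εr_tmul, starTmul_tmul, star_smul, map_smul, smul_eq_mul,
            starRingEnd_apply, star_mul', star_star]
          ring
        | add z w hz hw => simp only [map_add, star_add, hz, hw]
      have := C1 (B.Δ k l a)
      rw [A2, A1, star_star] at this
      -- this : conj (ε (star a)) = ε a
      rw [← this, starRingEnd_apply, starRingEnd_apply, star_star]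
    · rw [B.ε_supp k l m n h a ha,
        B.ε_supp l k n m (prod_ne_swap h) (star a) (B.star_mem_comp hstar ha)]
      simp

end Star


section FinsumTools

theorem supp_row {M : Type*} [AddCommMonoid M] (F : I → C ⊗[ℂ] C → M)
    (hF : ∀ s, F s 0 = 0) (a : C) (r : I) :
    (Function.support fun s => F s (B.Δ r s a)).Finite := by
  refine (B.Δ_rcf_row a r).subset fun s hs => ?_
  simp only [Function.mem_support] at hs
  simp only [Set.mem_setOf_eq]
  intro h0
  exact hs (show F s (B.Δ r s a) = 0 by rw [h0]; exact hF s)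

theorem supp_col {M : Type*} [AddCommMonoid M] (F : I → C ⊗[ℂ] C → M)
    (hF : ∀ r, F r 0 = 0) (a : C) (s : I) :
    (Function.support fun r => F r (B.Δ r s a)).Finite := by
  refine (B.Δ_rcf_col a s).subset fun r hr => ?_
  simp only [Function.mem_support] at hr
  simp only [Set.mem_setOf_eq]
  intro h0
  exact hr (show F r (B.Δ r s a) = 0 by rw [h0]; exact hF r)

theorem supp_tensor {M N P : Type*} [AddCommMonoid M] [AddCommMonoid N] [AddCommMonoid P]
    [Module ℂ M] [Module ℂ N] (F : I → M ⊗[ℂ] N → P)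
    (hadd : ∀ u z w, F u (z + w) = F u z + F u w) (h0 : ∀ u, F u 0 = 0)
    (h : ∀ (x : M) (y : N), (Function.support fun u => F u (x ⊗ₜ[ℂ] y)).Finite)
    (z : M ⊗[ℂ] N) : (Function.support fun u => F u z).Finite := by
  induction z using TensorProduct.induction_on with
  | zero =>
    have : (Function.support fun u => F u 0) = ∅ := by
      ext u; simp [Function.mem_support, h0]
    rw [this]; exact Set.finite_empty
  | tmul x y => exact h x y
  | add z w hz hw =>
    refine (hz.union hw).subset fun u hu => ?_
    rw [Function.mem_support, hadd] at hu
    by_contra hc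
    simp only [Set.mem_union, Function.mem_support, not_or, not_not] at hc
    exact hu (by rw [hc.1, hc.2, add_zero])

theorem finsum_swap {α β M : Type*} [AddCommMonoid M] (f : α → β → M) {sα : Set α}
    (hsα : sα.Finite) (hα : ∀ b, (Function.support fun a => f a b) ⊆ sα)
    (hβ : ∀ a, (Function.support (f a)).Finite) :
    ∑ᶠ a, ∑ᶠ b, f a b = ∑ᶠ b, ∑ᶠ a, f a b := by
  classical
  have h1 : ∀ b, ∑ᶠ a, f a b = ∑ a ∈ hsα.toFinset, f a b := fun b =>
    finsum_eq_sum_of_support_subset _ (by intro a ha; simpa using hα b ha)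
  have h2 : Function.support (fun a => ∑ᶠ b, f a b) ⊆ ↑hsα.toFinset := by
    intro a ha
    rw [Function.mem_support] at ha
    have hmem : a ∈ sα := by
      by_contra hc
      exact ha (finsum_eq_zero_of_forall_eq_zero fun b => by
        by_contra hfb; exact hc (hα b hfb))
    simpa using hmem
  rw [finsum_eq_sum_of_support_subset _ h2, sum_finsum_comm _ _ (fun a _ => hβ a)]
  exact finsum_congr fun b => (h1 b).symm

end FinsumTools

section Antipode

variable (S : C →ₗ[ℂ] C)

theorem lamMul_of_mem {a : C} {k l m n : I} (ha : a ∈ B.comp k l m n) (p : I) :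
    B.lamMul p a = if p = k then a else 0 := by
  have hrfl : B.lamMul p a = ∑ᶠ x, B.E p x * a := rfl
  by_cases hp : p = k
  · have hterm : ∀ x, B.E p x * a = if x = m then a else 0 := fun x => by
      rw [B.E_mul_of_mem ha]; by_cases hx : x = m <;> simp [hx, hp]
    rw [hrfl, finsum_congr hterm, finsum_eq_single _ m (fun x hx => if_neg hx),
      if_pos rfl, if_pos hp]
  · have hterm : ∀ x, B.E p x * a = 0 := fun x => by rw [B.E_mul_of_mem ha]; simp [hp]
    rw [hrfl, finsum_congr hterm, finsum_zero, if_neg hp]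

theorem mulRho_of_mem {a : C} {k l m n : I} (ha : a ∈ B.comp k l m n) (p : I) :
    B.mulRho a p = if p = n then a else 0 := by
  have hrfl : B.mulRho a p = ∑ᶠ x, a * B.E x p := rfl
  by_cases hp : p = n
  · have hterm : ∀ x, a * B.E x p = if x = l then a else 0 := fun x => by
      rw [B.mul_E_of_mem ha]; by_cases hx : x = l <;> simp [hx, hp]
    rw [hrfl, finsum_congr hterm, finsum_eq_single _ l (fun x hx => if_neg hx),
      if_pos rfl, if_pos hp]
  · have hterm : ∀ x, a * B.E x p = 0 := fun x => by rw [B.mul_E_of_mem ha]; simp [hp]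
    rw [hrfl, finsum_congr hterm, finsum_zero, if_neg hp]

theorem antipode_sum_L (hS : B.IsAntipode S) {a : C} {k l m n : I}
    (ha : a ∈ B.comp k l m n) (r : I) :
    ∑ᶠ s, LinearMap.mul' ℂ C ((LinearMap.lTensor C S) (B.Δ r s a)) = B.ε a • B.E k r := by
  rw [hS.2.1 a r]
  have hterm : ∀ p, B.ε (B.lamMul p a) • B.E p r
      = if p = k then B.ε a • B.E k r else 0 := fun p => by
    rw [B.lamMul_of_mem ha]
    by_cases hp : p = k <;> simp [hp]
  rw [finsum_congr hterm, finsum_eq_single _ k (fun p hp => if_neg hp), if_pos rfl]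

theorem antipode_sum_R (hS : B.IsAntipode S) {a : C} {k l m n : I}
    (ha : a ∈ B.comp k l m n) (s : I) :
    ∑ᶠ r, LinearMap.mul' ℂ C ((LinearMap.rTensor C S) (B.Δ r s a)) = B.ε a • B.E s n := by
  rw [hS.2.2 a s]
  have hterm : ∀ p, B.ε (B.mulRho a p) • B.E s p
      = if p = n then B.ε a • B.E s n else 0 := fun p => by
    rw [B.mulRho_of_mem ha]
    by_cases hp : p = n <;> simp [hp]
  rw [finsum_congr hterm, finsum_eq_single _ n (fun p hp => if_neg hp), if_pos rfl]

theorem S_mem_comp (hS : B.IsAntipode S) {a : C} {k l m n : I}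
    (ha : a ∈ B.comp k l m n) : S a ∈ B.comp n m l k :=
  hS.1 k l m n a ha

/-- `ε ∘ S = ε` on components. -/
theorem eps_S (hS : B.IsAntipode S) {a : C} {k l m n : I} (ha : a ∈ B.comp k l m n) :
    B.ε (S a) = B.ε a := by
  by_cases h : (k, l) = (m, n)
  · obtain ⟨rfl, rfl⟩ : k = m ∧ l = n := by rw [Prod.ext_iff] at h; exact h
    -- now a ∈ B.comp k l k l
    have key : ∀ z ∈ LinearMap.range (TensorProduct.map (B.comp k l k l).subtype
        (B.comp k l k l).subtype),
        B.ε (S (B.εl z)) = B.ε (LinearMap.mul' ℂ C (LinearMap.lTensor C S z)) := by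
      refine tensor_ind _ (by simp) (fun z w hz hw => by simp only [map_add, hz, hw]) ?_
      intro x hx y hy
      rw [εl_tmul, map_smul, map_smul, LinearMap.lTensor_tmul, LinearMap.mul'_apply,
        B.ε_mul k l k k l k x hx (S y) (B.S_mem_comp S hS hy), smul_eq_mul]
    have hzero : ∀ s, s ≠ l →
        B.ε (LinearMap.mul' ℂ C (LinearMap.lTensor C S (B.Δ k s a))) = 0 := by
      intro s hs
      refine tensor_ind (fun z => B.ε (LinearMap.mul' ℂ C (LinearMap.lTensor C S z)) = 0)
        (by simp) (fun z w hz hw => by simp only [map_add, hz, hw, add_zero]) ?_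
        _ (B.Δ_mem' ha k s)
      intro x hx y hy
      rw [LinearMap.lTensor_tmul, LinearMap.mul'_apply,
        B.ε_mul k l k k s k x hx (S y) (B.S_mem_comp S hS hy),
        B.ε_supp k l k s (fun he => hs (by rw [Prod.ext_iff] at he; exact he.2.symm)) x hx,
        zero_mul]
    have hL := congrArg B.ε (B.antipode_sum_L S hS ha k)
    have hfin : (Function.support fun s =>
        LinearMap.mul' ℂ C (LinearMap.lTensor C S (B.Δ k s a))).Finite :=
      B.supp_row (fun s z => LinearMap.mul' ℂ C (LinearMap.lTensor C S z)) (by simp) a k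
    have hmap : B.ε (∑ᶠ s, LinearMap.mul' ℂ C (LinearMap.lTensor C S (B.Δ k s a)))
        = ∑ᶠ s, B.ε (LinearMap.mul' ℂ C (LinearMap.lTensor C S (B.Δ k s a))) :=
      B.ε.toAddMonoidHom.map_finsum hfin
    rw [hmap, finsum_eq_single _ l (fun s hs => hzero s hs),
      ← key _ (B.Δ_mem' ha k l), εl_Δ B ha k l, if_pos rfl] at hL
    rw [hL, map_smul, B.ε_E, smul_eq_mul, mul_one]
  · rw [B.ε_supp k l m n h a ha,
      B.ε_supp n m l k (Ne.symm (prod_ne_swap h)) (S a) (B.S_mem_comp S hS ha)]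

end Antipode

section TMap

variable [StarRing C] [StarModule ℂ C] (S : C →ₗ[ℂ] C)

/-- the linear map `T = star ∘ S ∘ star` -/
def Tmap : C →ₗ[ℂ] C where
  toFun a := star (S (star a))
  map_add' x y := by simp [star_add, map_add]
  map_smul' c x := by simp [star_smul, map_smul]

@[simp] theorem Tmap_apply (a : C) : Tmap S a = star (S (star a)) := rfl

theorem Tmap_mem_comp (hstar : B.IsStarBialgebra) (hS : B.IsAntipode S)
    {a : C} {k l m n : I} (ha : a ∈ B.comp k l m n) : Tmap S a ∈ B.comp n m l k :=
  B.star_mem_comp hstar (B.S_mem_comp S hS (B.star_mem_comp hstar ha))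

theorem star_mul'_rTensor (z : C ⊗[ℂ] C) :
    star (LinearMap.mul' ℂ C (LinearMap.rTensor C S (starTmul z : C ⊗[ℂ] C)))
      = LinearMap.mul' ℂ C (LinearMap.lTensor C (Tmap S) ((TensorProduct.comm ℂ C C) z)) := by
  induction z using TensorProduct.induction_on with
  | zero => simp
  | tmul x y =>
    rw [starTmul_tmul, LinearMap.rTensor_tmul, LinearMap.mul'_apply, star_mul, star_star,
      TensorProduct.comm_tmul, LinearMap.lTensor_tmul, LinearMap.mul'_apply, Tmap_apply]
  | add z w hz hw => simp only [map_add, star_add, hz, hw]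

theorem star_mul'_lTensor (z : C ⊗[ℂ] C) :
    star (LinearMap.mul' ℂ C (LinearMap.lTensor C S (starTmul z : C ⊗[ℂ] C)))
      = LinearMap.mul' ℂ C (LinearMap.rTensor C (Tmap S) ((TensorProduct.comm ℂ C C) z)) := by
  induction z using TensorProduct.induction_on with
  | zero => simp
  | tmul x y =>
    rw [starTmul_tmul, LinearMap.lTensor_tmul, LinearMap.mul'_apply, star_mul, star_star,
      TensorProduct.comm_tmul, LinearMap.rTensor_tmul, LinearMap.mul'_apply, Tmap_apply]
  | add z w hz hw => simp only [map_add, star_add, hz, hw]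

/-- `Σ a₍₂₎ T(a₍₁₎) = ε(a) E s m` (the "cop-R" identity). -/
theorem cop_R (hstar : B.IsStarBialgebra) (hS : B.IsAntipode S)
    {a : C} {k l m n : I} (ha : a ∈ B.comp k l m n) (s : I) :
    ∑ᶠ r, LinearMap.mul' ℂ C (LinearMap.lTensor C (Tmap S)
        ((TensorProduct.comm ℂ C C) (B.Δ s r a)))
      = B.ε a • B.E s m := by
  have h1 := B.antipode_sum_R S hS (B.star_mem_comp hstar ha) s
  have h2 : ∀ r : I, B.Δ r s (star a) = (starTmul (B.Δ s r a) : C ⊗[ℂ] C) := fun r =>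
    hstar.2 s r a
  simp only [h2] at h1
  have hfin : (Function.support fun r => LinearMap.mul' ℂ C (LinearMap.rTensor C S
      (starTmul (B.Δ s r a) : C ⊗[ℂ] C))).Finite :=
    B.supp_row (fun r z => LinearMap.mul' ℂ C (LinearMap.rTensor C S
      (starTmul z : C ⊗[ℂ] C))) (by simp) a s
  have h3 : star (∑ᶠ r, LinearMap.mul' ℂ C (LinearMap.rTensor C S
        (starTmul (B.Δ s r a) : C ⊗[ℂ] C)))
      = ∑ᶠ r, star (LinearMap.mul' ℂ C (LinearMap.rTensor C S
        (starTmul (B.Δ s r a) : C ⊗[ℂ] C))) :=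
    (starAddEquiv : C ≃+ C).toAddMonoidHom.map_finsum hfin
  rw [h1] at h3
  calc ∑ᶠ r, LinearMap.mul' ℂ C (LinearMap.lTensor C (Tmap S)
        ((TensorProduct.comm ℂ C C) (B.Δ s r a)))
      = ∑ᶠ r, star (LinearMap.mul' ℂ C (LinearMap.rTensor C S
          (starTmul (B.Δ s r a) : C ⊗[ℂ] C))) :=
        finsum_congr fun r => (star_mul'_rTensor S (B.Δ s r a)).symm
    _ = star (B.ε (star a) • B.E s m) := h3.symm
    _ = B.ε a • B.E s m := by
        rw [star_smul, B.eps_star hstar, hstar.1, starRingEnd_apply, star_star]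

/-- `Σ T(a₍₂₎) a₍₁₎ = ε(a) E l r` (the "cop-L" identity). -/
theorem cop_L (hstar : B.IsStarBialgebra) (hS : B.IsAntipode S)
    {a : C} {k l m n : I} (ha : a ∈ B.comp k l m n) (r : I) :
    ∑ᶠ s, LinearMap.mul' ℂ C (LinearMap.rTensor C (Tmap S)
        ((TensorProduct.comm ℂ C C) (B.Δ s r a)))
      = B.ε a • B.E l r := by
  have h1 := B.antipode_sum_L S hS (B.star_mem_comp hstar ha) r
  have h2 : ∀ s : I, B.Δ r s (star a) = (starTmul (B.Δ s r a) : C ⊗[ℂ] C) := fun s =>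
    hstar.2 s r a
  simp only [h2] at h1
  have hfin : (Function.support fun s => LinearMap.mul' ℂ C (LinearMap.lTensor C S
      (starTmul (B.Δ s r a) : C ⊗[ℂ] C))).Finite :=
    B.supp_col (fun s z => LinearMap.mul' ℂ C (LinearMap.lTensor C S
      (starTmul z : C ⊗[ℂ] C))) (by simp) a r
  have h3 : star (∑ᶠ s, LinearMap.mul' ℂ C (LinearMap.lTensor C S
        (starTmul (B.Δ s r a) : C ⊗[ℂ] C)))
      = ∑ᶠ s, star (LinearMap.mul' ℂ C (LinearMap.lTensor C S
        (starTmul (B.Δ s r a) : C ⊗[ℂ] C))) :=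
    (starAddEquiv : C ≃+ C).toAddMonoidHom.map_finsum hfin
  rw [h1] at h3
  calc ∑ᶠ s, LinearMap.mul' ℂ C (LinearMap.rTensor C (Tmap S)
        ((TensorProduct.comm ℂ C C) (B.Δ s r a)))
      = ∑ᶠ s, star (LinearMap.mul' ℂ C (LinearMap.lTensor C S
          (starTmul (B.Δ s r a) : C ⊗[ℂ] C))) :=
        finsum_congr fun s => (star_mul'_lTensor S (B.Δ s r a)).symm
    _ = star (B.ε (star a) • B.E l r) := h3.symm
    _ = B.ε a • B.E l r := by
        rw [star_smul, B.eps_star hstar, hstar.1, starRingEnd_apply, star_star]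

end TMap


section Anticomult

variable (S : C →ₗ[ℂ] C)

/-- `commSS S (x ⊗ y) = S y ⊗ S x` -/
def commSS : C ⊗[ℂ] C →ₗ[ℂ] C ⊗[ℂ] C :=
  (TensorProduct.comm ℂ C C).toLinearMap ∘ₗ TensorProduct.map S S

@[simp] theorem commSS_tmul (x y : C) : commSS S (x ⊗ₜ[ℂ] y) = S y ⊗ₜ[ℂ] S x := rfl

/-- the component `G_{rv} = commSS ∘ Δ_{vr}` of the candidate for `Δ ∘ S`  -/
def Gm (r v : I) : C →ₗ[ℂ] C ⊗[ℂ] C := commSS S ∘ₗ B.Δ v r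

/-- `Ψ v (x ⊗ y) = Δ_{vs}(x ⬝ S y)` -/
def Ψm (s v : I) : C ⊗[ℂ] C →ₗ[ℂ] C ⊗[ℂ] C :=
  B.Δ v s ∘ₗ LinearMap.mul' ℂ C ∘ₗ LinearMap.lTensor C S

/-- `Θ v t (x ⊗ y) = Δ_{vt}(x) ⬝ Δ_{ts}(S y)` -/
def Θm (s v t : I) : C ⊗[ℂ] C →ₗ[ℂ] C ⊗[ℂ] C :=
  LinearMap.mul' ℂ (C ⊗[ℂ] C) ∘ₗ TensorProduct.map (B.Δ v t) (B.Δ t s ∘ₗ S)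

@[simp] theorem Gm_apply (r v : I) (x : C) : Gm B S r v x = commSS S (B.Δ v r x) := rfl

@[simp] theorem Ψm_tmul (s v : I) (x y : C) :
    Ψm B S s v (x ⊗ₜ[ℂ] y) = B.Δ v s (x * S y) := rfl

@[simp] theorem Θm_tmul (s v t : I) (x y : C) :
    Θm B S s v t (x ⊗ₜ[ℂ] y) = B.Δ v t x * B.Δ t s (S y) := by
  simp only [Θm, LinearMap.comp_apply, TensorProduct.map_tmul, LinearMap.mul'_apply]

theorem Gm_mem (hS : B.IsAntipode S) {x : C} {k l w n : I} (hx : x ∈ B.comp k l w n)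
    (r v : I) : Gm B S r v x ∈ LinearMap.range (TensorProduct.map
      (B.comp n w r v).subtype (B.comp r v l k).subtype) := by
  refine tensor_ind (fun z => commSS S z ∈ LinearMap.range (TensorProduct.map
      (B.comp n w r v).subtype (B.comp r v l k).subtype))
    (by simp only [map_zero]; exact Submodule.zero_mem _)
    (fun z w' hz hw' => by
      show commSS S (z + w') ∈ _
      rw [map_add]; exact Submodule.add_mem _ hz hw') ?_
    _ (B.Δ_mem' hx v r)
  intro x' hx' y' hy'
  exact ⟨(⟨S y', B.S_mem_comp S hS hy'⟩ : B.comp n w r v) ⊗ₜ[ℂ]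
    (⟨S x', B.S_mem_comp S hS hx'⟩ : B.comp r v l k), by simp⟩

/-- right absorption: `z ⬝ (1(β,δ) ⊗ 1(δ,ζ)) = z` -/
theorem mul_unit_right {α β γ δ e f : I} :
    ∀ z ∈ LinearMap.range (TensorProduct.map (B.comp α β γ δ).subtype
      (B.comp γ δ e f).subtype), z * (B.E β δ ⊗ₜ[ℂ] B.E δ f) = z := by
  refine tensor_ind _ (zero_mul _) (fun z w hz hw => by rw [add_mul, hz, hw]) ?_
  intro x hx y hy
  rw [Algebra.TensorProduct.tmul_mul_tmul, B.mul_E_of_mem hx, B.mul_E_of_mem hy]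
  simp

/-- left absorption: `(1(α,γ) ⊗ 1(γ,e)) ⬝ z = z` -/
theorem unit_mul_left {α β γ δ e f : I} :
    ∀ z ∈ LinearMap.range (TensorProduct.map (B.comp α β γ δ).subtype
      (B.comp γ δ e f).subtype), (B.E α γ ⊗ₜ[ℂ] B.E γ e) * z = z := by
  refine tensor_ind _ (mul_zero _) (fun z w hz hw => by rw [mul_add, hz, hw]) ?_
  intro x hx y hy
  rw [Algebra.TensorProduct.tmul_mul_tmul, B.E_mul_of_mem hx, B.E_mul_of_mem hy]
  simp

theorem theta_supp (s v : I) (zz : C ⊗[ℂ] C) :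
    (Function.support fun t => Θm B S s v t zz).Finite := by
  refine supp_tensor (fun t zz => Θm B S s v t zz) (fun t => map_add _) (fun t => map_zero _)
    ?_ zz
  intro x y
  refine (B.Δ_rcf_row x v).subset fun t ht => ?_
  rw [Function.mem_support] at ht
  simp only [Set.mem_setOf_eq]
  intro h0
  exact ht (show Θm B S s v t (x ⊗ₜ[ℂ] y) = 0 by rw [Θm_tmul, h0, zero_mul])

/-- expansion of `Ψ` into the `Θ`'s (partial multiplicativity of `Δ`) -/
theorem psi_eq_sum_theta (s v : I) (zz : C ⊗[ℂ] C) :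
    Ψm B S s v zz = ∑ᶠ t, Θm B S s v t zz := by
  induction zz using TensorProduct.induction_on with
  | zero => simp only [map_zero]; rw [finsum_zero]
  | tmul x y =>
    rw [Ψm_tmul, B.Δ_mul v s x (S y)]
    exact finsum_congr fun t => (Θm_tmul B S s v t x y).symm
  | add z w hz hw =>
    rw [map_add, hz, hw, ← finsum_add_distrib (B.theta_supp S s v z) (B.theta_supp S s v w)]
    exact finsum_congr fun t => (map_add _ _ _).symm

theorem theta_supp' (s v : I) (X : C ⊗[ℂ] (C ⊗[ℂ] C)) (r : I) :
    (Function.support fun t => LinearMap.mul' ℂ (C ⊗[ℂ] C)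
      (TensorProduct.map (Gm B S r v) (Θm B S s v t) X)).Finite := by
  refine supp_tensor (fun t X => LinearMap.mul' ℂ (C ⊗[ℂ] C)
      (TensorProduct.map (Gm B S r v) (Θm B S s v t) X))
    (fun t z w => by
      show LinearMap.mul' ℂ (C ⊗[ℂ] C) (TensorProduct.map _ _ (z + w)) = _ + _
      rw [map_add, map_add])
    (fun t => by
      show LinearMap.mul' ℂ (C ⊗[ℂ] C) (TensorProduct.map _ _ (0 : C ⊗[ℂ] (C ⊗[ℂ] C))) = 0
      rw [map_zero, map_zero]) ?_ X
  intro c zz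
  refine (B.theta_supp S s v zz).subset fun t ht => ?_
  rw [Function.mem_support] at ht
  rw [Function.mem_support]
  intro h0
  refine ht ?_
  show LinearMap.mul' ℂ (C ⊗[ℂ] C) (TensorProduct.map _ _ (c ⊗ₜ[ℂ] zz)) = 0
  rw [TensorProduct.map_tmul, h0, TensorProduct.tmul_zero, map_zero]

/-- pull the `Θ`-expansion through the outer multiplication -/
theorem mul_map_psi_eq (s v r : I) (X : C ⊗[ℂ] (C ⊗[ℂ] C)) :
    LinearMap.mul' ℂ (C ⊗[ℂ] C) (TensorProduct.map (Gm B S r v) (Ψm B S s v) X)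
      = ∑ᶠ t, LinearMap.mul' ℂ (C ⊗[ℂ] C)
          (TensorProduct.map (Gm B S r v) (Θm B S s v t) X) := by
  induction X using TensorProduct.induction_on with
  | zero =>
    rw [map_zero, map_zero, finsum_eq_zero_of_forall_eq_zero fun t => by
      rw [map_zero, map_zero]]
  | tmul c zz =>
    have h := (AddMonoidHom.mulLeft (Gm B S r v c)).map_finsum (B.theta_supp S s v zz)
    simp only [AddMonoidHom.coe_mulLeft] at h
    rw [TensorProduct.map_tmul, LinearMap.mul'_apply, psi_eq_sum_theta B S s v zz, h]
    exact finsum_congr fun t => by rw [TensorProduct.map_tmul, LinearMap.mul'_apply]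
  | add z w hz hw =>
    rw [map_add, map_add, hz, hw,
      ← finsum_add_distrib (B.theta_supp' S s v z r) (B.theta_supp' S s v w r)]
    exact finsum_congr fun t => by rw [map_add, map_add]


theorem lam_supp (v t n : I) (z₆ : C ⊗[ℂ] C) :
    (Function.support fun w => LinearMap.mul' ℂ (C ⊗[ℂ] C)
      (TensorProduct.map (commSS S) (B.Δ v t)
        ((TensorProduct.assoc ℂ C C C).symm (LinearMap.lTensor C (B.Δ w n) z₆)))).Finite := by
  refine supp_tensor (fun w z₆ => LinearMap.mul' ℂ (C ⊗[ℂ] C)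
      (TensorProduct.map (commSS S) (B.Δ v t)
        ((TensorProduct.assoc ℂ C C C).symm (LinearMap.lTensor C (B.Δ w n) z₆))))
    (fun w z₁ z₂ => by
      show LinearMap.mul' ℂ (C ⊗[ℂ] C) (TensorProduct.map _ _
        ((TensorProduct.assoc ℂ C C C).symm (LinearMap.lTensor C (B.Δ w n) (z₁ + z₂)))) = _ + _
      rw [map_add, map_add, map_add, map_add])
    (fun w => by
      show LinearMap.mul' ℂ (C ⊗[ℂ] C) (TensorProduct.map _ _
        ((TensorProduct.assoc ℂ C C C).symm
          (LinearMap.lTensor C (B.Δ w n) (0 : C ⊗[ℂ] C)))) = 0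
      rw [map_zero, map_zero, map_zero, map_zero]) ?_ z₆
  intro e₁ f
  refine (B.Δ_rcf_col f n).subset fun w hw => ?_
  rw [Function.mem_support] at hw
  simp only [Set.mem_setOf_eq]
  intro h0
  refine hw ?_
  show LinearMap.mul' ℂ (C ⊗[ℂ] C) (TensorProduct.map _ _
    ((TensorProduct.assoc ℂ C C C).symm (LinearMap.lTensor C (B.Δ w n) (e₁ ⊗ₜ[ℂ] f)))) = 0
  rw [LinearMap.lTensor_tmul, h0, TensorProduct.tmul_zero, map_zero, map_zero, map_zero]

/-- the key four-leg computation: `Σ_w G_{rv}(c₁⁽¹⁾) Δ_{vt}(c₁⁽²⁾) = δ_{t,r} 1(n,t) ⊗ S(c₁⁽¹⁾)c₁⁽²⁾`. -/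
theorem sum_w_K (hS : B.IsAntipode S) {c₁ : C} {k l u : I} (hc₁ : c₁ ∈ B.comp k l k u)
    (n r v t : I) :
    ∑ᶠ w, LinearMap.mul' ℂ (C ⊗[ℂ] C)
        (TensorProduct.map (Gm B S r v) (B.Δ v t) (B.Δ w n c₁))
      = if t = r then
          (B.E n t) ⊗ₜ[ℂ] (LinearMap.mul' ℂ C (LinearMap.rTensor C S (B.Δ v r c₁)))
        else 0 := by
  have hrw : ∀ w, TensorProduct.map (Gm B S r v) (B.Δ v t) (B.Δ w n c₁)
      = TensorProduct.map (commSS S) (B.Δ v t)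
          ((TensorProduct.assoc ℂ C C C).symm (LinearMap.lTensor C (B.Δ w n)
            (B.Δ v r c₁))) := by
    intro w
    have h1 : TensorProduct.map (Gm B S r v) (B.Δ v t)
        = TensorProduct.map (commSS S) (B.Δ v t) ∘ₗ LinearMap.rTensor C (B.Δ v r) := by
      apply TensorProduct.ext'
      intro x y
      simp only [TensorProduct.map_tmul, LinearMap.comp_apply, LinearMap.rTensor_tmul,
        Gm_apply]
    have h2 : LinearMap.rTensor C (B.Δ v r) (B.Δ w n c₁)
        = (TensorProduct.assoc ℂ C C C).symm (LinearMap.lTensor C (B.Δ w n)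
            (B.Δ v r c₁)) := by
      rw [← B.coassoc v r w n c₁, LinearEquiv.symm_apply_apply]
    rw [h1, LinearMap.comp_apply, h2]
  simp only [hrw]
  refine tensor_ind (fun z₆ => ∑ᶠ w, LinearMap.mul' ℂ (C ⊗[ℂ] C)
      (TensorProduct.map (commSS S) (B.Δ v t)
        ((TensorProduct.assoc ℂ C C C).symm (LinearMap.lTensor C (B.Δ w n) z₆)))
      = if t = r then
          (B.E n t) ⊗ₜ[ℂ] (LinearMap.mul' ℂ C (LinearMap.rTensor C S z₆))
        else 0) ?_ ?_ ?_ _ (B.Δ_mem' hc₁ v r)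
  · beta_reduce
    rw [finsum_eq_zero_of_forall_eq_zero fun w => by
      rw [map_zero, map_zero, map_zero, map_zero]]
    simp
  · intro z₁ z₂ h₁ h₂
    beta_reduce at h₁ h₂ ⊢
    have hdist : (fun w => LinearMap.mul' ℂ (C ⊗[ℂ] C) (TensorProduct.map (commSS S) (B.Δ v t)
        ((TensorProduct.assoc ℂ C C C).symm (LinearMap.lTensor C (B.Δ w n) (z₁ + z₂)))))
        = fun w => LinearMap.mul' ℂ (C ⊗[ℂ] C) (TensorProduct.map (commSS S) (B.Δ v t)
            ((TensorProduct.assoc ℂ C C C).symm (LinearMap.lTensor C (B.Δ w n) z₁)))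
          + LinearMap.mul' ℂ (C ⊗[ℂ] C) (TensorProduct.map (commSS S) (B.Δ v t)
            ((TensorProduct.assoc ℂ C C C).symm (LinearMap.lTensor C (B.Δ w n) z₂))) := by
      funext w
      rw [map_add, map_add, map_add, map_add]
    rw [hdist, finsum_add_distrib (B.lam_supp S v t n z₁) (B.lam_supp S v t n z₂), h₁, h₂]
    by_cases htr : t = r
    · simp only [htr, if_true, map_add, TensorProduct.tmul_add]
    · simp only [if_neg htr, add_zero]
  · intro e₁ he₁ f hf
    beta_reduce
    -- the auxiliary map `M`
    set M : C ⊗[ℂ] (C ⊗[ℂ] C) →ₗ[ℂ] C ⊗[ℂ] C :=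
      (TensorProduct.map ((LinearMap.mul' ℂ C) ∘ₗ LinearMap.rTensor C S)
        (LinearMap.mulLeft ℂ (S e₁))) ∘ₗ (TensorProduct.assoc ℂ C C C).symm.toLinearMap
      with hM
    have E4 : ∀ z₇ : C ⊗[ℂ] C,
        LinearMap.mul' ℂ (C ⊗[ℂ] C) (TensorProduct.map (commSS S) (B.Δ v t)
          ((TensorProduct.assoc ℂ C C C).symm (e₁ ⊗ₜ[ℂ] z₇)))
        = M (LinearMap.lTensor C (B.Δ v t) z₇) := by
      intro z₇
      induction z₇ using TensorProduct.induction_on with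
      | zero => rw [TensorProduct.tmul_zero, map_zero, map_zero, map_zero, map_zero, map_zero]
      | tmul F₁ F₂ =>
        rw [TensorProduct.assoc_symm_tmul, TensorProduct.map_tmul, commSS_tmul,
          LinearMap.mul'_apply, LinearMap.lTensor_tmul]
        generalize B.Δ v t F₂ = q
        induction q using TensorProduct.induction_on with
        | zero => rw [mul_zero, TensorProduct.tmul_zero, map_zero]
        | tmul g₁ g₂ =>
          rw [Algebra.TensorProduct.tmul_mul_tmul, hM, LinearMap.comp_apply,
            LinearEquiv.coe_toLinearMap, TensorProduct.assoc_symm_tmul,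
            TensorProduct.map_tmul, LinearMap.comp_apply, LinearMap.rTensor_tmul,
            LinearMap.mul'_apply, LinearMap.mulLeft_apply]
        | add q₁ q₂ hq₁ hq₂ =>
          rw [mul_add, TensorProduct.tmul_add, map_add, hq₁, hq₂]
      | add z₁ z₂ h₁ h₂ =>
        rw [TensorProduct.tmul_add, map_add, map_add, map_add, map_add, map_add, h₁, h₂]
    have hco : ∀ w, LinearMap.lTensor C (B.Δ v t) (B.Δ w n f)
        = (TensorProduct.assoc ℂ C C C) (LinearMap.rTensor C (B.Δ w n) (B.Δ v t f)) :=
      fun w => (B.coassoc w n v t f).symm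
    have main : ∀ z₈ ∈ LinearMap.range (TensorProduct.map (B.comp v r v t).subtype
        (B.comp v t k u).subtype),
        ∑ᶠ w, M ((TensorProduct.assoc ℂ C C C) (LinearMap.rTensor C (B.Δ w n) z₈))
          = (B.E n t) ⊗ₜ[ℂ] (S e₁ * B.εl z₈) := by
      refine tensor_ind _ ?_ ?_ ?_
      · beta_reduce
        rw [finsum_eq_zero_of_forall_eq_zero fun w => by
          rw [map_zero, map_zero, map_zero]]
        rw [map_zero, mul_zero, TensorProduct.tmul_zero]
      · intro z₁ z₂ h₁ h₂
        beta_reduce at h₁ h₂ ⊢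
        have hsupp : ∀ z₈ : C ⊗[ℂ] C, (Function.support fun w =>
            M ((TensorProduct.assoc ℂ C C C) (LinearMap.rTensor C (B.Δ w n) z₈))).Finite := by
          intro z₈
          refine supp_tensor (fun w z₈ =>
            M ((TensorProduct.assoc ℂ C C C) (LinearMap.rTensor C (B.Δ w n) z₈)))
            (fun w z₁ z₂ => by
              show M ((TensorProduct.assoc ℂ C C C)
                (LinearMap.rTensor C (B.Δ w n) (z₁ + z₂))) = _ + _
              rw [map_add, map_add, map_add])
            (fun w => by
              show M ((TensorProduct.assoc ℂ C C C)
                (LinearMap.rTensor C (B.Δ w n) (0 : C ⊗[ℂ] C))) = 0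
              rw [map_zero, map_zero, map_zero]) ?_ z₈
          intro f₁ f₂
          refine (B.Δ_rcf_col f₁ n).subset fun w hw => ?_
          rw [Function.mem_support] at hw
          simp only [Set.mem_setOf_eq]
          intro h0
          refine hw ?_
          show M ((TensorProduct.assoc ℂ C C C)
            (LinearMap.rTensor C (B.Δ w n) (f₁ ⊗ₜ[ℂ] f₂))) = 0
          rw [LinearMap.rTensor_tmul, h0, TensorProduct.zero_tmul, map_zero, map_zero]
        have hdist : (fun w => M ((TensorProduct.assoc ℂ C C C)
            (LinearMap.rTensor C (B.Δ w n) (z₁ + z₂))))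
            = fun w => M ((TensorProduct.assoc ℂ C C C)
                (LinearMap.rTensor C (B.Δ w n) z₁))
              + M ((TensorProduct.assoc ℂ C C C)
                (LinearMap.rTensor C (B.Δ w n) z₂)) := by
          funext w
          rw [map_add, map_add, map_add]
        rw [hdist, finsum_add_distrib (hsupp z₁) (hsupp z₂), h₁, h₂, map_add, mul_add,
          TensorProduct.tmul_add]
      · intro f₁ hf₁ f₂ hf₂
        beta_reduce
        have E5 : ∀ z₉ : C ⊗[ℂ] C, M ((TensorProduct.assoc ℂ C C C) (z₉ ⊗ₜ[ℂ] f₂))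
            = (LinearMap.mul' ℂ C (LinearMap.rTensor C S z₉)) ⊗ₜ[ℂ] (S e₁ * f₂) := by
          intro z₉
          induction z₉ using TensorProduct.induction_on with
          | zero => simp
          | tmul F₁ F₂' =>
            rw [TensorProduct.assoc_tmul, hM]
            simp only [LinearMap.comp_apply, LinearEquiv.coe_toLinearMap,
              TensorProduct.assoc_symm_tmul, TensorProduct.map_tmul,
              LinearMap.rTensor_tmul, LinearMap.mul'_apply, LinearMap.mulLeft_apply]
          | add z₁ z₂ h₁ h₂ =>
            rw [TensorProduct.add_tmul, map_add, map_add, h₁, h₂, map_add, map_add,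
              TensorProduct.add_tmul]
        have hstep : (fun w => M ((TensorProduct.assoc ℂ C C C)
            (LinearMap.rTensor C (B.Δ w n) (f₁ ⊗ₜ[ℂ] f₂))))
            = fun w => (LinearMap.mul' ℂ C (LinearMap.rTensor C S (B.Δ w n f₁)))
                ⊗ₜ[ℂ] (S e₁ * f₂) := by
          funext w
          rw [LinearMap.rTensor_tmul, E5]
        rw [hstep]
        have hsuppw : (Function.support fun w =>
            LinearMap.mul' ℂ C (LinearMap.rTensor C S (B.Δ w n f₁))).Finite :=
          B.supp_col (fun w z => LinearMap.mul' ℂ C (LinearMap.rTensor C S z))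
            (by simp) f₁ n
        have hpull : ∑ᶠ w, (LinearMap.mul' ℂ C (LinearMap.rTensor C S (B.Δ w n f₁)))
            ⊗ₜ[ℂ] (S e₁ * f₂)
            = (∑ᶠ w, LinearMap.mul' ℂ C (LinearMap.rTensor C S (B.Δ w n f₁)))
              ⊗ₜ[ℂ] (S e₁ * f₂) :=
          (((TensorProduct.mk ℂ C C).flip (S e₁ * f₂)).toAddMonoidHom.map_finsum
            hsuppw).symm
        rw [hpull, B.antipode_sum_R S hS hf₁ n, εl_tmul, ← TensorProduct.smul_tmul',
          mul_smul_comm, TensorProduct.tmul_smul]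
    -- assemble the tmul case
    calc ∑ᶠ w, LinearMap.mul' ℂ (C ⊗[ℂ] C) (TensorProduct.map (commSS S) (B.Δ v t)
          ((TensorProduct.assoc ℂ C C C).symm (LinearMap.lTensor C (B.Δ w n)
            (e₁ ⊗ₜ[ℂ] f))))
        = ∑ᶠ w, M ((TensorProduct.assoc ℂ C C C)
            (LinearMap.rTensor C (B.Δ w n) (B.Δ v t f))) :=
          finsum_congr fun w => by rw [LinearMap.lTensor_tmul, E4, hco]
      _ = (B.E n t) ⊗ₜ[ℂ] (S e₁ * B.εl (B.Δ v t f)) := main _ (B.Δ_mem' hf v t)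
      _ = if t = r then (B.E n t) ⊗ₜ[ℂ]
            (LinearMap.mul' ℂ C (LinearMap.rTensor C S (e₁ ⊗ₜ[ℂ] f))) else 0 := by
          rw [εl_Δ B hf v t]
          by_cases htr : t = r
          · rw [if_pos (by rw [htr]), if_pos htr, LinearMap.rTensor_tmul,
              LinearMap.mul'_apply]
          · rw [if_neg (fun he => htr (by rw [Prod.ext_iff] at he; exact he.2)),
              if_neg htr, mul_zero, TensorProduct.tmul_zero]


theorem gm_supp (r : I) (H : I → C ⊗[ℂ] C →ₗ[ℂ] C ⊗[ℂ] C) (X : C ⊗[ℂ] (C ⊗[ℂ] C)) :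
    (Function.support fun v => LinearMap.mul' ℂ (C ⊗[ℂ] C)
      (TensorProduct.map (Gm B S r v) (H v) X)).Finite := by
  refine supp_tensor (fun v X => LinearMap.mul' ℂ (C ⊗[ℂ] C)
      (TensorProduct.map (Gm B S r v) (H v) X))
    (fun v z₁ z₂ => by
      show LinearMap.mul' ℂ (C ⊗[ℂ] C) (TensorProduct.map _ _ (z₁ + z₂)) = _ + _
      rw [map_add, map_add])
    (fun v => by
      show LinearMap.mul' ℂ (C ⊗[ℂ] C)
        (TensorProduct.map _ _ (0 : C ⊗[ℂ] (C ⊗[ℂ] C))) = 0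
      rw [map_zero, map_zero]) ?_ X
  intro c zz
  refine (B.Δ_rcf_col c r).subset fun v hv => ?_
  rw [Function.mem_support] at hv
  simp only [Set.mem_setOf_eq]
  intro h0
  refine hv ?_
  show LinearMap.mul' ℂ (C ⊗[ℂ] C) (TensorProduct.map _ _ (c ⊗ₜ[ℂ] zz)) = 0
  rw [TensorProduct.map_tmul]
  show LinearMap.mul' ℂ (C ⊗[ℂ] C) ((commSS S (B.Δ v r c)) ⊗ₜ[ℂ] _) = 0
  rw [h0, map_zero, TensorProduct.zero_tmul, map_zero]

theorem E1 (r s v t : I) (c₂ : C) (z : C ⊗[ℂ] C) :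
    LinearMap.mul' ℂ (C ⊗[ℂ] C) (TensorProduct.map (Gm B S r v) (Θm B S s v t)
      ((TensorProduct.assoc ℂ C C C) (z ⊗ₜ[ℂ] c₂)))
    = LinearMap.mul' ℂ (C ⊗[ℂ] C) (TensorProduct.map (Gm B S r v) (B.Δ v t) z)
        * (B.Δ t s (S c₂)) := by
  induction z using TensorProduct.induction_on with
  | zero => rw [TensorProduct.zero_tmul, map_zero, map_zero, map_zero, map_zero, map_zero,
      zero_mul]
  | tmul d₁ d₂ =>
    rw [TensorProduct.assoc_tmul, TensorProduct.map_tmul, TensorProduct.map_tmul,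
      LinearMap.mul'_apply, LinearMap.mul'_apply, Θm_tmul, mul_assoc]
  | add z₁ z₂ h₁ h₂ =>
    rw [TensorProduct.add_tmul, map_add, map_add, map_add, map_add, map_add, h₁, h₂,
      add_mul]

theorem Kt_supp (r s v : I) (c₂ : C) (z : C ⊗[ℂ] C) :
    (Function.support fun t => LinearMap.mul' ℂ (C ⊗[ℂ] C)
      (TensorProduct.map (Gm B S r v) (B.Δ v t) z) * (B.Δ t s (S c₂))).Finite := by
  refine supp_tensor (fun t z => LinearMap.mul' ℂ (C ⊗[ℂ] C)
      (TensorProduct.map (Gm B S r v) (B.Δ v t) z) * (B.Δ t s (S c₂)))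
    (fun t z₁ z₂ => by
      show LinearMap.mul' ℂ (C ⊗[ℂ] C) (TensorProduct.map _ _ (z₁ + z₂)) * _ = _ + _
      rw [map_add, map_add, add_mul])
    (fun t => by
      show LinearMap.mul' ℂ (C ⊗[ℂ] C) (TensorProduct.map _ _ (0 : C ⊗[ℂ] C)) * _ = 0
      rw [map_zero, map_zero, zero_mul]) ?_ z
  intro d₁ d₂
  refine (B.Δ_rcf_row d₂ v).subset fun t ht => ?_
  rw [Function.mem_support] at ht
  simp only [Set.mem_setOf_eq]
  intro h0
  refine ht ?_
  show LinearMap.mul' ℂ (C ⊗[ℂ] C) (TensorProduct.map _ _ (d₁ ⊗ₜ[ℂ] d₂)) * _ = 0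
  rw [TensorProduct.map_tmul, h0, TensorProduct.tmul_zero, map_zero, zero_mul]

theorem Kv_supp (r s : I) (c₂ : C) (z : C ⊗[ℂ] C) :
    (Function.support fun v => ∑ᶠ t, LinearMap.mul' ℂ (C ⊗[ℂ] C)
      (TensorProduct.map (Gm B S r v) (B.Δ v t) z) * (B.Δ t s (S c₂))).Finite := by
  refine supp_tensor (fun v z => ∑ᶠ t, LinearMap.mul' ℂ (C ⊗[ℂ] C)
      (TensorProduct.map (Gm B S r v) (B.Δ v t) z) * (B.Δ t s (S c₂)))
    (fun v z₁ z₂ => by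
      have : (fun t => LinearMap.mul' ℂ (C ⊗[ℂ] C)
          (TensorProduct.map (Gm B S r v) (B.Δ v t) (z₁ + z₂)) * (B.Δ t s (S c₂)))
          = fun t => LinearMap.mul' ℂ (C ⊗[ℂ] C)
              (TensorProduct.map (Gm B S r v) (B.Δ v t) z₁) * (B.Δ t s (S c₂))
            + LinearMap.mul' ℂ (C ⊗[ℂ] C)
              (TensorProduct.map (Gm B S r v) (B.Δ v t) z₂) * (B.Δ t s (S c₂)) := by
        funext t
        rw [map_add, map_add, add_mul]
      show ∑ᶠ t, _ = _
      rw [this, finsum_add_distrib (B.Kt_supp S r s v c₂ z₁) (B.Kt_supp S r s v c₂ z₂)]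
    )
    (fun v => by
      show ∑ᶠ t, LinearMap.mul' ℂ (C ⊗[ℂ] C)
        (TensorProduct.map (Gm B S r v) (B.Δ v t) (0 : C ⊗[ℂ] C)) * (B.Δ t s (S c₂)) = 0
      rw [finsum_eq_zero_of_forall_eq_zero fun t => by rw [map_zero, map_zero, zero_mul]])
    ?_ z
  intro d₁ d₂
  refine (B.Δ_rcf_col d₁ r).subset fun v hv => ?_
  rw [Function.mem_support] at hv
  simp only [Set.mem_setOf_eq]
  intro h0
  refine hv ?_
  show ∑ᶠ t, LinearMap.mul' ℂ (C ⊗[ℂ] C)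
    (TensorProduct.map (Gm B S r v) (B.Δ v t) (d₁ ⊗ₜ[ℂ] d₂)) * (B.Δ t s (S c₂)) = 0
  refine finsum_eq_zero_of_forall_eq_zero fun t => ?_
  rw [TensorProduct.map_tmul]
  show LinearMap.mul' ℂ (C ⊗[ℂ] C) ((commSS S (B.Δ v r d₁)) ⊗ₜ[ℂ] _) * _ = 0
  rw [h0, map_zero, TensorProduct.zero_tmul, map_zero, zero_mul]

/-- convolving the antipode-flip candidate against `Δ` gives the counit (claim B) -/
theorem claimB (hS : B.IsAntipode S) (k l u m n r s : I) :
    ∀ z ∈ LinearMap.range (TensorProduct.map (B.comp k l k u).subtype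
      (B.comp k u m n).subtype),
    ∑ᶠ w, ∑ᶠ v, LinearMap.mul' ℂ (C ⊗[ℂ] C) (TensorProduct.map (Gm B S r v) (Ψm B S s v)
        ((TensorProduct.assoc ℂ C C C) (LinearMap.rTensor C (B.Δ w n) z)))
      = B.Δ r s (S (B.εl z)) := by
  have hsuppv : ∀ (w : I) (z : C ⊗[ℂ] C), (Function.support fun v =>
      LinearMap.mul' ℂ (C ⊗[ℂ] C) (TensorProduct.map (Gm B S r v) (Ψm B S s v)
        ((TensorProduct.assoc ℂ C C C) (LinearMap.rTensor C (B.Δ w n) z)))).Finite :=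
    fun w z => B.gm_supp S r (fun v => Ψm B S s v) _
  have hF0 : ∀ (w : I), ∑ᶠ v,
      LinearMap.mul' ℂ (C ⊗[ℂ] C) (TensorProduct.map (Gm B S r v) (Ψm B S s v)
        ((TensorProduct.assoc ℂ C C C) (LinearMap.rTensor C (B.Δ w n) (0 : C ⊗[ℂ] C))))
        = 0 := by
    intro w
    rw [finsum_eq_zero_of_forall_eq_zero fun v => by
      rw [map_zero, map_zero, map_zero, map_zero]]
  have hFadd : ∀ (w : I) (z₁ z₂ : C ⊗[ℂ] C),
      (∑ᶠ v, LinearMap.mul' ℂ (C ⊗[ℂ] C) (TensorProduct.map (Gm B S r v) (Ψm B S s v)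
        ((TensorProduct.assoc ℂ C C C) (LinearMap.rTensor C (B.Δ w n) (z₁ + z₂)))))
      = (∑ᶠ v, LinearMap.mul' ℂ (C ⊗[ℂ] C) (TensorProduct.map (Gm B S r v) (Ψm B S s v)
          ((TensorProduct.assoc ℂ C C C) (LinearMap.rTensor C (B.Δ w n) z₁))))
        + (∑ᶠ v, LinearMap.mul' ℂ (C ⊗[ℂ] C) (TensorProduct.map (Gm B S r v) (Ψm B S s v)
          ((TensorProduct.assoc ℂ C C C) (LinearMap.rTensor C (B.Δ w n) z₂)))) := by
    intro w z₁ z₂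
    rw [← finsum_add_distrib (hsuppv w z₁) (hsuppv w z₂)]
    exact finsum_congr fun v => by rw [map_add, map_add, map_add, map_add]
  have hsuppw : ∀ z : C ⊗[ℂ] C, (Function.support fun w => ∑ᶠ v,
      LinearMap.mul' ℂ (C ⊗[ℂ] C) (TensorProduct.map (Gm B S r v) (Ψm B S s v)
        ((TensorProduct.assoc ℂ C C C) (LinearMap.rTensor C (B.Δ w n) z)))).Finite := by
    intro z
    refine supp_tensor (fun w z => ∑ᶠ v,
      LinearMap.mul' ℂ (C ⊗[ℂ] C) (TensorProduct.map (Gm B S r v) (Ψm B S s v)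
        ((TensorProduct.assoc ℂ C C C) (LinearMap.rTensor C (B.Δ w n) z))))
      (fun w z₁ z₂ => hFadd w z₁ z₂) (fun w => hF0 w) ?_ z
    intro c₁ c₂
    refine (B.Δ_rcf_col c₁ n).subset fun w hw => ?_
    rw [Function.mem_support] at hw
    simp only [Set.mem_setOf_eq]
    intro h0
    refine hw ?_
    show ∑ᶠ v, LinearMap.mul' ℂ (C ⊗[ℂ] C) (TensorProduct.map (Gm B S r v) (Ψm B S s v)
      ((TensorProduct.assoc ℂ C C C) (LinearMap.rTensor C (B.Δ w n) (c₁ ⊗ₜ[ℂ] c₂)))) = 0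
    refine finsum_eq_zero_of_forall_eq_zero fun v => ?_
    rw [LinearMap.rTensor_tmul, h0, TensorProduct.zero_tmul, map_zero, map_zero, map_zero]
  refine tensor_ind _ ?_ ?_ ?_
  · beta_reduce
    rw [finsum_eq_zero_of_forall_eq_zero fun w => hF0 w, map_zero, map_zero, map_zero]
  · intro z₁ z₂ h₁ h₂
    beta_reduce at h₁ h₂ ⊢
    have : (fun w => ∑ᶠ v, LinearMap.mul' ℂ (C ⊗[ℂ] C)
        (TensorProduct.map (Gm B S r v) (Ψm B S s v)
          ((TensorProduct.assoc ℂ C C C) (LinearMap.rTensor C (B.Δ w n) (z₁ + z₂)))))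
        = fun w => (∑ᶠ v, LinearMap.mul' ℂ (C ⊗[ℂ] C)
            (TensorProduct.map (Gm B S r v) (Ψm B S s v)
              ((TensorProduct.assoc ℂ C C C) (LinearMap.rTensor C (B.Δ w n) z₁))))
          + (∑ᶠ v, LinearMap.mul' ℂ (C ⊗[ℂ] C)
            (TensorProduct.map (Gm B S r v) (Ψm B S s v)
              ((TensorProduct.assoc ℂ C C C) (LinearMap.rTensor C (B.Δ w n) z₂)))) :=
      funext fun w => hFadd w z₁ z₂
    rw [this, finsum_add_distrib (hsuppw z₁) (hsuppw z₂), h₁, h₂, map_add, map_add,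
      map_add]
  · intro c₁ hc₁ c₂ hc₂
    beta_reduce
    -- expand Ψ into Θ and use E1
    have hstep1 : ∀ w, (fun v => LinearMap.mul' ℂ (C ⊗[ℂ] C)
        (TensorProduct.map (Gm B S r v) (Ψm B S s v)
          ((TensorProduct.assoc ℂ C C C) (LinearMap.rTensor C (B.Δ w n) (c₁ ⊗ₜ[ℂ] c₂)))))
        = fun v => ∑ᶠ t, LinearMap.mul' ℂ (C ⊗[ℂ] C)
            (TensorProduct.map (Gm B S r v) (B.Δ v t) (B.Δ w n c₁)) * (B.Δ t s (S c₂)) := by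
      intro w
      funext v
      rw [LinearMap.rTensor_tmul, mul_map_psi_eq]
      exact finsum_congr fun t => B.E1 S r s v t c₂ (B.Δ w n c₁)
    simp only [hstep1]
    -- swap w to the innermost position
    have hswap1 : ∑ᶠ w, ∑ᶠ v, ∑ᶠ t, LinearMap.mul' ℂ (C ⊗[ℂ] C)
        (TensorProduct.map (Gm B S r v) (B.Δ v t) (B.Δ w n c₁)) * (B.Δ t s (S c₂))
        = ∑ᶠ v, ∑ᶠ w, ∑ᶠ t, LinearMap.mul' ℂ (C ⊗[ℂ] C)
            (TensorProduct.map (Gm B S r v) (B.Δ v t) (B.Δ w n c₁)) * (B.Δ t s (S c₂)) := by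
      refine finsum_swap _ (B.Δ_rcf_col c₁ n) ?_ ?_
      · intro v
        intro w hw
        rw [Function.mem_support] at hw
        simp only [Set.mem_setOf_eq]
        intro h0
        refine hw ?_
        rw [finsum_eq_zero_of_forall_eq_zero fun t => by
          rw [h0, map_zero, map_zero, zero_mul]]
      · exact fun w => B.Kv_supp S r s c₂ (B.Δ w n c₁)
    have hswap2 : ∀ v, ∑ᶠ w, ∑ᶠ t, LinearMap.mul' ℂ (C ⊗[ℂ] C)
        (TensorProduct.map (Gm B S r v) (B.Δ v t) (B.Δ w n c₁)) * (B.Δ t s (S c₂))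
        = ∑ᶠ t, ∑ᶠ w, LinearMap.mul' ℂ (C ⊗[ℂ] C)
            (TensorProduct.map (Gm B S r v) (B.Δ v t) (B.Δ w n c₁)) * (B.Δ t s (S c₂)) := by
      intro v
      refine finsum_swap _ (B.Δ_rcf_col c₁ n) ?_ ?_
      · intro t
        intro w hw
        rw [Function.mem_support] at hw
        simp only [Set.mem_setOf_eq]
        intro h0
        exact hw (by rw [h0, map_zero, map_zero, zero_mul])
      · exact fun w => B.Kt_supp S r s v c₂ (B.Δ w n c₁)
    rw [hswap1]
    have hinner : ∀ v, ∑ᶠ t, ∑ᶠ w, LinearMap.mul' ℂ (C ⊗[ℂ] C)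
        (TensorProduct.map (Gm B S r v) (B.Δ v t) (B.Δ w n c₁)) * (B.Δ t s (S c₂))
        = ((B.E n r) ⊗ₜ[ℂ] (LinearMap.mul' ℂ C (LinearMap.rTensor C S (B.Δ v r c₁))))
            * (B.Δ r s (S c₂)) := by
      intro v
      have hsw : ∀ t, (Function.support fun w => LinearMap.mul' ℂ (C ⊗[ℂ] C)
          (TensorProduct.map (Gm B S r v) (B.Δ v t) (B.Δ w n c₁))).Finite := by
        intro t
        refine (B.Δ_rcf_col c₁ n).subset fun w hw => ?_
        rw [Function.mem_support] at hw
        simp only [Set.mem_setOf_eq]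
        intro h0
        exact hw (by rw [h0, map_zero, map_zero])
      have hterm : ∀ t, ∑ᶠ w, LinearMap.mul' ℂ (C ⊗[ℂ] C)
          (TensorProduct.map (Gm B S r v) (B.Δ v t) (B.Δ w n c₁)) * (B.Δ t s (S c₂))
          = (if t = r then (B.E n t) ⊗ₜ[ℂ]
              (LinearMap.mul' ℂ C (LinearMap.rTensor C S (B.Δ v r c₁))) else 0)
            * (B.Δ t s (S c₂)) := by
        intro t
        have hp := (AddMonoidHom.mulRight (B.Δ t s (S c₂))).map_finsum (hsw t)
        simp only [AddMonoidHom.mulRight_apply] at hp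
        rw [← hp, B.sum_w_K S hS hc₁ n r v t]
      rw [finsum_congr hterm,
        finsum_eq_single _ r (fun t ht => by rw [if_neg ht, zero_mul]), if_pos rfl]
    rw [finsum_congr fun v => (hswap2 v).trans (hinner v)]
    have hvs : (Function.support fun v =>
        LinearMap.mul' ℂ C (LinearMap.rTensor C S (B.Δ v r c₁))).Finite :=
      B.supp_col (fun v z => LinearMap.mul' ℂ C (LinearMap.rTensor C S z)) (by simp) c₁ r
    have hAM := (((AddMonoidHom.mulRight (B.Δ r s (S c₂))).comp
        (TensorProduct.mk ℂ C C (B.E n r)).toAddMonoidHom)).map_finsum hvs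
    simp only [AddMonoidHom.coe_comp, Function.comp_apply, AddMonoidHom.mulRight_apply,
      LinearMap.toAddMonoidHom_coe, TensorProduct.mk_apply] at hAM
    rw [← hAM, B.antipode_sum_R S hS hc₁ r, εl_tmul, map_smul, map_smul,
      TensorProduct.tmul_smul, smul_mul_assoc,
      B.unit_mul_left _ (B.Δ_mem' (B.S_mem_comp S hS hc₂) r s)]


/-- eval (i): the master sum collapses to `G` (claim A) -/
theorem claimA (hS : B.IsAntipode S) (k l w n m r s : I) :
    ∀ z ∈ LinearMap.range (TensorProduct.map (B.comp k l w n).subtype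
      (B.comp w n m n).subtype),
    ∑ᶠ u, ∑ᶠ v, LinearMap.mul' ℂ (C ⊗[ℂ] C)
        (TensorProduct.map (Gm B S r v) (Ψm B S s v ∘ₗ B.Δ k u) z)
      = Gm B S r s (B.εr z) := by
  have hsuppv : ∀ (u : I) (z : C ⊗[ℂ] C), (Function.support fun v =>
      LinearMap.mul' ℂ (C ⊗[ℂ] C) (TensorProduct.map (Gm B S r v)
        (Ψm B S s v ∘ₗ B.Δ k u) z)).Finite := by
    intro u z
    refine supp_tensor (fun v z => LinearMap.mul' ℂ (C ⊗[ℂ] C)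
      (TensorProduct.map (Gm B S r v) (Ψm B S s v ∘ₗ B.Δ k u) z))
      (fun v z₁ z₂ => by
        show LinearMap.mul' ℂ (C ⊗[ℂ] C) (TensorProduct.map _ _ (z₁ + z₂)) = _ + _
        rw [map_add, map_add])
      (fun v => by
        show LinearMap.mul' ℂ (C ⊗[ℂ] C) (TensorProduct.map _ _ (0 : C ⊗[ℂ] C)) = 0
        rw [map_zero, map_zero]) ?_ z
    intro x y
    refine (B.Δ_rcf_col x r).subset fun v hv => ?_
    rw [Function.mem_support] at hv
    simp only [Set.mem_setOf_eq]
    intro h0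
    refine hv ?_
    show LinearMap.mul' ℂ (C ⊗[ℂ] C) (TensorProduct.map _ _ (x ⊗ₜ[ℂ] y)) = 0
    rw [TensorProduct.map_tmul]
    show LinearMap.mul' ℂ (C ⊗[ℂ] C) ((commSS S (B.Δ v r x)) ⊗ₜ[ℂ] _) = 0
    rw [h0, map_zero, TensorProduct.zero_tmul, map_zero]
  have hF0 : ∀ u : I, ∑ᶠ v, LinearMap.mul' ℂ (C ⊗[ℂ] C)
      (TensorProduct.map (Gm B S r v) (Ψm B S s v ∘ₗ B.Δ k u) (0 : C ⊗[ℂ] C)) = 0 := by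
    intro u
    rw [finsum_eq_zero_of_forall_eq_zero fun v => by rw [map_zero, map_zero]]
  have hFadd : ∀ (u : I) (z₁ z₂ : C ⊗[ℂ] C),
      (∑ᶠ v, LinearMap.mul' ℂ (C ⊗[ℂ] C)
        (TensorProduct.map (Gm B S r v) (Ψm B S s v ∘ₗ B.Δ k u) (z₁ + z₂)))
      = (∑ᶠ v, LinearMap.mul' ℂ (C ⊗[ℂ] C)
          (TensorProduct.map (Gm B S r v) (Ψm B S s v ∘ₗ B.Δ k u) z₁))
        + (∑ᶠ v, LinearMap.mul' ℂ (C ⊗[ℂ] C)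
          (TensorProduct.map (Gm B S r v) (Ψm B S s v ∘ₗ B.Δ k u) z₂)) := by
    intro u z₁ z₂
    rw [← finsum_add_distrib (hsuppv u z₁) (hsuppv u z₂)]
    exact finsum_congr fun v => by rw [map_add, map_add]
  have hsuppu : ∀ z : C ⊗[ℂ] C, (Function.support fun u => ∑ᶠ v,
      LinearMap.mul' ℂ (C ⊗[ℂ] C) (TensorProduct.map (Gm B S r v)
        (Ψm B S s v ∘ₗ B.Δ k u) z)).Finite := by
    intro z
    refine supp_tensor (fun u z => ∑ᶠ v,
      LinearMap.mul' ℂ (C ⊗[ℂ] C) (TensorProduct.map (Gm B S r v)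
        (Ψm B S s v ∘ₗ B.Δ k u) z)) (fun u z₁ z₂ => hFadd u z₁ z₂) (fun u => hF0 u) ?_ z
    intro x y
    refine (B.Δ_rcf_row y k).subset fun u hu => ?_
    rw [Function.mem_support] at hu
    simp only [Set.mem_setOf_eq]
    intro h0
    refine hu ?_
    show ∑ᶠ v, LinearMap.mul' ℂ (C ⊗[ℂ] C)
      (TensorProduct.map (Gm B S r v) (Ψm B S s v ∘ₗ B.Δ k u) (x ⊗ₜ[ℂ] y)) = 0
    refine finsum_eq_zero_of_forall_eq_zero fun v => ?_
    rw [TensorProduct.map_tmul, LinearMap.comp_apply, h0, map_zero,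
      TensorProduct.tmul_zero, map_zero]
  refine tensor_ind _ ?_ ?_ ?_
  · beta_reduce
    rw [finsum_eq_zero_of_forall_eq_zero fun u => hF0 u, map_zero, map_zero]
  · intro z₁ z₂ h₁ h₂
    beta_reduce at h₁ h₂ ⊢
    have : (fun u => ∑ᶠ v, LinearMap.mul' ℂ (C ⊗[ℂ] C)
        (TensorProduct.map (Gm B S r v) (Ψm B S s v ∘ₗ B.Δ k u) (z₁ + z₂)))
        = fun u => (∑ᶠ v, LinearMap.mul' ℂ (C ⊗[ℂ] C)
            (TensorProduct.map (Gm B S r v) (Ψm B S s v ∘ₗ B.Δ k u) z₁))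
          + (∑ᶠ v, LinearMap.mul' ℂ (C ⊗[ℂ] C)
            (TensorProduct.map (Gm B S r v) (Ψm B S s v ∘ₗ B.Δ k u) z₂)) :=
      funext fun u => hFadd u z₁ z₂
    rw [this, finsum_add_distrib (hsuppu z₁) (hsuppu z₂), h₁, h₂, map_add, map_add]
  · intro x hx y hy
    beta_reduce
    -- swap u and v
    have hswap : ∑ᶠ u, ∑ᶠ v, LinearMap.mul' ℂ (C ⊗[ℂ] C)
        (TensorProduct.map (Gm B S r v) (Ψm B S s v ∘ₗ B.Δ k u) (x ⊗ₜ[ℂ] y))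
        = ∑ᶠ v, ∑ᶠ u, LinearMap.mul' ℂ (C ⊗[ℂ] C)
            (TensorProduct.map (Gm B S r v) (Ψm B S s v ∘ₗ B.Δ k u) (x ⊗ₜ[ℂ] y)) := by
      refine finsum_swap _ (B.Δ_rcf_row y k) ?_ ?_
      · intro v u hu
        rw [Function.mem_support] at hu
        simp only [Set.mem_setOf_eq]
        intro h0
        refine hu ?_
        rw [TensorProduct.map_tmul, LinearMap.comp_apply, h0, map_zero,
          TensorProduct.tmul_zero, map_zero]
      · intro u
        refine (B.Δ_rcf_col x r).subset fun v hv => ?_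
        rw [Function.mem_support] at hv
        simp only [Set.mem_setOf_eq]
        intro h0
        refine hv ?_
        rw [TensorProduct.map_tmul]
        show LinearMap.mul' ℂ (C ⊗[ℂ] C) ((commSS S (B.Δ v r x)) ⊗ₜ[ℂ] _) = 0
        rw [h0, map_zero, TensorProduct.zero_tmul, map_zero]
    rw [hswap]
    have hu_inner : ∀ v, ∑ᶠ u, LinearMap.mul' ℂ (C ⊗[ℂ] C)
        (TensorProduct.map (Gm B S r v) (Ψm B S s v ∘ₗ B.Δ k u) (x ⊗ₜ[ℂ] y))
        = B.ε y • LinearMap.mul' ℂ (C ⊗[ℂ] C)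
            ((Gm B S r v x) ⊗ₜ[ℂ] (B.Δ v s (B.E w k))) := by
      intro v
      -- `Lc c = μ₂ (Gm x ⊗ Δ_{vs} c)`
      set Lc : C →ₗ[ℂ] C ⊗[ℂ] C := (LinearMap.mul' ℂ (C ⊗[ℂ] C)) ∘ₗ
        ((TensorProduct.mk ℂ (C ⊗[ℂ] C) (C ⊗[ℂ] C)) (Gm B S r v x)) ∘ₗ B.Δ v s with hLc
      have h1 : ∀ u, LinearMap.mul' ℂ (C ⊗[ℂ] C)
          (TensorProduct.map (Gm B S r v) (Ψm B S s v ∘ₗ B.Δ k u) (x ⊗ₜ[ℂ] y))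
          = Lc (LinearMap.mul' ℂ C (LinearMap.lTensor C S (B.Δ k u y))) := by
        intro u
        rw [TensorProduct.map_tmul, hLc]
        rfl
      have hsupp : (Function.support fun u =>
          LinearMap.mul' ℂ C (LinearMap.lTensor C S (B.Δ k u y))).Finite :=
        B.supp_row (fun u z => LinearMap.mul' ℂ C (LinearMap.lTensor C S z)) (by simp) y k
      have h2 := Lc.toAddMonoidHom.map_finsum hsupp
      simp only [LinearMap.toAddMonoidHom_coe] at h2
      rw [funext h1, ← h2, B.antipode_sum_L S hS hy k, map_smul, hLc]
      rfl
    rw [finsum_congr hu_inner]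
    have hsingle : ∀ v, v ≠ s → B.ε y • LinearMap.mul' ℂ (C ⊗[ℂ] C)
        ((Gm B S r v x) ⊗ₜ[ℂ] (B.Δ v s (B.E w k))) = 0 := by
      intro v hv
      rw [B.Δ_E_ne w k v s hv, TensorProduct.tmul_zero, map_zero, smul_zero]
    rw [finsum_eq_single _ s hsingle, B.Δ_E_diag w k s, LinearMap.mul'_apply,
      B.mul_unit_right _ (B.Gm_mem S hS hx r s), εr_tmul, map_smul]

/-- **anti-comultiplicativity of the antipode**: `Δ_{rs}(S a) = σ(S ⊗ S)(Δ_{sr} a)`. -/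
theorem anticomult (hS : B.IsAntipode S) {a : C} {k l m n : I}
    (ha : a ∈ B.comp k l m n) (r s : I) :
    B.Δ r s (S a) = (TensorProduct.comm ℂ C C) (TensorProduct.map S S (B.Δ s r a)) := by
  -- the master double/triple sum
  have hQrw : ∀ w u, (fun v => LinearMap.mul' ℂ (C ⊗[ℂ] C)
      (TensorProduct.map (Gm B S r v) (Ψm B S s v ∘ₗ B.Δ k u) (B.Δ w n a)))
      = fun v => LinearMap.mul' ℂ (C ⊗[ℂ] C)
          (TensorProduct.map (Gm B S r v) (Ψm B S s v)
            ((TensorProduct.assoc ℂ C C C) (LinearMap.rTensor C (B.Δ w n)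
              (B.Δ k u a)))) := by
    intro w u
    funext v
    have hmc : TensorProduct.map (Gm B S r v) (Ψm B S s v ∘ₗ B.Δ k u)
        = TensorProduct.map (Gm B S r v) (Ψm B S s v) ∘ₗ LinearMap.lTensor C (B.Δ k u) := by
      apply TensorProduct.ext'
      intro x y
      simp only [TensorProduct.map_tmul, LinearMap.comp_apply, LinearMap.lTensor_tmul]
    rw [hmc, LinearMap.comp_apply, ← B.coassoc w n k u a]
  -- eval (i)
  have heval1 : ∑ᶠ w, ∑ᶠ u, ∑ᶠ v, LinearMap.mul' ℂ (C ⊗[ℂ] C)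
      (TensorProduct.map (Gm B S r v) (Ψm B S s v ∘ₗ B.Δ k u) (B.Δ w n a))
      = Gm B S r s a := by
    have h1 : ∀ w, ∑ᶠ u, ∑ᶠ v, LinearMap.mul' ℂ (C ⊗[ℂ] C)
        (TensorProduct.map (Gm B S r v) (Ψm B S s v ∘ₗ B.Δ k u) (B.Δ w n a))
        = Gm B S r s (B.εr (B.Δ w n a)) := fun w =>
      B.claimA S hS k l w n m r s _ (B.Δ_mem' ha w n)
    rw [finsum_congr h1]
    have h2 : ∀ w, Gm B S r s (B.εr (B.Δ w n a))
        = if w = m then Gm B S r s a else 0 := by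
      intro w
      rw [εr_Δ B ha w n]
      by_cases hw : w = m
      · rw [if_pos (by rw [hw]), if_pos hw]
      · rw [if_neg (fun he => hw (by rw [Prod.ext_iff] at he; exact he.1)), if_neg hw,
          map_zero]
    rw [finsum_congr h2, finsum_eq_single _ m (fun w hw => if_neg hw), if_pos rfl]
  -- eval (ii)
  have heval2 : ∑ᶠ w, ∑ᶠ u, ∑ᶠ v, LinearMap.mul' ℂ (C ⊗[ℂ] C)
      (TensorProduct.map (Gm B S r v) (Ψm B S s v ∘ₗ B.Δ k u) (B.Δ w n a))
      = B.Δ r s (S a) := by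
    have hsuppv : ∀ (w u : I), (Function.support fun v =>
        LinearMap.mul' ℂ (C ⊗[ℂ] C) (TensorProduct.map (Gm B S r v)
          (Ψm B S s v) ((TensorProduct.assoc ℂ C C C) (LinearMap.rTensor C (B.Δ w n)
            (B.Δ k u a))))).Finite :=
      fun w u => B.gm_supp S r (fun v => Ψm B S s v) _
    -- swap w and u
    have hswap : ∑ᶠ w, ∑ᶠ u, ∑ᶠ v, LinearMap.mul' ℂ (C ⊗[ℂ] C)
        (TensorProduct.map (Gm B S r v) (Ψm B S s v ∘ₗ B.Δ k u) (B.Δ w n a))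
        = ∑ᶠ u, ∑ᶠ w, ∑ᶠ v, LinearMap.mul' ℂ (C ⊗[ℂ] C)
            (TensorProduct.map (Gm B S r v) (Ψm B S s v ∘ₗ B.Δ k u) (B.Δ w n a)) := by
      refine finsum_swap _ (B.Δ_rcf_col a n) ?_ ?_
      · intro u w hw
        rw [Function.mem_support] at hw
        simp only [Set.mem_setOf_eq]
        intro h0
        refine hw ?_
        rw [finsum_eq_zero_of_forall_eq_zero fun v => by rw [h0, map_zero, map_zero]]
      · intro w
        refine supp_tensor (fun u z => ∑ᶠ v, LinearMap.mul' ℂ (C ⊗[ℂ] C)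
          (TensorProduct.map (Gm B S r v) (Ψm B S s v ∘ₗ B.Δ k u) z)) ?_ ?_ ?_ (B.Δ w n a)
        · intro u z₁ z₂
          have hsv : ∀ z : C ⊗[ℂ] C, (Function.support fun v =>
              LinearMap.mul' ℂ (C ⊗[ℂ] C) (TensorProduct.map (Gm B S r v)
                (Ψm B S s v ∘ₗ B.Δ k u) z)).Finite := by
            intro z
            refine supp_tensor (fun v z => LinearMap.mul' ℂ (C ⊗[ℂ] C)
              (TensorProduct.map (Gm B S r v) (Ψm B S s v ∘ₗ B.Δ k u) z))
              (fun v z₁ z₂ => by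
                show LinearMap.mul' ℂ (C ⊗[ℂ] C)
                  (TensorProduct.map _ _ (z₁ + z₂)) = _ + _
                rw [map_add, map_add])
              (fun v => by
                show LinearMap.mul' ℂ (C ⊗[ℂ] C)
                  (TensorProduct.map _ _ (0 : C ⊗[ℂ] C)) = 0
                rw [map_zero, map_zero]) ?_ z
            intro x y
            refine (B.Δ_rcf_col x r).subset fun v hv => ?_
            rw [Function.mem_support] at hv
            simp only [Set.mem_setOf_eq]
            intro h0
            refine hv ?_
            show LinearMap.mul' ℂ (C ⊗[ℂ] C) (TensorProduct.map _ _ (x ⊗ₜ[ℂ] y)) = 0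
            rw [TensorProduct.map_tmul]
            show LinearMap.mul' ℂ (C ⊗[ℂ] C) ((commSS S (B.Δ v r x)) ⊗ₜ[ℂ] _) = 0
            rw [h0, map_zero, TensorProduct.zero_tmul, map_zero]
          show ∑ᶠ v, _ = _
          rw [← finsum_add_distrib (hsv z₁) (hsv z₂)]
          exact finsum_congr fun v => by rw [map_add, map_add]
        · intro u
          show ∑ᶠ v, LinearMap.mul' ℂ (C ⊗[ℂ] C) (TensorProduct.map (Gm B S r v)
            (Ψm B S s v ∘ₗ B.Δ k u) (0 : C ⊗[ℂ] C)) = 0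
          rw [finsum_eq_zero_of_forall_eq_zero fun v => by rw [map_zero, map_zero]]
        · intro x y
          refine (B.Δ_rcf_row y k).subset fun u hu => ?_
          rw [Function.mem_support] at hu
          simp only [Set.mem_setOf_eq]
          intro h0
          refine hu ?_
          show ∑ᶠ v, LinearMap.mul' ℂ (C ⊗[ℂ] C) (TensorProduct.map (Gm B S r v)
            (Ψm B S s v ∘ₗ B.Δ k u) (x ⊗ₜ[ℂ] y)) = 0
          refine finsum_eq_zero_of_forall_eq_zero fun v => ?_
          rw [TensorProduct.map_tmul, LinearMap.comp_apply, h0, map_zero,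
            TensorProduct.tmul_zero, map_zero]
    rw [hswap]
    have h1 : ∀ u, ∑ᶠ w, ∑ᶠ v, LinearMap.mul' ℂ (C ⊗[ℂ] C)
        (TensorProduct.map (Gm B S r v) (Ψm B S s v ∘ₗ B.Δ k u) (B.Δ w n a))
        = B.Δ r s (S (B.εl (B.Δ k u a))) := by
      intro u
      have := B.claimB S hS k l u m n r s _ (B.Δ_mem' ha k u)
      rw [← this]
      exact finsum_congr fun w => by rw [hQrw w u]
    rw [finsum_congr h1]
    have h2 : ∀ u, B.Δ r s (S (B.εl (B.Δ k u a)))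
        = if u = l then B.Δ r s (S a) else 0 := by
      intro u
      rw [εl_Δ B ha k u]
      by_cases hu : u = l
      · rw [if_pos (by rw [hu]), if_pos hu]
      · rw [if_neg (fun he => hu (by rw [Prod.ext_iff] at he; exact he.2)), if_neg hu,
          map_zero, map_zero]
    rw [finsum_congr h2, finsum_eq_single _ l (fun u hu => if_neg hu), if_pos rfl]
  rw [← heval2, heval1]
  rfl

end Anticomult


section Final

variable [StarRing C] [StarModule ℂ C] (S : C →ₗ[ℂ] C)

theorem comm_comm (X : C ⊗[ℂ] C) :
    (TensorProduct.comm ℂ C C) ((TensorProduct.comm ℂ C C) X) = X := by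
  induction X using TensorProduct.induction_on with
  | zero => simp
  | tmul x y => simp
  | add z w hz hw => rw [map_add, map_add, hz, hw]

theorem TS_claimA (hstar : B.IsStarBialgebra) (hS : B.IsAntipode S) (k l m n w₂ : I) :
    ∀ z ∈ LinearMap.range (TensorProduct.map (B.comp k l m w₂).subtype
      (B.comp m w₂ m n).subtype),
    ∑ᶠ r', LinearMap.mul' ℂ C (TensorProduct.map (Tmap S ∘ₗ S)
        ((LinearMap.mul' ℂ C) ∘ₗ LinearMap.rTensor C S ∘ₗ B.Δ r' l) z)
      = if w₂ = n then Tmap S (S (B.εr z)) else 0 := by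
  refine tensor_ind _ ?_ ?_ ?_
  · beta_reduce
    rw [finsum_eq_zero_of_forall_eq_zero fun r' => by rw [map_zero, map_zero]]
    rw [map_zero, map_zero, map_zero]
    simp
  · intro z₁ z₂ h₁ h₂
    beta_reduce at h₁ h₂ ⊢
    have hsupp : ∀ z : C ⊗[ℂ] C, (Function.support fun r' =>
        LinearMap.mul' ℂ C (TensorProduct.map (Tmap S ∘ₗ S)
          ((LinearMap.mul' ℂ C) ∘ₗ LinearMap.rTensor C S ∘ₗ B.Δ r' l) z)).Finite := by
      intro z
      refine supp_tensor (fun r' z => LinearMap.mul' ℂ C (TensorProduct.map (Tmap S ∘ₗ S)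
          ((LinearMap.mul' ℂ C) ∘ₗ LinearMap.rTensor C S ∘ₗ B.Δ r' l) z))
        (fun r' z₁ z₂ => by
          show LinearMap.mul' ℂ C (TensorProduct.map _ _ (z₁ + z₂)) = _ + _
          rw [map_add, map_add])
        (fun r' => by
          show LinearMap.mul' ℂ C (TensorProduct.map _ _ (0 : C ⊗[ℂ] C)) = 0
          rw [map_zero, map_zero]) ?_ z
      intro x y
      refine (B.Δ_rcf_col y l).subset fun r' hr => ?_
      rw [Function.mem_support] at hr
      simp only [Set.mem_setOf_eq]
      intro h0
      refine hr ?_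
      show LinearMap.mul' ℂ C (TensorProduct.map _ _ (x ⊗ₜ[ℂ] y)) = 0
      rw [TensorProduct.map_tmul]
      show LinearMap.mul' ℂ C (_ ⊗ₜ[ℂ] (LinearMap.mul' ℂ C
        (LinearMap.rTensor C S (B.Δ r' l y)))) = 0
      rw [h0, map_zero, map_zero, TensorProduct.tmul_zero, map_zero]
    have hdist : (fun r' => LinearMap.mul' ℂ C (TensorProduct.map (Tmap S ∘ₗ S)
        ((LinearMap.mul' ℂ C) ∘ₗ LinearMap.rTensor C S ∘ₗ B.Δ r' l) (z₁ + z₂)))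
        = fun r' => LinearMap.mul' ℂ C (TensorProduct.map (Tmap S ∘ₗ S)
            ((LinearMap.mul' ℂ C) ∘ₗ LinearMap.rTensor C S ∘ₗ B.Δ r' l) z₁)
          + LinearMap.mul' ℂ C (TensorProduct.map (Tmap S ∘ₗ S)
            ((LinearMap.mul' ℂ C) ∘ₗ LinearMap.rTensor C S ∘ₗ B.Δ r' l) z₂) := by
      funext r'
      rw [map_add, map_add]
    rw [hdist, finsum_add_distrib (hsupp z₁) (hsupp z₂), h₁, h₂, map_add, map_add, map_add]
    by_cases hw : w₂ = n
    · simp only [hw, if_true]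
    · simp only [if_neg hw, add_zero]
  · intro a₁ ha₁ a₂ ha₂
    beta_reduce
    have h1 : ∀ r', LinearMap.mul' ℂ C (TensorProduct.map (Tmap S ∘ₗ S)
        ((LinearMap.mul' ℂ C) ∘ₗ LinearMap.rTensor C S ∘ₗ B.Δ r' l) (a₁ ⊗ₜ[ℂ] a₂))
        = Tmap S (S a₁) * LinearMap.mul' ℂ C (LinearMap.rTensor C S (B.Δ r' l a₂)) := by
      intro r'
      rw [TensorProduct.map_tmul, LinearMap.mul'_apply]
      rfl
    rw [funext h1]
    have hsupp : (Function.support fun r' =>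
        LinearMap.mul' ℂ C (LinearMap.rTensor C S (B.Δ r' l a₂))).Finite :=
      B.supp_col (fun r' z => LinearMap.mul' ℂ C (LinearMap.rTensor C S z)) (by simp) a₂ l
    have hp := (AddMonoidHom.mulLeft (Tmap S (S a₁))).map_finsum hsupp
    simp only [AddMonoidHom.coe_mulLeft] at hp
    rw [← hp, B.antipode_sum_R S hS ha₂ l, mul_smul_comm,
      B.mul_E_of_mem (B.Tmap_mem_comp S hstar hS (B.S_mem_comp S hS ha₁)) l n, εr_tmul]
    by_cases hw : w₂ = n
    · rw [if_pos ⟨rfl, hw.symm⟩, if_pos hw, map_smul, map_smul]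
    · rw [if_neg (fun hc => hw hc.2.symm), if_neg hw, smul_zero]

theorem TS_claimB (hstar : B.IsStarBialgebra) (hS : B.IsAntipode S) (k l m n r' : I) :
    ∀ z ∈ LinearMap.range (TensorProduct.map (B.comp k l r' l).subtype
      (B.comp r' l m n).subtype),
    ∑ᶠ w₂, LinearMap.mul' ℂ C (TensorProduct.map (Tmap S ∘ₗ S)
        ((LinearMap.mul' ℂ C) ∘ₗ LinearMap.rTensor C S)
        ((TensorProduct.assoc ℂ C C C) (LinearMap.rTensor C (B.Δ m w₂) z)))
      = B.εl z := by
  have hsupp : ∀ z : C ⊗[ℂ] C, (Function.support fun w₂ =>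
      LinearMap.mul' ℂ C (TensorProduct.map (Tmap S ∘ₗ S)
        ((LinearMap.mul' ℂ C) ∘ₗ LinearMap.rTensor C S)
        ((TensorProduct.assoc ℂ C C C) (LinearMap.rTensor C (B.Δ m w₂) z)))).Finite := by
    intro z
    refine supp_tensor (fun w₂ z => LinearMap.mul' ℂ C (TensorProduct.map (Tmap S ∘ₗ S)
        ((LinearMap.mul' ℂ C) ∘ₗ LinearMap.rTensor C S)
        ((TensorProduct.assoc ℂ C C C) (LinearMap.rTensor C (B.Δ m w₂) z))))
      (fun w₂ z₁ z₂ => by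
        show LinearMap.mul' ℂ C (TensorProduct.map _ _
          ((TensorProduct.assoc ℂ C C C) (LinearMap.rTensor C (B.Δ m w₂) (z₁ + z₂)))) = _ + _
        rw [map_add, map_add, map_add, map_add])
      (fun w₂ => by
        show LinearMap.mul' ℂ C (TensorProduct.map _ _
          ((TensorProduct.assoc ℂ C C C)
            (LinearMap.rTensor C (B.Δ m w₂) (0 : C ⊗[ℂ] C)))) = 0
        rw [map_zero, map_zero, map_zero, map_zero]) ?_ z
    intro c₁ c₂
    refine (B.Δ_rcf_row c₁ m).subset fun w₂ hw => ?_
    rw [Function.mem_support] at hw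
    simp only [Set.mem_setOf_eq]
    intro h0
    refine hw ?_
    show LinearMap.mul' ℂ C (TensorProduct.map _ _
      ((TensorProduct.assoc ℂ C C C)
        (LinearMap.rTensor C (B.Δ m w₂) (c₁ ⊗ₜ[ℂ] c₂)))) = 0
    rw [LinearMap.rTensor_tmul, h0, TensorProduct.zero_tmul, map_zero, map_zero, map_zero]
  refine tensor_ind _ ?_ ?_ ?_
  · beta_reduce
    rw [finsum_eq_zero_of_forall_eq_zero fun w₂ => by
      rw [map_zero, map_zero, map_zero, map_zero], map_zero]
  · intro z₁ z₂ h₁ h₂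
    beta_reduce at h₁ h₂ ⊢
    have hdist : (fun w₂ => LinearMap.mul' ℂ C (TensorProduct.map (Tmap S ∘ₗ S)
        ((LinearMap.mul' ℂ C) ∘ₗ LinearMap.rTensor C S)
        ((TensorProduct.assoc ℂ C C C) (LinearMap.rTensor C (B.Δ m w₂) (z₁ + z₂)))))
        = fun w₂ => LinearMap.mul' ℂ C (TensorProduct.map (Tmap S ∘ₗ S)
            ((LinearMap.mul' ℂ C) ∘ₗ LinearMap.rTensor C S)
            ((TensorProduct.assoc ℂ C C C) (LinearMap.rTensor C (B.Δ m w₂) z₁)))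
          + LinearMap.mul' ℂ C (TensorProduct.map (Tmap S ∘ₗ S)
            ((LinearMap.mul' ℂ C) ∘ₗ LinearMap.rTensor C S)
            ((TensorProduct.assoc ℂ C C C) (LinearMap.rTensor C (B.Δ m w₂) z₂))) := by
      funext w₂
      rw [map_add, map_add, map_add, map_add]
    rw [hdist, finsum_add_distrib (hsupp z₁) (hsupp z₂), h₁, h₂, map_add]
  · intro c₁ hc₁ c₂ hc₂
    beta_reduce
    have E5 : ∀ z₉ : C ⊗[ℂ] C, LinearMap.mul' ℂ C (TensorProduct.map (Tmap S ∘ₗ S)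
        ((LinearMap.mul' ℂ C) ∘ₗ LinearMap.rTensor C S)
        ((TensorProduct.assoc ℂ C C C) (z₉ ⊗ₜ[ℂ] c₂)))
        = LinearMap.mul' ℂ C (TensorProduct.map (Tmap S ∘ₗ S) S z₉) * c₂ := by
      intro z₉
      induction z₉ using TensorProduct.induction_on with
      | zero => rw [TensorProduct.zero_tmul, map_zero, map_zero, map_zero, map_zero,
          map_zero, zero_mul]
      | tmul x y =>
        rw [TensorProduct.assoc_tmul, TensorProduct.map_tmul, TensorProduct.map_tmul,
          LinearMap.mul'_apply, LinearMap.mul'_apply, LinearMap.comp_apply,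
          LinearMap.comp_apply, LinearMap.rTensor_tmul, LinearMap.mul'_apply, mul_assoc]
      | add z₁ z₂ h₁ h₂ =>
        rw [TensorProduct.add_tmul, map_add, map_add, map_add, map_add, map_add, h₁, h₂,
          add_mul]
    have hrw : ∀ w₂, LinearMap.mul' ℂ C (TensorProduct.map (Tmap S ∘ₗ S)
        ((LinearMap.mul' ℂ C) ∘ₗ LinearMap.rTensor C S)
        ((TensorProduct.assoc ℂ C C C) (LinearMap.rTensor C (B.Δ m w₂) (c₁ ⊗ₜ[ℂ] c₂))))
        = LinearMap.mul' ℂ C (LinearMap.rTensor C (Tmap S)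
            ((TensorProduct.comm ℂ C C) (B.Δ w₂ m (S c₁)))) * c₂ := by
      intro w₂
      rw [LinearMap.rTensor_tmul, E5, B.anticomult S hS hc₁ w₂ m, comm_comm]
      congr 1
      have hmap : TensorProduct.map (Tmap S ∘ₗ S) S
          = LinearMap.rTensor C (Tmap S) ∘ₗ TensorProduct.map S S := by
        apply TensorProduct.ext'
        intro x y
        simp only [TensorProduct.map_tmul, LinearMap.comp_apply, LinearMap.rTensor_tmul]
      rw [hmap, LinearMap.comp_apply]
    rw [funext hrw]
    have hsupp2 : (Function.support fun w₂ => LinearMap.mul' ℂ C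
        (LinearMap.rTensor C (Tmap S)
          ((TensorProduct.comm ℂ C C) (B.Δ w₂ m (S c₁))))).Finite :=
      B.supp_col (fun w₂ z => LinearMap.mul' ℂ C (LinearMap.rTensor C (Tmap S)
        ((TensorProduct.comm ℂ C C) z))) (by simp) (S c₁) m
    have hp := (AddMonoidHom.mulRight c₂).map_finsum hsupp2
    simp only [AddMonoidHom.mulRight_apply] at hp
    rw [← hp, B.cop_L S hstar hS (B.S_mem_comp S hS hc₁) m,
      B.eps_S S hS hc₁, smul_mul_assoc, B.E_mul_of_mem hc₂, if_pos ⟨rfl, rfl⟩, εl_tmul]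

/-- `T ∘ S = id`, i.e. `S (S a)⋆)⋆ = a`. -/
theorem TS_id (hstar : B.IsStarBialgebra) (hS : B.IsAntipode S) (a : C) :
    Tmap S (S a) = a := by
  induction a using B.induction_homog with
  | h0 => rw [map_zero, map_zero]
  | hadd x y hx hy => rw [map_add, map_add, hx, hy]
  | h k l m n a ha =>
    have heval1 : ∑ᶠ w₂, ∑ᶠ r', LinearMap.mul' ℂ C (TensorProduct.map (Tmap S ∘ₗ S)
        ((LinearMap.mul' ℂ C) ∘ₗ LinearMap.rTensor C S ∘ₗ B.Δ r' l) (B.Δ m w₂ a))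
        = Tmap S (S a) := by
      have h1 : ∀ w₂, ∑ᶠ r', LinearMap.mul' ℂ C (TensorProduct.map (Tmap S ∘ₗ S)
          ((LinearMap.mul' ℂ C) ∘ₗ LinearMap.rTensor C S ∘ₗ B.Δ r' l) (B.Δ m w₂ a))
          = if w₂ = n then Tmap S (S a) else 0 := by
        intro w₂
        rw [B.TS_claimA S hstar hS k l m n w₂ _ (B.Δ_mem' ha m w₂)]
        by_cases hw : w₂ = n
        · rw [if_pos hw, if_pos hw, εr_Δ B ha m w₂, if_pos (by rw [hw])]
        · rw [if_neg hw, if_neg hw]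
      rw [finsum_congr h1, finsum_eq_single _ n (fun w hw => if_neg hw), if_pos rfl]
    have heval2 : ∑ᶠ w₂, ∑ᶠ r', LinearMap.mul' ℂ C (TensorProduct.map (Tmap S ∘ₗ S)
        ((LinearMap.mul' ℂ C) ∘ₗ LinearMap.rTensor C S ∘ₗ B.Δ r' l) (B.Δ m w₂ a))
        = a := by
      have hswap : ∑ᶠ w₂, ∑ᶠ r', LinearMap.mul' ℂ C (TensorProduct.map (Tmap S ∘ₗ S)
          ((LinearMap.mul' ℂ C) ∘ₗ LinearMap.rTensor C S ∘ₗ B.Δ r' l) (B.Δ m w₂ a))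
          = ∑ᶠ r', ∑ᶠ w₂, LinearMap.mul' ℂ C (TensorProduct.map (Tmap S ∘ₗ S)
              ((LinearMap.mul' ℂ C) ∘ₗ LinearMap.rTensor C S ∘ₗ B.Δ r' l)
              (B.Δ m w₂ a)) := by
        refine finsum_swap _ (B.Δ_rcf_row a m) ?_ ?_
        · intro r' w₂ hw
          rw [Function.mem_support] at hw
          simp only [Set.mem_setOf_eq]
          intro h0
          exact hw (by rw [h0, map_zero, map_zero])
        · intro w₂
          refine supp_tensor (fun r' z => LinearMap.mul' ℂ C
            (TensorProduct.map (Tmap S ∘ₗ S)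
              ((LinearMap.mul' ℂ C) ∘ₗ LinearMap.rTensor C S ∘ₗ B.Δ r' l) z))
            (fun r' z₁ z₂ => by
              show LinearMap.mul' ℂ C (TensorProduct.map _ _ (z₁ + z₂)) = _ + _
              rw [map_add, map_add])
            (fun r' => by
              show LinearMap.mul' ℂ C (TensorProduct.map _ _ (0 : C ⊗[ℂ] C)) = 0
              rw [map_zero, map_zero]) ?_ (B.Δ m w₂ a)
          intro x y
          refine (B.Δ_rcf_col y l).subset fun r' hr => ?_
          rw [Function.mem_support] at hr
          simp only [Set.mem_setOf_eq]
          intro h0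
          refine hr ?_
          show LinearMap.mul' ℂ C (TensorProduct.map _ _ (x ⊗ₜ[ℂ] y)) = 0
          rw [TensorProduct.map_tmul]
          show LinearMap.mul' ℂ C (_ ⊗ₜ[ℂ] (LinearMap.mul' ℂ C
            (LinearMap.rTensor C S (B.Δ r' l y)))) = 0
          rw [h0, map_zero, map_zero, TensorProduct.tmul_zero, map_zero]
      rw [hswap]
      have h1 : ∀ r', ∑ᶠ w₂, LinearMap.mul' ℂ C (TensorProduct.map (Tmap S ∘ₗ S)
          ((LinearMap.mul' ℂ C) ∘ₗ LinearMap.rTensor C S ∘ₗ B.Δ r' l) (B.Δ m w₂ a))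
          = B.εl (B.Δ r' l a) := by
        intro r'
        have hQ : ∀ w₂, LinearMap.mul' ℂ C (TensorProduct.map (Tmap S ∘ₗ S)
            ((LinearMap.mul' ℂ C) ∘ₗ LinearMap.rTensor C S ∘ₗ B.Δ r' l) (B.Δ m w₂ a))
            = LinearMap.mul' ℂ C (TensorProduct.map (Tmap S ∘ₗ S)
                ((LinearMap.mul' ℂ C) ∘ₗ LinearMap.rTensor C S)
                ((TensorProduct.assoc ℂ C C C) (LinearMap.rTensor C (B.Δ m w₂)
                  (B.Δ r' l a)))) := by
          intro w₂
          have hmc : TensorProduct.map (Tmap S ∘ₗ S)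
              ((LinearMap.mul' ℂ C) ∘ₗ LinearMap.rTensor C S ∘ₗ B.Δ r' l)
              = TensorProduct.map (Tmap S ∘ₗ S)
                  ((LinearMap.mul' ℂ C) ∘ₗ LinearMap.rTensor C S)
                ∘ₗ LinearMap.lTensor C (B.Δ r' l) := by
            apply TensorProduct.ext'
            intro x y
            simp only [TensorProduct.map_tmul, LinearMap.comp_apply,
              LinearMap.lTensor_tmul]
          rw [hmc, LinearMap.comp_apply, ← B.coassoc m w₂ r' l a]
        rw [funext hQ]
        exact B.TS_claimB S hstar hS k l m n r' _ (B.Δ_mem' ha r' l)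
      rw [finsum_congr h1]
      have h2 : ∀ r', B.εl (B.Δ r' l a) = if r' = k then a else 0 := by
        intro r'
        rw [εl_Δ B ha r' l]
        by_cases hr : r' = k
        · rw [if_pos (by rw [hr]), if_pos hr]
        · rw [if_neg (fun he => hr (by rw [Prod.ext_iff] at he; exact he.1)), if_neg hr]
      rw [finsum_congr h2, finsum_eq_single _ k (fun r' hr => if_neg hr), if_pos rfl]
    rw [← heval1, heval2]

end Final

end PartialBialgebra

/-- Let `𝒜` be a partial `*`-bialgebra admitting an antipode `S`
(a partial Hopf `*`-algebra). Then `ε(a*) = conj (ε a)` and `S(S(a)*)* = a` for all `a`;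
in particular the total antipode is bijective. -/
theorem star_hopf_algebra_properties
    {I C : Type} [NonUnitalRing C] [Module ℂ C] [SMulCommClass ℂ C C] [IsScalarTower ℂ C C]
    [StarRing C] [StarModule ℂ C]
    (B : PartialBialgebra I C) (hstar : B.IsStarBialgebra)
    (S : C →ₗ[ℂ] C) (hS : B.IsAntipode S) :
    (∀ a : C, B.ε (star a) = starRingEnd ℂ (B.ε a)) ∧
    (∀ a : C, star (S (star (S a))) = a) ∧
    Function.Bijective S := by
  have part2 : ∀ a : C, star (S (star (S a))) = a := fun a =>
    B.TS_id S hstar hS a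
  refine ⟨B.eps_star hstar, part2, ?_⟩
  have hinv : Function.Involutive (fun c : C => star (S c)) := fun a => part2 a
  have hSeq : ⇑S = (star : C → C) ∘ (fun c : C => star (S c)) :=
    funext fun a => (star_star (S a)).symm
  rw [hSeq]
  exact (star_involutive.bijective).comp hinv.bijective
end
end
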